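/- arXiv:math/0508612 — 7 statements merged into one kernel-verified Lean document; each statement's English description precedes it below -/
import Mathlib

section
/- Almost surely, the chain (Z_n) alternates in sign (Z_1 > 0, Z_2 < 0, Z_3 > 0, ...), the absolute values are nonincreasing (|Z_{n+1}| ≤ |Z_n| for all n), |Z_n| → 0 as n → ∞, and the series Σ_{n≥1} Z_n converges. -/
open MeasureTheory ProbabilityTheory Filter Set

/-- The transition kernel of the fluctuation chain: for `x > 0`, `κ(x,·)` is the law of
`-W` where `W ∈ (0,x]` has c.d.f. `t ↦ Ȟ(t)/Ȟ(x)` (i.e. the normalized restriction of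
`μ̌` to `(0,x]`, pushed by negation); for `x < 0`, `κ(x,·)` is the normalized restriction
of `μ` to `(0,-x]`; and `κ(0,·) = δ₀`. -/
noncomputable def fluctKernel (μ μc : Measure ℝ) (H Hc : ℝ → ℝ) (x : ℝ) : Measure ℝ :=
  if 0 < x then
    Measure.map (fun y => -y) ((ENNReal.ofReal (Hc x))⁻¹ • μc.restrict (Set.Ioc 0 x))
  else if x < 0 then
    (ENNReal.ofReal (H (-x)))⁻¹ • μ.restrict (Set.Ioc 0 (-x))
  else Measure.dirac 0



lemma fk_apply_pos (μ μc : Measure ℝ) (H Hc : ℝ → ℝ) {x : ℝ} {A : Set ℝ}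
    (hx : 0 < x) (hA : MeasurableSet A) :
    fluctKernel μ μc H Hc x A
      = (ENNReal.ofReal (Hc x))⁻¹ * μc ((fun y : ℝ => -y) ⁻¹' A ∩ Set.Ioc 0 x) := by
  rw [fluctKernel, if_pos hx, Measure.map_apply measurable_neg hA, Measure.smul_apply,
    smul_eq_mul, Measure.restrict_apply (hA.preimage measurable_neg)]

lemma fk_apply_neg (μ μc : Measure ℝ) (H Hc : ℝ → ℝ) {x : ℝ} {A : Set ℝ}
    (hx : x < 0) (hA : MeasurableSet A) :
    fluctKernel μ μc H Hc x A
      = (ENNReal.ofReal (H (-x)))⁻¹ * μ (A ∩ Set.Ioc 0 (-x)) := by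
  rw [fluctKernel, if_neg (by linarith), if_pos hx, Measure.smul_apply,
    smul_eq_mul, Measure.restrict_apply hA]

lemma fk_apply_zero (μ μc : Measure ℝ) (H Hc : ℝ → ℝ) {A : Set ℝ}
    (hA : MeasurableSet A) (h0 : (0:ℝ) ∉ A) :
    fluctKernel μ μc H Hc 0 A = 0 := by
  rw [fluctKernel, if_neg (lt_irrefl _), if_neg (lt_irrefl _), Measure.dirac_apply' _ hA,
    Set.indicator_of_notMem h0]

lemma fk_Ici_zero (μ μc : Measure ℝ) (H Hc : ℝ → ℝ) {x : ℝ} (hx : 0 < x) :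
    fluctKernel μ μc H Hc x (Set.Ici 0) = 0 := by
  rw [fk_apply_pos μ μc H Hc hx measurableSet_Ici]
  have h : (fun y : ℝ => -y) ⁻¹' Set.Ici 0 ∩ Set.Ioc 0 x = ∅ := by
    ext y
    simp only [Set.mem_inter_iff, Set.mem_preimage, Set.mem_Ici, Set.mem_Ioc,
      Set.mem_empty_iff_false, iff_false, not_and, and_imp]
    intro h1 h2; linarith
  rw [h, measure_empty, mul_zero]

lemma fk_Iio_zero (μ μc : Measure ℝ) (H Hc : ℝ → ℝ) {x r : ℝ} (hx : 0 < x) (hxr : x ≤ r) :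
    fluctKernel μ μc H Hc x (Set.Iio (-r)) = 0 := by
  rw [fk_apply_pos μ μc H Hc hx measurableSet_Iio]
  have h : (fun y : ℝ => -y) ⁻¹' Set.Iio (-r) ∩ Set.Ioc 0 x = ∅ := by
    ext y
    simp only [Set.mem_inter_iff, Set.mem_preimage, Set.mem_Iio, Set.mem_Ioc,
      Set.mem_empty_iff_false, iff_false, not_and, and_imp]
    intro h1 h2; linarith
  rw [h, measure_empty, mul_zero]

lemma fk_Iic_zero (μ μc : Measure ℝ) (H Hc : ℝ → ℝ) {x : ℝ} (hx : x < 0) :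
    fluctKernel μ μc H Hc x (Set.Iic 0) = 0 := by
  rw [fk_apply_neg μ μc H Hc hx measurableSet_Iic]
  have h : Set.Iic 0 ∩ Set.Ioc 0 (-x) = ∅ := by
    ext y
    simp only [Set.mem_inter_iff, Set.mem_Iic, Set.mem_Ioc,
      Set.mem_empty_iff_false, iff_false, not_and, and_imp]
    intro h1 h2; linarith
  rw [h, measure_empty, mul_zero]

lemma fk_Ioi_zero (μ μc : Measure ℝ) (H Hc : ℝ → ℝ) {x r : ℝ} (hx : x < 0) (hxr : -x ≤ r) :
    fluctKernel μ μc H Hc x (Set.Ioi r) = 0 := by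
  rw [fk_apply_neg μ μc H Hc hx measurableSet_Ioi]
  have h : Set.Ioi r ∩ Set.Ioc 0 (-x) = ∅ := by
    ext y
    simp only [Set.mem_inter_iff, Set.mem_Ioi, Set.mem_Ioc,
      Set.mem_empty_iff_false, iff_false, not_and, and_imp]
    intro h1 h2; linarith
  rw [h, measure_empty, mul_zero]


/-- generic decay bound for the normalized restricted measure -/
lemma decay_aux (ν : Measure ℝ) [IsProbabilityMeasure ν] (G : ℝ → ℝ)
    (hmono : MonotoneOn G (Set.Ici 0)) (hG0 : G 0 = 0)
    (hpos : ∀ x : ℝ, 0 < x → 0 < G x) (hle : ∀ x : ℝ, 0 ≤ x → G x ≤ 1)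
    (hν : ∀ x : ℝ, 0 ≤ x → ν (Set.Iic x) = ENNReal.ofReal (G x))
    {q δ : ℝ} (hq : 0 < q) (hδpos : 0 < δ) (hδG : δ ≤ G (q/2))
    {x : ℝ} (hx : 0 < x) :
    (ENNReal.ofReal (G x))⁻¹ * ν ({y : ℝ | q ≤ |y|} ∩ Set.Ioc 0 x)
      ≤ ENNReal.ofReal (1 - δ) := by
  have hGx : 0 < G x := hpos x hx
  have hGle1 : G x ≤ 1 := hle x hx.le
  have hGq2 : 0 ≤ G (q/2) := by
    have h2 : (0:ℝ) ≤ q/2 := by linarith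
    have h3 := hmono (Set.mem_Ici.2 (le_refl (0:ℝ))) (Set.mem_Ici.2 h2) h2
    rw [hG0] at h3; exact h3
  have ha0 : (ENNReal.ofReal (G x)) ≠ 0 := by
    simp [ENNReal.ofReal_eq_zero, not_le, hGx]
  have hat : (ENNReal.ofReal (G x)) ≠ ⊤ := ENNReal.ofReal_ne_top
  by_cases hxq : q ≤ x
  · have hsub : {y : ℝ | q ≤ |y|} ∩ Set.Ioc 0 x ⊆ Set.Iic x \ Set.Iic (q/2) := by
      rintro y ⟨hy1, hy2, hy3⟩
      simp only [Set.mem_setOf_eq] at hy1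
      rw [abs_of_pos hy2] at hy1
      exact ⟨hy3, by simp only [Set.mem_Iic]; push_neg; linarith⟩
    have hdiff : ν (Set.Iic x \ Set.Iic (q/2))
        = ENNReal.ofReal (G x) - ENNReal.ofReal (G (q/2)) := by
      rw [measure_diff (Set.Iic_subset_Iic.2 (by linarith))
        measurableSet_Iic.nullMeasurableSet (measure_ne_top ν _),
        hν x hx.le, hν (q/2) (by linarith)]
    have hreal : G x - G (q/2) ≤ G x * (1 - δ) := by nlinarith
    calc (ENNReal.ofReal (G x))⁻¹ * ν ({y : ℝ | q ≤ |y|} ∩ Set.Ioc 0 x)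
        ≤ (ENNReal.ofReal (G x))⁻¹ * (ENNReal.ofReal (G x) * ENNReal.ofReal (1 - δ)) := by
          refine mul_le_mul_right ?_ _
          rw [← ENNReal.ofReal_mul hGx.le]
          refine le_trans (measure_mono hsub) ?_
          rw [hdiff, ← ENNReal.ofReal_sub _ hGq2]
          exact ENNReal.ofReal_le_ofReal hreal
      _ = ENNReal.ofReal (1 - δ) := by
          rw [← mul_assoc, ENNReal.inv_mul_cancel ha0 hat, one_mul]
  · have hempty : {y : ℝ | q ≤ |y|} ∩ Set.Ioc 0 x = ∅ := by
      ext y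
      simp only [Set.mem_inter_iff, Set.mem_setOf_eq, Set.mem_Ioc,
        Set.mem_empty_iff_false, iff_false, not_and, and_imp]
      intro hy1 hy2 hy3
      rw [abs_of_pos hy2] at hy1; linarith
    rw [hempty, measure_empty, mul_zero]
    exact zero_le'

lemma fk_decay (μ μc : Measure ℝ) [IsProbabilityMeasure μ] [IsProbabilityMeasure μc]
    (H Hc : ℝ → ℝ)
    (hHmono : MonotoneOn H (Set.Ici 0)) (hHcmono : MonotoneOn Hc (Set.Ici 0))
    (hH0 : H 0 = 0) (hHc0 : Hc 0 = 0)
    (hHpos : ∀ x : ℝ, 0 < x → 0 < H x) (hHcpos : ∀ x : ℝ, 0 < x → 0 < Hc x)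
    (hHle : ∀ x : ℝ, 0 ≤ x → H x ≤ 1) (hHcle : ∀ x : ℝ, 0 ≤ x → Hc x ≤ 1)
    (hμ : ∀ x : ℝ, 0 ≤ x → μ (Set.Iic x) = ENNReal.ofReal (H x))
    (hμc : ∀ x : ℝ, 0 ≤ x → μc (Set.Iic x) = ENNReal.ofReal (Hc x))
    {q : ℝ} (hq : 0 < q) (x : ℝ) :
    fluctKernel μ μc H Hc x {y : ℝ | q ≤ |y|}
      ≤ ENNReal.ofReal (1 - min (H (q/2)) (Hc (q/2))) := by
  have hδpos : 0 < min (H (q/2)) (Hc (q/2)) :=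
    lt_min (hHpos _ (by linarith)) (hHcpos _ (by linarith))
  have hAq : MeasurableSet {y : ℝ | q ≤ |y|} :=
    measurableSet_le measurable_const measurable_abs
  rcases lt_trichotomy x 0 with hx | hx | hx
  · rw [fk_apply_neg μ μc H Hc hx hAq]
    exact decay_aux μ H hHmono hH0 hHpos hHle hμ hq hδpos (min_le_left _ _) (by linarith)
  · subst hx
    rw [fk_apply_zero μ μc H Hc hAq (by simp; linarith)]
    exact zero_le'
  · rw [fk_apply_pos μ μc H Hc hx hAq]
    have hpre : (fun y : ℝ => -y) ⁻¹' {y : ℝ | q ≤ |y|} = {y : ℝ | q ≤ |y|} := by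
      ext y; simp [abs_neg]
    rw [hpre]
    exact decay_aux μc Hc hHcmono hHc0 hHcpos hHcle hμc hq hδpos (min_le_right _ _) hx




/-- the "all coordinates at least q in absolute value" set -/
def qSet (q : ℝ) (N : ℕ) : Set (Fin (N+1) → ℝ) := {v | ∀ i, q ≤ |v i|}

lemma qSet_meas (q : ℝ) (N : ℕ) : MeasurableSet (qSet q N) := by
  have h : qSet q N = ⋂ i, {v : Fin (N+1) → ℝ | q ≤ |v i|} := by
    ext v; simp [qSet, Set.mem_iInter]
  rw [h]
  exact MeasurableSet.iInter fun i =>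
    measurableSet_le measurable_const (measurable_pi_apply i).abs

/-- the "alternating signs, decreasing absolute values" set -/
def altSet (N : ℕ) : Set (Fin (N+1) → ℝ) :=
  {v | (∀ i, (Odd (i.1+1) → 0 < v i) ∧ (Even (i.1+1) → v i < 0)) ∧
    ∀ i j : Fin (N+1), j.1 = i.1 + 1 → |v j| ≤ |v i|}

lemma altSet_meas (N : ℕ) : MeasurableSet (altSet N) := by
  have h : altSet N =
      (⋂ i : Fin (N+1), ((⋂ (_ : Odd (i.1+1)), {v : Fin (N+1) → ℝ | 0 < v i}) ∩
        ⋂ (_ : Even (i.1+1)), {v : Fin (N+1) → ℝ | v i < 0})) ∩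
      ⋂ (i : Fin (N+1)) (j : Fin (N+1)) (_ : j.1 = i.1+1),
        {v : Fin (N+1) → ℝ | |v j| ≤ |v i|} := by
    ext v; simp [altSet, Set.mem_iInter, forall_and]
  rw [h]
  exact (MeasurableSet.iInter fun i =>
      ((MeasurableSet.iInter fun _ =>
          measurableSet_lt measurable_const (measurable_pi_apply i)).inter
        (MeasurableSet.iInter fun _ =>
          measurableSet_lt (measurable_pi_apply i) measurable_const))).inter
    (MeasurableSet.iInter fun i => MeasurableSet.iInter fun j =>
      MeasurableSet.iInter fun _ =>
        measurableSet_le (measurable_pi_apply j).abs (measurable_pi_apply i).abs)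
/-- Let `H, Ȟ : [0,∞) → [0,1]` be continuous nondecreasing with `H(0) = Ȟ(0) = 0`,
positive on `(0,∞)` and tending to `1` at `∞`; let `μ, μ̌` be the probability measures
on `(0,∞)` with c.d.f.s `H, Ȟ`, and let `(Z_n)_{n≥1}` be the Markov chain with initial
law `Z_1 ∼ μ` and transition kernel `κ = fluctKernel μ μ̌ H Ȟ`.  Then almost surely:
the signs of `Z_n` alternate (`Z_1 > 0, Z_2 < 0, …`), `|Z_{n+1}| ≤ |Z_n|` for all `n ≥ 1`,
`|Z_n| → 0`, and the series `Σ_{n≥1} Z_n` converges. -/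
theorem statement0
    {Ω : Type*} [MeasurableSpace Ω] (P : Measure Ω) [IsProbabilityMeasure P]
    (H Hc : ℝ → ℝ) (μ μc : Measure ℝ)
    [IsProbabilityMeasure μ] [IsProbabilityMeasure μc]
    (hHcont : ContinuousOn H (Set.Ici 0)) (hHccont : ContinuousOn Hc (Set.Ici 0))
    (hHmono : MonotoneOn H (Set.Ici 0)) (hHcmono : MonotoneOn Hc (Set.Ici 0))
    (hH0 : H 0 = 0) (hHc0 : Hc 0 = 0)
    (hHpos : ∀ x : ℝ, 0 < x → 0 < H x) (hHcpos : ∀ x : ℝ, 0 < x → 0 < Hc x)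
    (hHle : ∀ x : ℝ, 0 ≤ x → H x ≤ 1) (hHcle : ∀ x : ℝ, 0 ≤ x → Hc x ≤ 1)
    (hHlim : Tendsto H atTop (nhds 1)) (hHclim : Tendsto Hc atTop (nhds 1))
    (hμ : ∀ x : ℝ, 0 ≤ x → μ (Set.Iic x) = ENNReal.ofReal (H x))
    (hμc : ∀ x : ℝ, 0 ≤ x → μc (Set.Iic x) = ENNReal.ofReal (Hc x))
    (Z : ℕ → Ω → ℝ) (hZmeas : ∀ n, Measurable (Z n))
    (hinit : P.map (Z 1) = μ)
    (hmarkov : ∀ (n : ℕ) (s : Set (Fin (n + 1) → ℝ)) (A : Set ℝ),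
      MeasurableSet s → MeasurableSet A →
      P ({ω | (fun i : Fin (n + 1) => Z (i.1 + 1) ω) ∈ s} ∩ {ω | Z (n + 2) ω ∈ A})
        = ∫⁻ ω in {ω | (fun i : Fin (n + 1) => Z (i.1 + 1) ω) ∈ s},
            fluctKernel μ μc H Hc (Z (n + 1) ω) A ∂P) :
    ∀ᵐ ω ∂P,
      (∀ n : ℕ, 1 ≤ n → (Odd n → 0 < Z n ω) ∧ (Even n → Z n ω < 0)) ∧
      (∀ n : ℕ, 1 ≤ n → |Z (n + 1) ω| ≤ |Z n ω|) ∧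
      Tendsto (fun n => |Z n ω|) atTop (nhds 0) ∧
      (∃ L : ℝ, Tendsto (fun N => ∑ n ∈ Finset.Icc 1 N, Z n ω) atTop (nhds L)) := by
  classical
  -- measurability of the vector maps
  have hvec : ∀ N : ℕ, Measurable (fun ω => (fun i : Fin (N+1) => Z (i.1+1) ω)) :=
    fun N => measurable_pi_lambda _ fun i => hZmeas _
  have hEmeas : ∀ N : ℕ,
      MeasurableSet {ω | (fun i : Fin (N+1) => Z (i.1+1) ω) ∈ altSet N} :=
    fun N => (altSet_meas N).preimage (hvec N)
  -- membership characterization for the alternating event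
  have hEmem : ∀ (N : ℕ) (ω : Ω),
      (fun i : Fin (N+1) => Z (i.1+1) ω) ∈ altSet N ↔
        ((∀ n, 1 ≤ n → n ≤ N + 1 → (Odd n → 0 < Z n ω) ∧ (Even n → Z n ω < 0)) ∧
          ∀ n, 1 ≤ n → n + 1 ≤ N + 1 → |Z (n+1) ω| ≤ |Z n ω|) := by
    intro N ω
    constructor
    · rintro ⟨h1, h2⟩
      constructor
      · intro n hn1 hn2
        have h := h1 ⟨n - 1, by omega⟩
        have e : n - 1 + 1 = n := by omega
        simpa [e] using h
      · intro n hn1 hn2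
        have h := h2 ⟨n - 1, by omega⟩ ⟨n, by omega⟩ (by simp; omega)
        have e : n - 1 + 1 = n := by omega
        simpa [e] using h
    · rintro ⟨h1, h2⟩
      constructor
      · intro i
        simpa using h1 (i.1+1) (by omega) (by omega)
      · intro i j hij
        have h := h2 (i.1+1) (by omega) (by have := j.isLt; omega)
        simpa [hij] using h
  -- the alternating events have probability one
  have hElaw : ∀ N : ℕ,
      P {ω | (fun i : Fin (N+1) => Z (i.1+1) ω) ∈ altSet N} = 1 := by
    have hbase : P {ω | (fun i : Fin 1 => Z (i.1+1) ω) ∈ altSet 0} = 1 := by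
      have hsub : {ω | 0 < Z 1 ω} ⊆ {ω | (fun i : Fin 1 => Z (i.1+1) ω) ∈ altSet 0} := by
        intro ω hω
        rw [Set.mem_setOf_eq, hEmem 0 ω]
        constructor
        · intro n h1 h2
          have hn : n = 1 := by omega
          subst hn
          exact ⟨fun _ => hω, fun h => absurd h (by decide)⟩
        · intro n h1 h2
          exact absurd h2 (by omega)
      have h0 : P {ω | Z 1 ω ≤ 0} = 0 := by
        have hpre : {ω | Z 1 ω ≤ 0} = Z 1 ⁻¹' (Set.Iic 0) := rfl
        rw [hpre, ← Measure.map_apply (hZmeas 1) measurableSet_Iic, hinit, hμ 0 le_rfl,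
          hH0, ENNReal.ofReal_zero]
      have h1 : P {ω | 0 < Z 1 ω} = 1 := by
        have hc : {ω | 0 < Z 1 ω} = {ω | Z 1 ω ≤ 0}ᶜ := by
          ext ω'; simp [not_le]
        rw [hc, measure_compl (measurableSet_le (hZmeas 1) measurable_const)
          (measure_ne_top P _), h0,
          measure_univ, tsub_zero]
      refine le_antisymm prob_le_one ?_
      rw [← h1]
      exact measure_mono hsub
    have hstep : ∀ N : ℕ,
        P {ω | (fun i : Fin (N+1) => Z (i.1+1) ω) ∈ altSet N} = 1 →
        P {ω | (fun i : Fin (N+2) => Z (i.1+1) ω) ∈ altSet (N+1)} = 1 := by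
      intro N hEN
      set C : Set Ω := {ω | (Odd (N+2) → 0 < Z (N+2) ω) ∧ (Even (N+2) → Z (N+2) ω < 0)
        ∧ |Z (N+2) ω| ≤ |Z (N+1) ω|} with hCdef
      have hsub : {ω | (fun i : Fin (N+1) => Z (i.1+1) ω) ∈ altSet N} ∩ C
          ⊆ {ω | (fun i : Fin (N+2) => Z (i.1+1) ω) ∈ altSet (N+1)} := by
        rintro ω ⟨hEω, hCω⟩
        rw [Set.mem_setOf_eq, hEmem N ω] at hEω
        rw [Set.mem_setOf_eq, hEmem (N+1) ω]
        obtain ⟨hE1, hE2⟩ := hEω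
        obtain ⟨hc1, hc2, hc3⟩ := hCω
        constructor
        · intro n h1 h2
          by_cases hn : n ≤ N + 1
          · exact hE1 n h1 hn
          · have hn2 : n = N + 2 := by omega
            subst hn2
            exact ⟨hc1, hc2⟩
        · intro n h1 h2
          by_cases hn : n + 1 ≤ N + 1
          · exact hE2 n h1 hn
          · have hn2 : n = N + 1 := by omega
            subst hn2
            exact hc3
      have hnull : P ({ω | (fun i : Fin (N+1) => Z (i.1+1) ω) ∈ altSet N} ∩ Cᶜ) = 0 := by
        rcases Nat.even_or_odd N with hNp | hNp
        · -- N even : Z (N+1) > 0 on the event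
          have hodd1 : Odd (N+1) := hNp.add_one
          have heven2 : Even (N+2) := hNp.add even_two
          have hnotodd2 : ¬ Odd (N+2) := Nat.not_odd_iff_even.2 heven2
          have hEpos : ∀ ω, (fun i : Fin (N+1) => Z (i.1+1) ω) ∈ altSet N →
              0 < Z (N+1) ω := by
            intro ω hω
            exact (((hEmem N ω).1 hω).1 (N+1) (by omega) (by omega)).1 hodd1
          have hcover : {ω | (fun i : Fin (N+1) => Z (i.1+1) ω) ∈ altSet N} ∩ Cᶜ ⊆
              ({ω | (fun i : Fin (N+1) => Z (i.1+1) ω) ∈ altSet N}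
                  ∩ {ω | Z (N+2) ω ∈ Set.Ici 0}) ∪
              ⋃ (r : ℚ), ({ω | (fun i : Fin (N+1) => Z (i.1+1) ω)
                    ∈ altSet N ∩ {v | v (Fin.last N) ≤ (r:ℝ)}}
                  ∩ {ω | Z (N+2) ω ∈ Set.Iio (-(r:ℝ))}) := by
            rintro ω ⟨hEω, hCc⟩
            by_cases h0 : 0 ≤ Z (N+2) ω
            · exact Or.inl ⟨hEω, h0⟩
            · push_neg at h0
              have hgt : ¬ |Z (N+2) ω| ≤ |Z (N+1) ω| := by
                intro hle'
                exact hCc ⟨fun ho => absurd ho hnotodd2, fun _ => h0, hle'⟩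
              have hp := hEpos ω hEω
              rw [not_le, abs_of_neg h0, abs_of_pos hp] at hgt
              obtain ⟨r, hr1, hr2⟩ := exists_rat_btwn hgt
              refine Or.inr (Set.mem_iUnion.2 ⟨r, ⟨⟨hEω,
                show Z (N+1) ω ≤ (r:ℝ) from hr1.le⟩, ?_⟩⟩)
              simp only [Set.mem_setOf_eq, Set.mem_Iio]
              linarith
          have h1 : P ({ω | (fun i : Fin (N+1) => Z (i.1+1) ω) ∈ altSet N}
              ∩ {ω | Z (N+2) ω ∈ Set.Ici 0}) = 0 := by
            rw [hmarkov N (altSet N) (Set.Ici 0) (altSet_meas N) measurableSet_Ici]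
            have hcong := setLIntegral_congr_fun (μ := P) (hEmeas N)
              (f := fun ω' => fluctKernel μ μc H Hc (Z (N+1) ω') (Set.Ici 0))
              (g := fun _ => 0)
              (fun ω' hω' => fk_Ici_zero μ μc H Hc (hEpos ω' hω'))
            rw [hcong, lintegral_zero]
          have h2 : ∀ r : ℚ, P ({ω | (fun i : Fin (N+1) => Z (i.1+1) ω)
                ∈ altSet N ∩ {v | v (Fin.last N) ≤ (r:ℝ)}}
              ∩ {ω | Z (N+2) ω ∈ Set.Iio (-(r:ℝ))}) = 0 := by
            intro r
            have hms : MeasurableSet (altSet N ∩ {v : Fin (N+1) → ℝ | v (Fin.last N) ≤ (r:ℝ)}) :=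
              (altSet_meas N).inter (measurableSet_le (measurable_pi_apply _) measurable_const)
            rw [hmarkov N _ _ hms measurableSet_Iio]
            have hmsE : MeasurableSet {ω | (fun i : Fin (N+1) => Z (i.1+1) ω)
                ∈ altSet N ∩ {v | v (Fin.last N) ≤ (r:ℝ)}} := hms.preimage (hvec N)
            have hcong := setLIntegral_congr_fun (μ := P) hmsE
              (f := fun ω' => fluctKernel μ μc H Hc (Z (N+1) ω') (Set.Iio (-(r:ℝ))))
              (g := fun _ => 0)
              (fun ω' hω' => fk_Iio_zero μ μc H Hc (hEpos ω' hω'.1)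
                (show Z (N+1) ω' ≤ (r:ℝ) from hω'.2))
            rw [hcong, lintegral_zero]
          exact measure_mono_null hcover
            (measure_union_null h1 (measure_iUnion_null h2))
        · -- N odd : Z (N+1) < 0 on the event
          have heven1 : Even (N+1) := hNp.add_one
          have hodd2 : Odd (N+2) := heven1.add_one
          have hnoteven2 : ¬ Even (N+2) := Nat.not_even_iff_odd.2 hodd2
          have hEneg : ∀ ω, (fun i : Fin (N+1) => Z (i.1+1) ω) ∈ altSet N →
              Z (N+1) ω < 0 := by
            intro ω hω
            exact (((hEmem N ω).1 hω).1 (N+1) (by omega) (by omega)).2 heven1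
          have hcover : {ω | (fun i : Fin (N+1) => Z (i.1+1) ω) ∈ altSet N} ∩ Cᶜ ⊆
              ({ω | (fun i : Fin (N+1) => Z (i.1+1) ω) ∈ altSet N}
                  ∩ {ω | Z (N+2) ω ∈ Set.Iic 0}) ∪
              ⋃ (r : ℚ), ({ω | (fun i : Fin (N+1) => Z (i.1+1) ω)
                    ∈ altSet N ∩ {v | -(v (Fin.last N)) ≤ (r:ℝ)}}
                  ∩ {ω | Z (N+2) ω ∈ Set.Ioi (r:ℝ)}) := by
            rintro ω ⟨hEω, hCc⟩
            by_cases h0 : Z (N+2) ω ≤ 0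
            · exact Or.inl ⟨hEω, h0⟩
            · push_neg at h0
              have hgt : ¬ |Z (N+2) ω| ≤ |Z (N+1) ω| := by
                intro hle'
                exact hCc ⟨fun _ => h0, fun he => absurd he hnoteven2, hle'⟩
              have hp := hEneg ω hEω
              rw [not_le, abs_of_pos h0, abs_of_neg hp] at hgt
              obtain ⟨r, hr1, hr2⟩ := exists_rat_btwn hgt
              refine Or.inr (Set.mem_iUnion.2 ⟨r, ⟨⟨hEω,
                show -(Z (N+1) ω) ≤ (r:ℝ) from hr1.le⟩, ?_⟩⟩)
              simp only [Set.mem_setOf_eq, Set.mem_Ioi]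
              linarith
          have h1 : P ({ω | (fun i : Fin (N+1) => Z (i.1+1) ω) ∈ altSet N}
              ∩ {ω | Z (N+2) ω ∈ Set.Iic 0}) = 0 := by
            rw [hmarkov N (altSet N) (Set.Iic 0) (altSet_meas N) measurableSet_Iic]
            have hcong := setLIntegral_congr_fun (μ := P) (hEmeas N)
              (f := fun ω' => fluctKernel μ μc H Hc (Z (N+1) ω') (Set.Iic 0))
              (g := fun _ => 0)
              (fun ω' hω' => fk_Iic_zero μ μc H Hc (hEneg ω' hω'))
            rw [hcong, lintegral_zero]
          have h2 : ∀ r : ℚ, P ({ω | (fun i : Fin (N+1) => Z (i.1+1) ω)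
                ∈ altSet N ∩ {v | -(v (Fin.last N)) ≤ (r:ℝ)}}
              ∩ {ω | Z (N+2) ω ∈ Set.Ioi (r:ℝ)}) = 0 := by
            intro r
            have hms : MeasurableSet (altSet N ∩ {v : Fin (N+1) → ℝ | -(v (Fin.last N)) ≤ (r:ℝ)}) :=
              (altSet_meas N).inter
                (measurableSet_le (measurable_pi_apply _).neg measurable_const)
            rw [hmarkov N _ _ hms measurableSet_Ioi]
            have hmsE : MeasurableSet {ω | (fun i : Fin (N+1) => Z (i.1+1) ω)
                ∈ altSet N ∩ {v | -(v (Fin.last N)) ≤ (r:ℝ)}} := hms.preimage (hvec N)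
            have hcong := setLIntegral_congr_fun (μ := P) hmsE
              (f := fun ω' => fluctKernel μ μc H Hc (Z (N+1) ω') (Set.Ioi (r:ℝ)))
              (g := fun _ => 0)
              (fun ω' hω' => fk_Ioi_zero μ μc H Hc (hEneg ω' hω'.1)
                (show -(Z (N+1) ω') ≤ (r:ℝ) from hω'.2))
            rw [hcong, lintegral_zero]
          exact measure_mono_null hcover
            (measure_union_null h1 (measure_iUnion_null h2))
      refine le_antisymm prob_le_one ?_
      calc (1:ENNReal) = P {ω | (fun i : Fin (N+1) => Z (i.1+1) ω) ∈ altSet N} := hEN.symm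
        _ ≤ P ({ω | (fun i : Fin (N+1) => Z (i.1+1) ω) ∈ altSet N} ∩ C)
            + P ({ω | (fun i : Fin (N+1) => Z (i.1+1) ω) ∈ altSet N} ∩ Cᶜ) := by
              refine le_trans (le_of_eq ?_) (measure_union_le _ _)
              rw [Set.inter_union_compl]
        _ = P ({ω | (fun i : Fin (N+1) => Z (i.1+1) ω) ∈ altSet N} ∩ C) := by
              rw [hnull, add_zero]
        _ ≤ P {ω | (fun i : Fin (N+2) => Z (i.1+1) ω) ∈ altSet (N+1)} := measure_mono hsub
    intro N
    induction N with
    | zero => exact hbase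
    | succ n ih => exact hstep n ih
  -- the "never drops below q" events have vanishing probability in the limit
  have hAqmeas : ∀ q : ℝ, MeasurableSet {y : ℝ | q ≤ |y|} :=
    fun q => measurableSet_le measurable_const measurable_abs
  have hqsplit : ∀ (q : ℝ) (N : ℕ),
      {ω | (fun i : Fin (N+2) => Z (i.1+1) ω) ∈ qSet q (N+1)}
        = {ω | (fun i : Fin (N+1) => Z (i.1+1) ω) ∈ qSet q N}
            ∩ {ω | Z (N+2) ω ∈ {y : ℝ | q ≤ |y|}} := by
    intro q N
    ext ω
    simp only [qSet, Set.mem_setOf_eq, Set.mem_inter_iff]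
    constructor
    · intro h
      exact ⟨fun i => h ⟨i.1, by omega⟩, h ⟨N+1, by omega⟩⟩
    · rintro ⟨h1, h2⟩ i
      by_cases hi : i.1 < N + 1
      · exact h1 ⟨i.1, hi⟩
      · have he : i.1 = N + 1 := by have := i.isLt; omega
        rw [he]
        exact h2
  have hFstep : ∀ q : ℝ, 0 < q → ∀ N : ℕ,
      P {ω | (fun i : Fin (N+2) => Z (i.1+1) ω) ∈ qSet q (N+1)}
        ≤ ENNReal.ofReal (1 - min (H (q/2)) (Hc (q/2)))
            * P {ω | (fun i : Fin (N+1) => Z (i.1+1) ω) ∈ qSet q N} := by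
    intro q hq N
    rw [hqsplit q N, hmarkov N (qSet q N) _ (qSet_meas q N) (hAqmeas q)]
    calc ∫⁻ ω' in {ω | (fun i : Fin (N+1) => Z (i.1+1) ω) ∈ qSet q N},
          fluctKernel μ μc H Hc (Z (N+1) ω') {y : ℝ | q ≤ |y|} ∂P
        ≤ ∫⁻ _ω' in {ω | (fun i : Fin (N+1) => Z (i.1+1) ω) ∈ qSet q N},
            ENNReal.ofReal (1 - min (H (q/2)) (Hc (q/2))) ∂P :=
          lintegral_mono fun ω' =>
            fk_decay μ μc H Hc hHmono hHcmono hH0 hHc0 hHpos hHcpos hHle hHcle hμ hμc hq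
              (Z (N+1) ω')
      _ = _ := by rw [setLIntegral_const]
  have hFpow : ∀ q : ℝ, 0 < q → ∀ N : ℕ,
      P {ω | (fun i : Fin (N+1) => Z (i.1+1) ω) ∈ qSet q N}
        ≤ (ENNReal.ofReal (1 - min (H (q/2)) (Hc (q/2))))^N := by
    intro q hq N
    induction N with
    | zero => simpa using prob_le_one
    | succ n ih =>
        refine le_trans (hFstep q hq n) ?_
        rw [pow_succ, mul_comm ((ENNReal.ofReal (1 - min (H (q/2)) (Hc (q/2))))^n)]
        exact mul_le_mul_right ih _
  have hFcap : ∀ q : ℝ, 0 < q →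
      P (⋂ N : ℕ, {ω | (fun i : Fin (N+1) => Z (i.1+1) ω) ∈ qSet q N}) = 0 := by
    intro q hq
    have hc1 : ENNReal.ofReal (1 - min (H (q/2)) (Hc (q/2))) < 1 := by
      rw [ENNReal.ofReal_lt_one]
      have := lt_min (hHpos _ (half_pos hq)) (hHcpos _ (half_pos hq))
      linarith
    have htendc := ENNReal.tendsto_pow_atTop_nhds_zero_of_lt_one hc1
    refine le_antisymm (ge_of_tendsto' htendc fun N => ?_) zero_le'
    exact le_trans (measure_mono (Set.iInter_subset _ N)) (hFpow q hq N)
  -- almost-everywhere statements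
  have hEae : ∀ᵐ ω ∂P, ∀ N : ℕ, (fun i : Fin (N+1) => Z (i.1+1) ω) ∈ altSet N := by
    rw [ae_all_iff]
    intro N
    refine ae_iff.2 ?_
    have hc : {ω | ¬ (fun i : Fin (N+1) => Z (i.1+1) ω) ∈ altSet N}
        = {ω | (fun i : Fin (N+1) => Z (i.1+1) ω) ∈ altSet N}ᶜ := rfl
    rw [hc, measure_compl (hEmeas N) (measure_ne_top P _), hElaw N, measure_univ, tsub_self]
  have hFae : ∀ᵐ ω ∂P, ∀ q : ℚ, 0 < (q:ℝ) →
      ∃ N : ℕ, ¬ ((fun i : Fin (N+1) => Z (i.1+1) ω) ∈ qSet (q:ℝ) N) := by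
    rw [ae_all_iff]
    intro q
    by_cases hq : 0 < (q:ℝ)
    · refine ae_iff.2 (measure_mono_null ?_ (hFcap (q:ℝ) hq))
      intro ω hω
      simp only [Set.mem_setOf_eq] at hω
      push_neg at hω
      obtain ⟨-, h2⟩ := hω
      exact Set.mem_iInter.2 fun N => h2 N
    · exact ae_of_all _ fun ω h => absurd h hq
  filter_upwards [hEae, hFae] with ω hE hF
  have hsign : ∀ n, 1 ≤ n → (Odd n → 0 < Z n ω) ∧ (Even n → Z n ω < 0) :=
    fun n hn => ((hEmem n ω).1 (hE n)).1 n hn (by omega)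
  have habs : ∀ n, 1 ≤ n → |Z (n+1) ω| ≤ |Z n ω| :=
    fun n hn => ((hEmem (n+1) ω).1 (hE (n+1))).2 n hn (by omega)
  have hmono2 : ∀ m n, 1 ≤ m → m ≤ n → |Z n ω| ≤ |Z m ω| := by
    intro m n hm hmn
    induction n, hmn using Nat.le_induction with
    | base => exact le_rfl
    | succ n hn ih => exact le_trans (habs n (le_trans hm hn)) ih
  have htend : Tendsto (fun n => |Z n ω|) atTop (nhds 0) := by
    rw [Metric.tendsto_atTop]
    intro ε hε
    obtain ⟨q, hq0, hqε⟩ := exists_rat_btwn hε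
    obtain ⟨N, hN⟩ := hF q hq0
    simp only [qSet, Set.mem_setOf_eq, not_forall, not_le] at hN
    obtain ⟨i, hi⟩ := hN
    refine ⟨i.1 + 1, fun n hn => ?_⟩
    rw [Real.dist_eq, sub_zero, abs_abs]
    calc |Z n ω| ≤ |Z (i.1+1) ω| := hmono2 _ n (by omega) hn
      _ < (q:ℝ) := hi
      _ < ε := hqε
  refine ⟨hsign, habs, htend, ?_⟩
  have hanti : Antitone (fun i : ℕ => |Z (i+1) ω|) :=
    antitone_nat_of_succ_le fun i => habs (i+1) (by omega)
  have hf0 : Tendsto (fun i : ℕ => |Z (i+1) ω|) atTop (nhds 0) :=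
    htend.comp (tendsto_add_atTop_nat 1)
  obtain ⟨l, hl⟩ := hanti.tendsto_alternating_series_of_tendsto_zero hf0
  refine ⟨l, ?_⟩
  have heq : ∀ N, ∑ n ∈ Finset.Icc 1 N, Z n ω
      = ∑ i ∈ Finset.range N, (-1:ℝ)^i * |Z (i+1) ω| := by
    intro N
    rw [← Finset.Ico_add_one_right_eq_Icc, Finset.sum_Ico_eq_sum_range]
    simp only [Nat.add_sub_cancel]
    refine Finset.sum_congr rfl fun i _ => ?_
    rcases Nat.even_or_odd i with hi | hi
    · have hz := (hsign (i+1) (by omega)).1 hi.add_one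
      rw [hi.neg_one_pow, one_mul, abs_of_pos hz, Nat.add_comm 1 i]
    · have hz := (hsign (i+1) (by omega)).2 hi.add_one
      rw [hi.neg_one_pow, neg_one_mul, abs_of_neg hz, neg_neg, Nat.add_comm 1 i]
  exact Tendsto.congr (fun N => (heq N).symm) hl
end

section
/- For every real λ and every x > 0, φ(x,λ) = ∫_{(0,x]} e^{−λy} (φ̌(y,−λ)/Ȟ(y)) μ(dy), and symmetrically φ̌(x,λ) = ∫_{(0,x]} e^{−λy} (φ(y,−λ)/H(y)) μ̌(dy). -/
open MeasureTheory ProbabilityTheory Filter Set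

/-- `φ(x,λ) = E[1_{Z₁ ≤ x} e^{-λ F}]`. -/
noncomputable def phiFn {Ω : Type*} [MeasurableSpace Ω] (P : Measure Ω)
    (Z1 F : Ω → ℝ) (x lam : ℝ) : ℝ :=
  ∫ ω, (if Z1 ω ≤ x then Real.exp (-(lam * F ω)) else 0) ∂P

open scoped ENNReal

namespace Fluct

variable {ν νc : Measure ℝ} {G Gc : ℝ → ℝ}

lemma lintegral_kernel_pos {x : ℝ} (hx : 0 < x) {h : ℝ → ℝ≥0∞} (hh : Measurable h) :
    ∫⁻ w, h w ∂(fluctKernel ν νc G Gc x)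
      = (ENNReal.ofReal (Gc x))⁻¹ * ∫⁻ y in Set.Ioc 0 x, h (-y) ∂νc := by
  rw [fluctKernel, if_pos hx, lintegral_map hh measurable_neg, lintegral_smul_measure, smul_eq_mul]

lemma lintegral_kernel_neg {x : ℝ} (hx : x < 0) {h : ℝ → ℝ≥0∞} (hh : Measurable h) :
    ∫⁻ w, h w ∂(fluctKernel ν νc G Gc x)
      = (ENNReal.ofReal (G (-x)))⁻¹ * ∫⁻ y in Set.Ioc 0 (-x), h y ∂ν := by
  rw [fluctKernel, if_neg (by linarith), if_pos hx, lintegral_smul_measure, smul_eq_mul]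

lemma lintegral_kernel_zero {h : ℝ → ℝ≥0∞} (hh : Measurable h) :
    ∫⁻ w, h w ∂(fluctKernel ν νc G Gc 0) = h 0 := by
  rw [fluctKernel, if_neg (lt_irrefl 0), if_neg (lt_irrefl 0), lintegral_dirac' _ hh]

lemma measurable_lintegral_kernel (hG : MonotoneOn G (Set.Ici 0))
    (hGc : MonotoneOn Gc (Set.Ici 0)) {h : ℝ → ℝ≥0∞} (hh : Measurable h) :
    Measurable (fun x => ∫⁻ w, h w ∂(fluctKernel ν νc G Gc x)) := by
  have m1 : Measurable (fun x : ℝ => (ENNReal.ofReal (Gc (max x 0)))⁻¹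
      * ∫⁻ y in Set.Ioc 0 x, h (-y) ∂νc) := by
    apply Measurable.mul
    · apply Measurable.inv
      apply ENNReal.measurable_ofReal.comp
      apply Monotone.measurable
      intro a b hab
      exact hGc (le_max_right a 0) (le_max_right b 0) (max_le_max hab le_rfl)
    · apply Monotone.measurable
      intro a b hab
      exact lintegral_mono' (Measure.restrict_mono (Set.Ioc_subset_Ioc le_rfl hab) le_rfl) le_rfl
  have m2 : Measurable (fun x : ℝ => (ENNReal.ofReal (G (max (-x) 0)))⁻¹
      * ∫⁻ y in Set.Ioc 0 (-x), h y ∂ν) := by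
    apply Measurable.mul
    · apply Measurable.inv
      apply ENNReal.measurable_ofReal.comp
      apply Antitone.measurable
      intro a b hab
      exact hG (le_max_right (-b) 0) (le_max_right (-a) 0)
        (max_le_max (neg_le_neg hab) le_rfl)
    · apply Antitone.measurable
      intro a b hab
      exact lintegral_mono' (Measure.restrict_mono
        (Set.Ioc_subset_Ioc le_rfl (neg_le_neg hab)) le_rfl) le_rfl
  have : (fun x => ∫⁻ w, h w ∂(fluctKernel ν νc G Gc x))
      = Set.piecewise (Set.Ioi 0) (fun x => (ENNReal.ofReal (Gc (max x 0)))⁻¹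
          * ∫⁻ y in Set.Ioc 0 x, h (-y) ∂νc)
        (Set.piecewise (Set.Iio 0) (fun x => (ENNReal.ofReal (G (max (-x) 0)))⁻¹
          * ∫⁻ y in Set.Ioc 0 (-x), h y ∂ν) (fun _ => h 0)) := by
    funext x
    rcases lt_trichotomy x 0 with hx | hx | hx
    · rw [Set.piecewise_eq_of_notMem _ _ _ (by simp [hx.le] : x ∉ Set.Ioi 0),
        Set.piecewise_eq_of_mem _ _ _ (by simpa using hx),
        lintegral_kernel_neg hx hh, max_eq_left (by linarith)]
    · subst hx
      rw [Set.piecewise_eq_of_notMem _ _ _ (by simp), Set.piecewise_eq_of_notMem _ _ _ (by simp),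
        lintegral_kernel_zero hh]
    · rw [Set.piecewise_eq_of_mem _ _ _ (by simpa using hx),
        lintegral_kernel_pos hx hh, max_eq_left hx.le]
  rw [this]
  exact Measurable.piecewise measurableSet_Ioi m1
    (Measurable.piecewise measurableSet_Iio m2 measurable_const)

end Fluct

section Dev2
open MeasureTheory ProbabilityTheory Filter Set
open scoped ENNReal

namespace Fluct

variable {ν νc : Measure ℝ} {G Gc : ℝ → ℝ}

lemma inv_mul_self_le_one (a : ℝ≥0∞) : a⁻¹ * a ≤ 1 := by
  rcases eq_or_ne a 0 with rfl | h0
  · simp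
  rcases eq_or_ne a ⊤ with rfl | ht
  · simp
  rw [ENNReal.inv_mul_cancel h0 ht]

lemma restrict_mass (hνc : ∀ x : ℝ, 0 ≤ x → νc (Set.Iic x) = ENNReal.ofReal (Gc x))
    (hGc0 : Gc 0 = 0) {x : ℝ} (hx : 0 < x) :
    νc (Set.Ioc 0 x) = ENNReal.ofReal (Gc x) := by
  have h : Set.Iic (0:ℝ) ∪ Set.Ioc 0 x = Set.Iic x := Set.Iic_union_Ioc_eq_Iic hx.le
  have hd : Disjoint (Set.Iic (0:ℝ)) (Set.Ioc 0 x) := by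
    apply Set.disjoint_left.2
    intro a ha ha'
    exact absurd ha'.1 (not_lt.2 ha)
  have := measure_union (μ := νc) hd measurableSet_Ioc
  rw [h, hνc x hx.le, hνc 0 le_rfl, hGc0, ENNReal.ofReal_zero, zero_add] at this
  exact this.symm

lemma kernel_univ_le_one
    (hν : ∀ x : ℝ, 0 ≤ x → ν (Set.Iic x) = ENNReal.ofReal (G x))
    (hνc : ∀ x : ℝ, 0 ≤ x → νc (Set.Iic x) = ENNReal.ofReal (Gc x))
    (hG0 : G 0 = 0) (hGc0 : Gc 0 = 0) (x : ℝ) :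
    fluctKernel ν νc G Gc x Set.univ ≤ 1 := by
  have key : fluctKernel ν νc G Gc x Set.univ = ∫⁻ _, 1 ∂(fluctKernel ν νc G Gc x) := by
    simp
  rcases lt_trichotomy x 0 with hx | hx | hx
  · rw [key, lintegral_kernel_neg hx measurable_const]
    simp only [setLIntegral_one]
    rw [restrict_mass hν hG0 (by linarith : (0:ℝ) < -x)]
    exact inv_mul_self_le_one _
  · subst hx
    rw [key, lintegral_kernel_zero measurable_const]
  · rw [key, lintegral_kernel_pos hx measurable_const]
    simp only [setLIntegral_one]
    rw [restrict_mass hνc hGc0 hx]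
    exact inv_mul_self_le_one _

noncomputable def Tfun (ν νc : Measure ℝ) (G Gc : ℝ → ℝ) (f : ℝ → ℝ≥0∞) : ℕ → ℝ → ℝ≥0∞
  | 0 => fun _ => 1
  | k+1 => fun z => ∫⁻ w, f w * Tfun ν νc G Gc f k w ∂(fluctKernel ν νc G Gc z)

lemma measurable_Tfun (hG : MonotoneOn G (Set.Ici 0)) (hGc : MonotoneOn Gc (Set.Ici 0))
    {f : ℝ → ℝ≥0∞} (hf : Measurable f) (k : ℕ) :
    Measurable (Tfun ν νc G Gc f k) := by
  induction k with
  | zero => exact measurable_const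
  | succ k ih => exact measurable_lintegral_kernel hG hGc (hf.mul ih)

lemma Tfun_le
    (hν : ∀ x : ℝ, 0 ≤ x → ν (Set.Iic x) = ENNReal.ofReal (G x))
    (hνc : ∀ x : ℝ, 0 ≤ x → νc (Set.Iic x) = ENNReal.ofReal (Gc x))
    (hG0 : G 0 = 0) (hGc0 : Gc 0 = 0)
    {f : ℝ → ℝ≥0∞} {C : ℝ≥0∞} (hfC : ∀ w, f w ≤ C) (hC1 : 1 ≤ C) (k : ℕ) (z : ℝ) :
    Tfun ν νc G Gc f k z ≤ C ^ k := by
  induction k generalizing z with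
  | zero => simp [Tfun]
  | succ k ih =>
    calc Tfun ν νc G Gc f (k+1) z
        ≤ ∫⁻ _, C * C ^ k ∂(fluctKernel ν νc G Gc z) := by
          apply lintegral_mono
          intro w
          exact mul_le_mul' (hfC w) (ih w)
      _ = C * C ^ k * fluctKernel ν νc G Gc z Set.univ := lintegral_const _
      _ ≤ C * C ^ k * 1 := by
          exact mul_le_mul' le_rfl (kernel_univ_le_one hν hνc hG0 hGc0 z)
      _ = C ^ (k+1) := by rw [mul_one, pow_succ, mul_comm]

lemma Tfun_dual (hG : MonotoneOn G (Set.Ici 0)) (hGc : MonotoneOn Gc (Set.Ici 0))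
    {f : ℝ → ℝ≥0∞} (hf : Measurable f) (k : ℕ) (z : ℝ) :
    Tfun ν νc G Gc f k z = Tfun νc ν Gc G (fun w => f (-w)) k (-z) := by
  induction k generalizing z with
  | zero => rfl
  | succ k ih =>
    have hfn : Measurable (fun w : ℝ => f (-w)) := hf.comp measurable_neg
    have hTm := measurable_Tfun (ν := ν) (νc := νc) hG hGc hf k
    have hTmc := measurable_Tfun (ν := νc) (νc := ν) hGc hG hfn k
    rcases lt_trichotomy z 0 with hz | hz | hz
    · show Tfun ν νc G Gc f (k+1) z = Tfun νc ν Gc G _ (k+1) (-z)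
      simp only [Tfun]
      rw [lintegral_kernel_neg (h := fun w => f w * Tfun ν νc G Gc f k w) hz (hf.mul hTm),
        lintegral_kernel_pos (h := fun w => f (-w) * Tfun νc ν Gc G (fun w => f (-w)) k w)
          (by linarith : (0:ℝ) < -z) (hfn.mul hTmc)]
      congr 1
      apply lintegral_congr
      intro u
      rw [neg_neg, ih u]
    · subst hz
      show Tfun ν νc G Gc f (k+1) 0 = Tfun νc ν Gc G _ (k+1) (-0)
      rw [neg_zero]
      simp only [Tfun]
      rw [lintegral_kernel_zero (h := fun w => f w * Tfun ν νc G Gc f k w) (hf.mul hTm),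
        lintegral_kernel_zero (h := fun w => f (-w) * Tfun νc ν Gc G (fun w => f (-w)) k w)
          (hfn.mul hTmc)]
      rw [neg_zero, ih 0, neg_zero]
    · show Tfun ν νc G Gc f (k+1) z = Tfun νc ν Gc G _ (k+1) (-z)
      simp only [Tfun]
      rw [lintegral_kernel_pos (h := fun w => f w * Tfun ν νc G Gc f k w) hz (hf.mul hTm),
        lintegral_kernel_neg (h := fun w => f (-w) * Tfun νc ν Gc G (fun w => f (-w)) k w)
          (by linarith : -z < 0) (hfn.mul hTmc), neg_neg]
      congr 1
      apply lintegral_congr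
      intro u
      rw [ih (-u), neg_neg]

end Fluct
end Dev2

section Dev3
open MeasureTheory ProbabilityTheory Filter Set
open scoped ENNReal

namespace Fluct

variable {ν νc : Measure ℝ} {G Gc : ℝ → ℝ}
variable {Ω : Type*} [MeasurableSpace Ω] {P : Measure Ω}

lemma measurable_kernel_apply (hG : MonotoneOn G (Set.Ici 0)) (hGc : MonotoneOn Gc (Set.Ici 0))
    {A : Set ℝ} (hA : MeasurableSet A) :
    Measurable (fun x => fluctKernel ν νc G Gc x A) := by
  have h1 : Measurable (A.indicator (fun _ => (1:ℝ≥0∞))) := measurable_const.indicator hA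
  have e : ∀ x : ℝ, ∫⁻ w, A.indicator (fun _ => (1:ℝ≥0∞)) w ∂(fluctKernel ν νc G Gc x)
      = fluctKernel ν νc G Gc x A := by
    intro x
    rw [lintegral_indicator hA, setLIntegral_one]
  have := measurable_lintegral_kernel (ν := ν) (νc := νc) hG hGc h1
  simpa only [e] using this

variable {Z : ℕ → Ω → ℝ}

lemma measurable_vec (hZ : ∀ n, Measurable (Z n)) (n : ℕ) :
    Measurable (fun ω => (fun i : Fin (n+1) => Z (i.1 + 1) ω)) :=
  measurable_pi_lambda _ (fun _ => hZ _)

lemma markov_step_sets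
    (hG : MonotoneOn G (Set.Ici 0)) (hGc : MonotoneOn Gc (Set.Ici 0))
    (hZ : ∀ n, Measurable (Z n))
    (hmk : ∀ (n : ℕ) (s : Set (Fin (n + 1) → ℝ)) (A : Set ℝ),
      MeasurableSet s → MeasurableSet A →
      P ({ω | (fun i : Fin (n + 1) => Z (i.1 + 1) ω) ∈ s} ∩ {ω | Z (n + 2) ω ∈ A})
        = ∫⁻ ω in {ω | (fun i : Fin (n + 1) => Z (i.1 + 1) ω) ∈ s},
            fluctKernel ν νc G Gc (Z (n + 1) ω) A ∂P)
    (n : ℕ) {h : ℝ → ℝ≥0∞} (hh : Measurable h)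
    {s : Set (Fin (n+1) → ℝ)} (hs : MeasurableSet s) :
    ∫⁻ ω in {ω | (fun i : Fin (n + 1) => Z (i.1 + 1) ω) ∈ s}, h (Z (n + 2) ω) ∂P
      = ∫⁻ ω in {ω | (fun i : Fin (n + 1) => Z (i.1 + 1) ω) ∈ s},
          ∫⁻ w, h w ∂(fluctKernel ν νc G Gc (Z (n + 1) ω)) ∂P := by
  have hS : MeasurableSet {ω | (fun i : Fin (n + 1) => Z (i.1 + 1) ω) ∈ s} :=
    hs.preimage (measurable_vec hZ n)
  revert h
  apply Measurable.ennreal_induction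
  · -- indicator
    intro c A hA
    have e1 : ∀ ω, (A.indicator fun _ => c) (Z (n+2) ω)
        = ((Z (n+2) ⁻¹' A).indicator fun _ => c) ω := by
      intro ω
      by_cases hω : Z (n+2) ω ∈ A <;> simp [Set.indicator, hω]
    have e2 : ∀ x : ℝ, ∫⁻ w, (A.indicator fun _ => c) w ∂(fluctKernel ν νc G Gc x)
        = c * fluctKernel ν νc G Gc x A := by
      intro x
      rw [lintegral_indicator hA, setLIntegral_const]
    calc ∫⁻ ω in _, (A.indicator fun _ => c) (Z (n+2) ω) ∂P
        = ∫⁻ ω in {ω | (fun i : Fin (n + 1) => Z (i.1 + 1) ω) ∈ s},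
            ((Z (n+2) ⁻¹' A).indicator fun _ => c) ω ∂P := by
          exact lintegral_congr (fun ω => e1 ω)
      _ = c * P ({ω | (fun i : Fin (n + 1) => Z (i.1 + 1) ω) ∈ s} ∩ {ω | Z (n + 2) ω ∈ A}) := by
          rw [lintegral_indicator (hA.preimage (hZ _)), setLIntegral_const,
            Measure.restrict_apply (hA.preimage (hZ _)), Set.inter_comm]
          rfl
      _ = c * ∫⁻ ω in {ω | (fun i : Fin (n + 1) => Z (i.1 + 1) ω) ∈ s},
            fluctKernel ν νc G Gc (Z (n + 1) ω) A ∂P := by rw [hmk n s A hs hA]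
      _ = ∫⁻ ω in {ω | (fun i : Fin (n + 1) => Z (i.1 + 1) ω) ∈ s},
            c * fluctKernel ν νc G Gc (Z (n + 1) ω) A ∂P := by
          exact (lintegral_const_mul _
            (show Measurable fun ω => fluctKernel ν νc G Gc (Z (n+1) ω) A from
              (measurable_kernel_apply hG hGc hA).comp (hZ (n+1)))).symm
      _ = _ := lintegral_congr (fun ω => (e2 (Z (n+1) ω)).symm)
  · -- add
    intro f g _ hf hg ihf ihg
    have hκf : Measurable fun ω => ∫⁻ w, f w ∂(fluctKernel ν νc G Gc (Z (n+1) ω)) :=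
      (measurable_lintegral_kernel (ν := ν) (νc := νc) hG hGc hf).comp (hZ (n+1))
    have hfZ : Measurable fun ω => f (Z (n+2) ω) := hf.comp (hZ (n+2))
    simp only [Pi.add_apply]
    rw [lintegral_add_left hfZ, ihf, ihg]
    have : ∀ ω, ∫⁻ w, (f w + g w) ∂(fluctKernel ν νc G Gc (Z (n+1) ω))
        = (∫⁻ w, f w ∂(fluctKernel ν νc G Gc (Z (n+1) ω)))
          + ∫⁻ w, g w ∂(fluctKernel ν νc G Gc (Z (n+1) ω)) := by
      intro ω; rw [lintegral_add_left hf]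
    rw [← lintegral_add_left hκf]
    exact (lintegral_congr (fun ω => (this ω))).symm
  · -- iSup
    intro f hf hmono ih
    have hκn : ∀ m : ℕ, Measurable fun ω =>
        ∫⁻ w, f m w ∂(fluctKernel ν νc G Gc (Z (n+1) ω)) :=
      fun m => (measurable_lintegral_kernel (ν := ν) (νc := νc) hG hGc (hf m)).comp (hZ (n+1))
    have hfm : ∀ m, Measurable fun ω => f m (Z (n+2) ω) := fun m => (hf m).comp (hZ (n+2))
    simp only [iSup_apply]
    rw [lintegral_iSup hfm (fun i j hij ω => hmono hij _)]
    have e : ∀ ω, ∫⁻ w, ⨆ m, f m w ∂(fluctKernel ν νc G Gc (Z (n+1) ω))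
        = ⨆ m, ∫⁻ w, f m w ∂(fluctKernel ν νc G Gc (Z (n+1) ω)) := by
      intro ω
      exact lintegral_iSup hf hmono
    rw [show (∫⁻ ω in {ω | (fun i : Fin (n + 1) => Z (i.1 + 1) ω) ∈ s},
          ∫⁻ w, ⨆ m, f m w ∂(fluctKernel ν νc G Gc (Z (n + 1) ω)) ∂P)
        = ∫⁻ ω in {ω | (fun i : Fin (n + 1) => Z (i.1 + 1) ω) ∈ s},
          ⨆ m, ∫⁻ w, f m w ∂(fluctKernel ν νc G Gc (Z (n + 1) ω)) ∂P from
        lintegral_congr (fun ω => e ω)]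
    rw [lintegral_iSup hκn (fun i j hij ω => lintegral_mono (fun w => hmono hij w))]
    exact iSup_congr ih

end Fluct
end Dev3

section Dev4
open MeasureTheory ProbabilityTheory Filter Set
open scoped ENNReal

namespace Fluct

variable {ν νc : Measure ℝ} {G Gc : ℝ → ℝ}
variable {Ω : Type*} [MeasurableSpace Ω] {P : Measure Ω}
variable {Z : ℕ → Ω → ℝ}

lemma markov_step
    (hG : MonotoneOn G (Set.Ici 0)) (hGc : MonotoneOn Gc (Set.Ici 0))
    (hZ : ∀ n, Measurable (Z n))
    (hmk : ∀ (n : ℕ) (s : Set (Fin (n + 1) → ℝ)) (A : Set ℝ),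
      MeasurableSet s → MeasurableSet A →
      P ({ω | (fun i : Fin (n + 1) => Z (i.1 + 1) ω) ∈ s} ∩ {ω | Z (n + 2) ω ∈ A})
        = ∫⁻ ω in {ω | (fun i : Fin (n + 1) => Z (i.1 + 1) ω) ∈ s},
            fluctKernel ν νc G Gc (Z (n + 1) ω) A ∂P)
    (n : ℕ) {g : (Fin (n+1) → ℝ) → ℝ≥0∞} {h : ℝ → ℝ≥0∞}
    (hg : Measurable g) (hh : Measurable h) :
    ∫⁻ ω, g (fun i : Fin (n+1) => Z (i.1 + 1) ω) * h (Z (n + 2) ω) ∂P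
      = ∫⁻ ω, g (fun i : Fin (n+1) => Z (i.1 + 1) ω)
          * ∫⁻ w, h w ∂(fluctKernel ν νc G Gc (Z (n + 1) ω)) ∂P := by
  set V : Ω → (Fin (n+1) → ℝ) := fun ω => (fun i : Fin (n+1) => Z (i.1 + 1) ω) with hV
  have hVm : Measurable V := measurable_vec hZ n
  set d1 : Ω → ℝ≥0∞ := fun ω => h (Z (n+2) ω) with hd1
  set d2 : Ω → ℝ≥0∞ := fun ω => ∫⁻ w, h w ∂(fluctKernel ν νc G Gc (Z (n + 1) ω)) with hd2
  have hd1m : Measurable d1 := hh.comp (hZ (n+2))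
  have hd2m : Measurable d2 :=
    (measurable_lintegral_kernel (ν := ν) (νc := νc) hG hGc hh).comp (hZ (n+1))
  have hme : (P.withDensity d1).map V = (P.withDensity d2).map V := by
    apply Measure.ext
    intro s hs
    rw [Measure.map_apply hVm hs, Measure.map_apply hVm hs,
      withDensity_apply _ (hs.preimage hVm), withDensity_apply _ (hs.preimage hVm)]
    exact markov_step_sets hG hGc hZ hmk n hh hs
  calc ∫⁻ ω, g (V ω) * d1 ω ∂P
      = ∫⁻ ω, (d1 * fun ω => g (V ω)) ω ∂P := lintegral_congr (fun ω => mul_comm _ _)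
    _ = ∫⁻ ω, g (V ω) ∂(P.withDensity d1) :=
        (lintegral_withDensity_eq_lintegral_mul P hd1m (hg.comp hVm)).symm
    _ = ∫⁻ v, g v ∂((P.withDensity d1).map V) := (lintegral_map hg hVm).symm
    _ = ∫⁻ v, g v ∂((P.withDensity d2).map V) := by rw [hme]
    _ = ∫⁻ ω, g (V ω) ∂(P.withDensity d2) := lintegral_map hg hVm
    _ = ∫⁻ ω, (d2 * fun ω => g (V ω)) ω ∂P :=
        lintegral_withDensity_eq_lintegral_mul P hd2m (hg.comp hVm)
    _ = ∫⁻ ω, g (V ω) * d2 ω ∂P := lintegral_congr (fun ω => mul_comm _ _)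

lemma chain_formula
    (hG : MonotoneOn G (Set.Ici 0)) (hGc : MonotoneOn Gc (Set.Ici 0))
    (hZ : ∀ n, Measurable (Z n))
    (hmk : ∀ (n : ℕ) (s : Set (Fin (n + 1) → ℝ)) (A : Set ℝ),
      MeasurableSet s → MeasurableSet A →
      P ({ω | (fun i : Fin (n + 1) => Z (i.1 + 1) ω) ∈ s} ∩ {ω | Z (n + 2) ω ∈ A})
        = ∫⁻ ω in {ω | (fun i : Fin (n + 1) => Z (i.1 + 1) ω) ∈ s},
            fluctKernel ν νc G Gc (Z (n + 1) ω) A ∂P)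
    {f : ℝ → ℝ≥0∞} (hf : Measurable f) :
    ∀ (k n : ℕ) (g : (Fin (n+1) → ℝ) → ℝ≥0∞), Measurable g →
    ∫⁻ ω, g (fun i : Fin (n+1) => Z (i.1 + 1) ω)
        * ∏ j ∈ Finset.range k, f (Z (n + 2 + j) ω) ∂P
      = ∫⁻ ω, g (fun i : Fin (n+1) => Z (i.1 + 1) ω)
          * Tfun ν νc G Gc f k (Z (n + 1) ω) ∂P := by
  intro k
  induction k with
  | zero =>
    intro n g hg
    simp [Tfun]
  | succ k ih =>
    intro n g hg
    have hprod : ∀ ω, ∏ j ∈ Finset.range (k+1), f (Z (n + 2 + j) ω)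
        = f (Z (n+2) ω) * ∏ j ∈ Finset.range k, f (Z ((n+1) + 2 + j) ω) := by
      intro ω
      rw [Finset.prod_range_succ']
      rw [mul_comm]
      congr 1
      apply Finset.prod_congr rfl
      intro j _
      congr 2
      omega
    set g' : (Fin (n+2) → ℝ) → ℝ≥0∞ :=
      fun v => g (Fin.init v) * f (v (Fin.last (n+1))) with hg'def
    have hg' : Measurable g' := by
      apply Measurable.mul
      · exact hg.comp (measurable_pi_lambda _ (fun i => measurable_pi_apply _))
      · exact hf.comp (measurable_pi_apply _)
    have hkey : ∀ ω, g' (fun i : Fin (n+2) => Z (i.1 + 1) ω)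
        = g (fun i : Fin (n+1) => Z (i.1 + 1) ω) * f (Z (n+2) ω) := by
      intro ω
      rfl
    have hTm := measurable_Tfun (ν := ν) (νc := νc) hG hGc hf k
    calc ∫⁻ ω, g (fun i : Fin (n+1) => Z (i.1 + 1) ω)
          * ∏ j ∈ Finset.range (k+1), f (Z (n + 2 + j) ω) ∂P
        = ∫⁻ ω, g' (fun i : Fin (n+2) => Z (i.1 + 1) ω)
            * ∏ j ∈ Finset.range k, f (Z ((n+1) + 2 + j) ω) ∂P := by
          apply lintegral_congr
          intro ω
          rw [hprod ω, hkey ω, mul_assoc]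
      _ = ∫⁻ ω, g' (fun i : Fin (n+2) => Z (i.1 + 1) ω)
            * Tfun ν νc G Gc f k (Z ((n+1) + 1) ω) ∂P := ih (n+1) g' hg'
      _ = ∫⁻ ω, g (fun i : Fin (n+1) => Z (i.1 + 1) ω)
            * ((fun w => f w * Tfun ν νc G Gc f k w) (Z (n+2) ω)) ∂P := by
          apply lintegral_congr
          intro ω
          rw [hkey ω, mul_assoc]
      _ = ∫⁻ ω, g (fun i : Fin (n+1) => Z (i.1 + 1) ω)
            * ∫⁻ w, f w * Tfun ν νc G Gc f k w ∂(fluctKernel ν νc G Gc (Z (n + 1) ω)) ∂P :=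
          markov_step hG hGc hZ hmk n hg (hf.mul hTm)
      _ = ∫⁻ ω, g (fun i : Fin (n+1) => Z (i.1 + 1) ω)
            * Tfun ν νc G Gc f (k+1) (Z (n + 1) ω) ∂P := rfl

end Fluct
end Dev4

section Dev5
open MeasureTheory ProbabilityTheory Filter Set
open scoped ENNReal

namespace Fluct

variable {ν νc : Measure ℝ} {G Gc : ℝ → ℝ}
variable {Ω : Type*} [MeasurableSpace Ω] {P : Measure Ω}
variable {Z : ℕ → Ω → ℝ}

lemma kernel_apply_pos {x : ℝ} (hx : 0 < x) {A : Set ℝ} (hA : MeasurableSet A) :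
    fluctKernel ν νc G Gc x A
      = (ENNReal.ofReal (Gc x))⁻¹ * νc ((fun y : ℝ => -y) ⁻¹' A ∩ Set.Ioc 0 x) := by
  rw [fluctKernel, if_pos hx, Measure.map_apply measurable_neg hA, Measure.smul_apply,
    Measure.restrict_apply (hA.preimage measurable_neg), smul_eq_mul]

lemma kernel_apply_neg {x : ℝ} (hx : x < 0) {A : Set ℝ} (hA : MeasurableSet A) :
    fluctKernel ν νc G Gc x A
      = (ENNReal.ofReal (G (-x)))⁻¹ * ν (A ∩ Set.Ioc 0 (-x)) := by
  rw [fluctKernel, if_neg (by linarith), if_pos hx, Measure.smul_apply,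
    Measure.restrict_apply hA, smul_eq_mul]

lemma pair_null
    (hZ : ∀ n, Measurable (Z n))
    (hmk : ∀ (n : ℕ) (s : Set (Fin (n + 1) → ℝ)) (A : Set ℝ),
      MeasurableSet s → MeasurableSet A →
      P ({ω | (fun i : Fin (n + 1) => Z (i.1 + 1) ω) ∈ s} ∩ {ω | Z (n + 2) ω ∈ A})
        = ∫⁻ ω in {ω | (fun i : Fin (n + 1) => Z (i.1 + 1) ω) ∈ s},
            fluctKernel ν νc G Gc (Z (n + 1) ω) A ∂P)
    (n : ℕ) {B A : Set ℝ} (hB : MeasurableSet B) (hA : MeasurableSet A)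
    (hker : ∀ b ∈ B, fluctKernel ν νc G Gc b A = 0) :
    P ({ω | Z (n + 1) ω ∈ B} ∩ {ω | Z (n + 2) ω ∈ A}) = 0 := by
  have hs : MeasurableSet {v : Fin (n + 1) → ℝ | v (Fin.last n) ∈ B} :=
    hB.preimage (measurable_pi_apply _)
  have hset : {ω | (fun i : Fin (n + 1) => Z (i.1 + 1) ω) ∈
      {v : Fin (n + 1) → ℝ | v (Fin.last n) ∈ B}} = {ω | Z (n + 1) ω ∈ B} := rfl
  have := hmk n _ A hs hA
  rw [hset] at this
  rw [this]
  have hSm : MeasurableSet {ω | Z (n + 1) ω ∈ B} := hB.preimage (hZ (n+1))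
  rw [setLIntegral_congr_fun hSm ((fun ω hω => hker _ hω) : Set.EqOn
    (fun ω => fluctKernel ν νc G Gc (Z (n + 1) ω) A) (fun _ => (0:ℝ≥0∞)) {ω | Z (n + 1) ω ∈ B})]
  simp

lemma good_set
    (hZ : ∀ n, Measurable (Z n))
    (hmk : ∀ (n : ℕ) (s : Set (Fin (n + 1) → ℝ)) (A : Set ℝ),
      MeasurableSet s → MeasurableSet A →
      P ({ω | (fun i : Fin (n + 1) => Z (i.1 + 1) ω) ∈ s} ∩ {ω | Z (n + 2) ω ∈ A})
        = ∫⁻ ω in {ω | (fun i : Fin (n + 1) => Z (i.1 + 1) ω) ∈ s},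
            fluctKernel ν νc G Gc (Z (n + 1) ω) A ∂P)
    (hinit : P.map (Z 1) = ν)
    (hG0 : G 0 = 0) (hν : ∀ x : ℝ, 0 ≤ x → ν (Set.Iic x) = ENNReal.ofReal (G x)) :
    ∀ᵐ ω ∂P, 0 < Z 1 ω ∧ ∀ n : ℕ,
      (0 < Z (n + 1) ω → Z (n + 2) ω ≤ 0 ∧ -Z (n + 1) ω ≤ Z (n + 2) ω) ∧
      (Z (n + 1) ω < 0 → 0 ≤ Z (n + 2) ω ∧ Z (n + 2) ω ≤ -Z (n + 1) ω) ∧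
      (Z (n + 1) ω = 0 → Z (n + 2) ω = 0) := by
  -- initial positivity
  have h0 : ∀ᵐ ω ∂P, 0 < Z 1 ω := by
    have : P (Z 1 ⁻¹' Set.Iic 0) = 0 := by
      rw [← Measure.map_apply (hZ 1) measurableSet_Iic, hinit, hν 0 le_rfl, hG0]
      simp
    have h := measure_eq_zero_iff_ae_notMem.1 this
    filter_upwards [h] with ω hω
    simpa [not_le] using hω
  have e1 : ∀ n : ℕ, ∀ᵐ ω ∂P, ¬(0 < Z (n+1) ω ∧ 0 < Z (n+2) ω) := by
    intro n
    have : P ({ω | Z (n + 1) ω ∈ Set.Ioi 0} ∩ {ω | Z (n + 2) ω ∈ Set.Ioi 0}) = 0 := by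
      apply pair_null hZ hmk n measurableSet_Ioi measurableSet_Ioi
      intro b hb
      rw [kernel_apply_pos hb measurableSet_Ioi]
      have : (fun y : ℝ => -y) ⁻¹' Set.Ioi 0 ∩ Set.Ioc 0 b = ∅ := by
        apply Set.eq_empty_iff_forall_notMem.2
        rintro t ⟨ht1, ht2⟩
        rw [Set.mem_preimage, Set.mem_Ioi] at ht1
        linarith [ht2.1]
      rw [this]
      simp
    have h := measure_eq_zero_iff_ae_notMem.1 this
    filter_upwards [h] with ω hω
    simpa using hω
  have e3 : ∀ n : ℕ, ∀ᵐ ω ∂P, ¬(Z (n+1) ω < 0 ∧ Z (n+2) ω < 0) := by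
    intro n
    have : P ({ω | Z (n + 1) ω ∈ Set.Iio 0} ∩ {ω | Z (n + 2) ω ∈ Set.Iio 0}) = 0 := by
      apply pair_null hZ hmk n measurableSet_Iio measurableSet_Iio
      intro b hb
      rw [kernel_apply_neg hb measurableSet_Iio]
      have : Set.Iio 0 ∩ Set.Ioc 0 (-b) = ∅ := by
        apply Set.eq_empty_iff_forall_notMem.2
        rintro t ⟨ht1, ht2⟩
        rw [Set.mem_Iio] at ht1
        linarith [ht2.1]
      rw [this]
      simp
    have h := measure_eq_zero_iff_ae_notMem.1 this
    filter_upwards [h] with ω hω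
    simpa using hω
  have e5 : ∀ n : ℕ, ∀ᵐ ω ∂P, ¬(Z (n+1) ω = 0 ∧ Z (n+2) ω ≠ 0) := by
    intro n
    have : P ({ω | Z (n + 1) ω ∈ ({0} : Set ℝ)} ∩ {ω | Z (n + 2) ω ∈ ({0}ᶜ : Set ℝ)}) = 0 := by
      apply pair_null hZ hmk n (measurableSet_singleton 0) (measurableSet_singleton 0).compl
      intro b hb
      simp only [Set.mem_singleton_iff] at hb
      subst hb
      rw [fluctKernel, if_neg (lt_irrefl 0), if_neg (lt_irrefl 0),
        Measure.dirac_apply' _ (measurableSet_singleton 0).compl]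
      simp
    have h := measure_eq_zero_iff_ae_notMem.1 this
    filter_upwards [h] with ω hω
    simpa using hω
  have e2 : ∀ n : ℕ, ∀ q : ℚ, ∀ᵐ ω ∂P,
      ¬(0 < Z (n+1) ω ∧ Z (n+1) ω < -(q:ℝ) ∧ Z (n+2) ω < q) := by
    intro n q
    have : P ({ω | Z (n + 1) ω ∈ Set.Ioo 0 (-(q:ℝ))} ∩ {ω | Z (n + 2) ω ∈ Set.Iio (q:ℝ)}) = 0 := by
      apply pair_null hZ hmk n measurableSet_Ioo measurableSet_Iio
      intro b hb
      rw [kernel_apply_pos hb.1 measurableSet_Iio]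
      have : (fun y : ℝ => -y) ⁻¹' Set.Iio (q:ℝ) ∩ Set.Ioc 0 b = ∅ := by
        apply Set.eq_empty_iff_forall_notMem.2
        rintro t ⟨ht1, ht2⟩
        rw [Set.mem_preimage, Set.mem_Iio] at ht1
        have := hb.2
        linarith [ht2.2]
      rw [this]
      simp
    have h := measure_eq_zero_iff_ae_notMem.1 this
    filter_upwards [h] with ω hω
    intro hcon
    apply hω
    simp only [Set.mem_inter_iff, Set.mem_setOf_eq, Set.mem_Ioo, Set.mem_Iio]
    exact ⟨⟨hcon.1, hcon.2.1⟩, hcon.2.2⟩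
  have e4 : ∀ n : ℕ, ∀ q : ℚ, ∀ᵐ ω ∂P,
      ¬(Z (n+1) ω < 0 ∧ -(q:ℝ) < Z (n+1) ω ∧ (q:ℝ) < Z (n+2) ω) := by
    intro n q
    have : P ({ω | Z (n + 1) ω ∈ Set.Ioo (-(q:ℝ)) 0} ∩ {ω | Z (n + 2) ω ∈ Set.Ioi (q:ℝ)}) = 0 := by
      apply pair_null hZ hmk n measurableSet_Ioo measurableSet_Ioi
      intro b hb
      rw [kernel_apply_neg hb.2 measurableSet_Ioi]
      have : Set.Ioi (q:ℝ) ∩ Set.Ioc 0 (-b) = ∅ := by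
        apply Set.eq_empty_iff_forall_notMem.2
        rintro t ⟨ht1, ht2⟩
        rw [Set.mem_Ioi] at ht1
        have := hb.1
        linarith [ht2.2]
      rw [this]
      simp
    have h := measure_eq_zero_iff_ae_notMem.1 this
    filter_upwards [h] with ω hω
    intro hcon
    apply hω
    simp only [Set.mem_inter_iff, Set.mem_setOf_eq, Set.mem_Ioo, Set.mem_Ioi]
    exact ⟨⟨hcon.2.1, hcon.1⟩, hcon.2.2⟩
  have E1 : ∀ᵐ ω ∂P, ∀ n : ℕ, ¬(0 < Z (n+1) ω ∧ 0 < Z (n+2) ω) := ae_all_iff.2 e1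
  have E3 : ∀ᵐ ω ∂P, ∀ n : ℕ, ¬(Z (n+1) ω < 0 ∧ Z (n+2) ω < 0) := ae_all_iff.2 e3
  have E5 : ∀ᵐ ω ∂P, ∀ n : ℕ, ¬(Z (n+1) ω = 0 ∧ Z (n+2) ω ≠ 0) := ae_all_iff.2 e5
  have E2 : ∀ᵐ ω ∂P, ∀ n : ℕ, ∀ q : ℚ,
      ¬(0 < Z (n+1) ω ∧ Z (n+1) ω < -(q:ℝ) ∧ Z (n+2) ω < q) :=
    ae_all_iff.2 (fun n => ae_all_iff.2 (e2 n))
  have E4 : ∀ᵐ ω ∂P, ∀ n : ℕ, ∀ q : ℚ,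
      ¬(Z (n+1) ω < 0 ∧ -(q:ℝ) < Z (n+1) ω ∧ (q:ℝ) < Z (n+2) ω) :=
    ae_all_iff.2 (fun n => ae_all_iff.2 (e4 n))
  filter_upwards [h0, E1, E2, E3, E4, E5] with ω h0ω h1ω h2ω h3ω h4ω h5ω
  refine ⟨h0ω, fun n => ⟨?_, ?_, ?_⟩⟩
  · intro hpos
    constructor
    · by_contra hcon
      exact h1ω n ⟨hpos, by linarith⟩
    · by_contra hcon
      push_neg at hcon
      obtain ⟨q, hq1, hq2⟩ := exists_rat_btwn hcon
      exact h2ω n q ⟨hpos, by linarith, by linarith⟩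
  · intro hneg
    constructor
    · by_contra hcon
      exact h3ω n ⟨hneg, by linarith⟩
    · by_contra hcon
      push_neg at hcon
      obtain ⟨q, hq1, hq2⟩ := exists_rat_btwn hcon
      exact h4ω n q ⟨hneg, by linarith, by linarith⟩
  · intro hzero
    by_contra hcon
    exact h5ω n ⟨hzero, hcon⟩

end Fluct
end Dev5

section Dev6
open Finset

namespace Fluct

lemma invariant_abs (W : ℕ → ℝ) (h1 : 0 < W 1)
    (hrel : ∀ n : ℕ,
      (0 < W (n+1) → W (n+2) ≤ 0 ∧ -W (n+1) ≤ W (n+2)) ∧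
      (W (n+1) < 0 → 0 ≤ W (n+2) ∧ W (n+2) ≤ -W (n+1)) ∧
      (W (n+1) = 0 → W (n+2) = 0)) :
    ∀ n : ℕ, |W (n+1)| ≤ W 1 := by
  intro n
  induction n with
  | zero => rw [abs_of_pos h1]
  | succ n ih =>
    rcases lt_trichotomy (W (n+1)) 0 with hn | hn | hn
    · obtain ⟨ha, hb⟩ := (hrel n).2.1 hn
      rw [abs_of_nonneg ha]
      rw [abs_of_neg hn] at ih
      linarith
    · rw [(hrel n).2.2 hn]
      simp [h1.le]
    · obtain ⟨ha, hb⟩ := (hrel n).1 hn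
      rw [abs_of_nonpos ha]
      rw [abs_of_pos hn] at ih
      linarith

lemma invariant_sum (W : ℕ → ℝ) (h1 : 0 < W 1)
    (hrel : ∀ n : ℕ,
      (0 < W (n+1) → W (n+2) ≤ 0 ∧ -W (n+1) ≤ W (n+2)) ∧
      (W (n+1) < 0 → 0 ≤ W (n+2) ∧ W (n+2) ≤ -W (n+1)) ∧
      (W (n+1) = 0 → W (n+2) = 0)) :
    ∀ n : ℕ, 0 ≤ ∑ m ∈ Finset.Icc 1 (n+1), W m ∧ (∑ m ∈ Finset.Icc 1 (n+1), W m) ≤ W 1 := by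
  have key : ∀ n : ℕ, 0 ≤ ∑ m ∈ Finset.Icc 1 (n+1), W m
      ∧ (∑ m ∈ Finset.Icc 1 (n+1), W m) ≤ W 1
      ∧ (0 ≤ W (n+1) → W (n+1) ≤ ∑ m ∈ Finset.Icc 1 (n+1), W m)
      ∧ (W (n+1) ≤ 0 → (∑ m ∈ Finset.Icc 1 (n+1), W m) - W (n+1) ≤ W 1) := by
    intro n
    induction n with
    | zero =>
      have hS : ∑ m ∈ Finset.Icc 1 1, W m = W 1 := by
        rw [Finset.Icc_self, Finset.sum_singleton]
      rw [hS]
      exact ⟨h1.le, le_rfl, fun _ => le_rfl, fun h => by linarith⟩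
    | succ n ih =>
      obtain ⟨ih1, ih2, ih3, ih4⟩ := ih
      have hS : ∑ m ∈ Finset.Icc 1 (n+2), W m
          = (∑ m ∈ Finset.Icc 1 (n+1), W m) + W (n+2) :=
        Finset.sum_Icc_succ_top (by omega) W
      rw [hS]
      rcases lt_trichotomy (W (n+1)) 0 with hn | hn | hn
      · obtain ⟨ha, hb⟩ := (hrel n).2.1 hn
        have h4 := ih4 hn.le
        exact ⟨by linarith, by linarith, fun _ => by linarith, fun h => by linarith⟩
      · have hz := (hrel n).2.2 hn
        rw [hz]
        have h3 := ih3 (le_of_eq hn.symm)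
        exact ⟨by linarith, by linarith, fun _ => by linarith, fun h => by linarith⟩
      · obtain ⟨ha, hb⟩ := (hrel n).1 hn
        have h3 := ih3 hn.le
        exact ⟨by linarith, by linarith, fun _ => by linarith, fun h => by linarith⟩
  exact fun n => ⟨(key n).1, (key n).2.1⟩

end Fluct
end Dev6

section Dev7
open MeasureTheory ProbabilityTheory Filter Set
open scoped ENNReal

namespace Fluct

variable {Ω : Type*} [MeasurableSpace Ω] {P : Measure Ω}

/-- partial functional of the chain -/
noncomputable def Xpart (Z : ℕ → Ω → ℝ) (c t lam : ℝ) (k : ℕ) (ω : Ω) : ℝ :=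
  Set.indicator (Set.Ioc 0 c) (fun _ => (1:ℝ)) (Z 1 ω) * Real.exp (-(lam * Z 1 ω))
    * ∏ j ∈ Finset.range k,
        (if |Z (2+j) ω| ≤ t then Real.exp (-(lam * Z (2+j) ω)) else 0)

lemma Xpart_nonneg (Z : ℕ → Ω → ℝ) (c t lam : ℝ) (k : ℕ) (ω : Ω) :
    0 ≤ Xpart Z c t lam k ω := by
  apply mul_nonneg
  · apply mul_nonneg
    · apply Set.indicator_nonneg
      intro _ _
      norm_num
    · exact (Real.exp_pos _).le
  · apply Finset.prod_nonneg
    intro j _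
    split
    · exact (Real.exp_pos _).le
    · exact le_rfl

lemma Xpart_measurable {Z : ℕ → Ω → ℝ} (hZ : ∀ n, Measurable (Z n))
    (c t lam : ℝ) (k : ℕ) : Measurable (Xpart Z c t lam k) := by
  apply Measurable.mul
  · apply Measurable.mul
    · exact (measurable_one.indicator measurableSet_Ioc).comp (hZ 1)
    · exact (Real.continuous_exp.measurable).comp
        ((measurable_const.mul (hZ 1)).neg)
  · apply Finset.measurable_prod
    intro j _
    apply Measurable.ite
    · exact measurableSet_le ((hZ (2+j)).abs) measurable_const
    · exact (Real.continuous_exp.measurable).comp ((measurable_const.mul (hZ (2+j))).neg)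
    · exact measurable_const

lemma sum_Icc_succ (W : ℕ → ℝ) (k : ℕ) :
    ∑ m ∈ Finset.Icc 1 (k+1), W m = W 1 + ∑ j ∈ Finset.range k, W (2+j) := by
  induction k with
  | zero => simp
  | succ k ih =>
    rw [Finset.sum_Icc_succ_top (by omega : 1 ≤ k + 2), ih, Finset.sum_range_succ,
      ← add_assoc, Nat.add_comm 2 k]

lemma prod_eq_exp (W : ℕ → ℝ) (t lam : ℝ) (k : ℕ) (hb : ∀ j, j < k → |W (2+j)| ≤ t) :
    (∏ j ∈ Finset.range k, (if |W (2+j)| ≤ t then Real.exp (-(lam * W (2+j))) else 0))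
      = Real.exp (-(lam * ∑ j ∈ Finset.range k, W (2+j))) := by
  rw [Finset.prod_congr rfl
    (fun j hj => if_pos (hb j (Finset.mem_range.1 hj)) :
      ∀ j ∈ Finset.range k, (if |W (2+j)| ≤ t then Real.exp (-(lam * W (2+j))) else 0)
        = Real.exp (-(lam * W (2+j))))]
  rw [← Real.exp_sum]
  congr 1
  rw [Finset.mul_sum, ← Finset.sum_neg_distrib]

/-- On a good sample point with `Z 1 ω ∈ (0,c]`, the partial functional is the
exponential of the partial sum. -/
lemma Xpart_eq_exp {Z : ℕ → Ω → ℝ} {c t lam : ℝ} {k : ℕ} {ω : Ω}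
    (h1 : 0 < Z 1 ω)
    (hrel : ∀ n : ℕ,
      (0 < Z (n+1) ω → Z (n+2) ω ≤ 0 ∧ -Z (n+1) ω ≤ Z (n+2) ω) ∧
      (Z (n+1) ω < 0 → 0 ≤ Z (n+2) ω ∧ Z (n+2) ω ≤ -Z (n+1) ω) ∧
      (Z (n+1) ω = 0 → Z (n+2) ω = 0))
    (hZ1 : Z 1 ω ∈ Set.Ioc 0 c) (hct : c ≤ t) :
    Xpart Z c t lam k ω
      = Real.exp (-(lam * ∑ m ∈ Finset.Icc 1 (k+1), (fun n => Z n ω) m)) := by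
  have habs := invariant_abs (fun n => Z n ω) h1 hrel
  have hb : ∀ j, j < k → |Z (2+j) ω| ≤ t := by
    intro j _
    have h := habs (j+1)
    calc |Z (2+j) ω| = |Z (j+1+1) ω| := by rw [Nat.add_comm 2 j]
      _ ≤ Z 1 ω := h
      _ ≤ c := hZ1.2
      _ ≤ t := hct
  rw [Xpart, Set.indicator_of_mem hZ1, one_mul, prod_eq_exp (fun n => Z n ω) t lam k hb,
    ← Real.exp_add, sum_Icc_succ (fun n => Z n ω) k]
  congr 1
  ring

lemma Xpart_ae_bound {Z : ℕ → Ω → ℝ} {c t lam : ℝ}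
    (hgood : ∀ᵐ ω ∂P, 0 < Z 1 ω ∧ ∀ n : ℕ,
      (0 < Z (n + 1) ω → Z (n + 2) ω ≤ 0 ∧ -Z (n + 1) ω ≤ Z (n + 2) ω) ∧
      (Z (n + 1) ω < 0 → 0 ≤ Z (n + 2) ω ∧ Z (n + 2) ω ≤ -Z (n + 1) ω) ∧
      (Z (n + 1) ω = 0 → Z (n + 2) ω = 0))
    (hct : c ≤ t) (ht : 0 ≤ t) (k : ℕ) :
    ∀ᵐ ω ∂P, Xpart Z c t lam k ω
      ≤ Set.indicator (Set.Ioc 0 c) (fun _ => Real.exp (|lam| * t)) (Z 1 ω) := by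
  filter_upwards [hgood] with ω hω
  by_cases hZ1 : Z 1 ω ∈ Set.Ioc 0 c
  · rw [Set.indicator_of_mem hZ1, Xpart_eq_exp hω.1 hω.2 hZ1 hct]
    apply Real.exp_le_exp.2
    obtain ⟨hs0, hs1⟩ := invariant_sum (fun n => Z n ω) hω.1 hω.2 k
    have hSb : |∑ m ∈ Finset.Icc 1 (k+1), Z m ω| ≤ t := by
      rw [abs_of_nonneg hs0]
      calc (∑ m ∈ Finset.Icc 1 (k+1), Z m ω) ≤ Z 1 ω := hs1
        _ ≤ c := hZ1.2
        _ ≤ t := hct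
    calc -(lam * ∑ m ∈ Finset.Icc 1 (k+1), Z m ω)
        ≤ |lam * ∑ m ∈ Finset.Icc 1 (k+1), Z m ω| := neg_le_abs _
      _ = |lam| * |∑ m ∈ Finset.Icc 1 (k+1), Z m ω| := abs_mul _ _
      _ ≤ |lam| * t := by
          apply mul_le_mul_of_nonneg_left hSb (abs_nonneg _)
  · rw [Set.indicator_of_notMem hZ1, Xpart, Set.indicator_of_notMem hZ1]
    simp

lemma partial_tendsto [IsProbabilityMeasure P] {Z : ℕ → Ω → ℝ} {F : Ω → ℝ}
    (hZ : ∀ n, Measurable (Z n))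
    (hgood : ∀ᵐ ω ∂P, 0 < Z 1 ω ∧ ∀ n : ℕ,
      (0 < Z (n + 1) ω → Z (n + 2) ω ≤ 0 ∧ -Z (n + 1) ω ≤ Z (n + 2) ω) ∧
      (Z (n + 1) ω < 0 → 0 ≤ Z (n + 2) ω ∧ Z (n + 2) ω ≤ -Z (n + 1) ω) ∧
      (Z (n + 1) ω = 0 → Z (n + 2) ω = 0))
    (hF : ∀ᵐ ω ∂P,
      Tendsto (fun N => ∑ n ∈ Finset.Icc 1 N, Z n ω) atTop (nhds (F ω)) ∧
      F ω ∈ Set.Icc 0 (Z 1 ω))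
    {c t lam : ℝ} (hc : 0 < c) (hct : c ≤ t) :
    Tendsto (fun k => ∫ ω, Xpart Z c t lam k ω ∂P) atTop
      (nhds (phiFn P (Z 1) F c lam)) := by
  have ht : 0 ≤ t := le_trans hc.le hct
  rw [phiFn]
  apply tendsto_integral_of_dominated_convergence
    (fun _ => Real.exp (|lam| * t))
  · intro k
    exact (Xpart_measurable hZ c t lam k).aestronglyMeasurable
  · exact integrable_const _
  · intro k
    filter_upwards [Xpart_ae_bound hgood hct ht k] with ω hω
    rw [Real.norm_eq_abs, abs_of_nonneg (Xpart_nonneg Z c t lam k ω)]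
    refine le_trans hω ?_
    apply Set.indicator_le_self'
    intro _ _
    exact (Real.exp_pos _).le
  · filter_upwards [hgood, hF] with ω hω hFω
    by_cases hZ1 : Z 1 ω ∈ Set.Ioc 0 c
    · have heq : ∀ k, Xpart Z c t lam k ω
          = Real.exp (-(lam * ∑ m ∈ Finset.Icc 1 (k+1), Z m ω)) :=
        fun k => Xpart_eq_exp hω.1 hω.2 hZ1 hct
      rw [if_pos hZ1.2]
      simp only [heq]
      have hsum : Tendsto (fun k : ℕ => ∑ m ∈ Finset.Icc 1 (k+1), Z m ω) atTop
          (nhds (F ω)) := hFω.1.comp (tendsto_add_atTop_nat 1)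
      exact (Real.continuous_exp.tendsto _).comp ((hsum.const_mul lam).neg)
    · have heq : ∀ k, Xpart Z c t lam k ω = 0 := by
        intro k
        rw [Xpart, Set.indicator_of_notMem hZ1]
        ring
      have hne : ¬ (Z 1 ω ≤ c) := by
        intro hle
        exact hZ1 ⟨hω.1, hle⟩
      rw [if_neg hne]
      simp only [heq]
      exact tendsto_const_nhds

end Fluct
end Dev7

section Dev8
open MeasureTheory ProbabilityTheory Filter Set
open scoped ENNReal

namespace Fluct

variable {Ω : Type*} [MeasurableSpace Ω] {P : Measure Ω}

lemma Xpart_le_pointwise {Z : ℕ → Ω → ℝ} {c t lam : ℝ} (hct : c ≤ t) (k : ℕ) (ω : Ω) :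
    Xpart Z c t lam k ω ≤ Real.exp (|lam| * t) ^ (k + 1) := by
  have hexp : ∀ w : ℝ, |w| ≤ t → Real.exp (-(lam * w)) ≤ Real.exp (|lam| * t) := by
    intro w hw
    apply Real.exp_le_exp.2
    calc -(lam * w) ≤ |lam * w| := neg_le_abs _
      _ = |lam| * |w| := abs_mul _ _
      _ ≤ |lam| * t := mul_le_mul_of_nonneg_left hw (abs_nonneg _)
  have hprodnn : 0 ≤ ∏ j ∈ Finset.range k,
      (if |Z (2+j) ω| ≤ t then Real.exp (-(lam * Z (2+j) ω)) else 0) := by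
    apply Finset.prod_nonneg
    intro j _
    split_ifs
    · exact (Real.exp_pos _).le
    · exact le_rfl
  have hprod : (∏ j ∈ Finset.range k,
      (if |Z (2+j) ω| ≤ t then Real.exp (-(lam * Z (2+j) ω)) else 0))
      ≤ Real.exp (|lam| * t) ^ k := by
    have : (∏ j ∈ Finset.range k,
        (if |Z (2+j) ω| ≤ t then Real.exp (-(lam * Z (2+j) ω)) else 0))
        ≤ ∏ _j ∈ Finset.range k, Real.exp (|lam| * t) := by
      apply Finset.prod_le_prod
      · intro j _
        split_ifs
        · exact (Real.exp_pos _).le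
        · exact le_rfl
      · intro j _
        split_ifs with h
        · exact hexp _ h
        · exact (Real.exp_pos _).le
    rwa [Finset.prod_const, Finset.card_range] at this
  by_cases hZ1 : Z 1 ω ∈ Set.Ioc 0 c
  · rw [Xpart, Set.indicator_of_mem hZ1, one_mul, pow_succ, mul_comm (Real.exp _ ^ k)]
    apply mul_le_mul (hexp _ (by rw [abs_of_pos hZ1.1]; exact le_trans hZ1.2 hct)) hprod
      hprodnn (Real.exp_pos _).le
  · rw [Xpart, Set.indicator_of_notMem hZ1, zero_mul, zero_mul]
    positivity

lemma Xpart_integrable [IsProbabilityMeasure P] {Z : ℕ → Ω → ℝ}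
    (hZ : ∀ n, Measurable (Z n)) {c t lam : ℝ} (hct : c ≤ t) (k : ℕ) :
    Integrable (Xpart Z c t lam k) P := by
  apply Integrable.mono' (integrable_const (Real.exp (|lam| * t) ^ (k + 1)))
    (Xpart_measurable hZ c t lam k).aestronglyMeasurable
  apply Filter.Eventually.of_forall
  intro ω
  rw [Real.norm_eq_abs, abs_of_nonneg (Xpart_nonneg Z c t lam k ω)]
  exact Xpart_le_pointwise hct k ω

lemma Xpart_mono_c {Z : ℕ → Ω → ℝ} {t lam : ℝ} (k : ℕ) (ω : Ω) :
    Monotone (fun c => Xpart Z c t lam k ω) := by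
  intro c1 c2 hc
  apply mul_le_mul_of_nonneg_right
  · apply mul_le_mul_of_nonneg_right _ (Real.exp_pos _).le
    by_cases h1 : Z 1 ω ∈ Set.Ioc 0 c1
    · rw [Set.indicator_of_mem h1,
        Set.indicator_of_mem (show Z 1 ω ∈ Set.Ioc 0 c2 from ⟨h1.1, le_trans h1.2 hc⟩)]
    · rw [Set.indicator_of_notMem h1]
      apply Set.indicator_nonneg
      intro _ _
      norm_num
  · apply Finset.prod_nonneg
    intro j _
    split
    · exact (Real.exp_pos _).le
    · exact le_rfl

lemma Psi_mono [IsProbabilityMeasure P] {Z : ℕ → Ω → ℝ}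
    (hZ : ∀ n, Measurable (Z n)) {t lam : ℝ} (k : ℕ) :
    MonotoneOn (fun y => ∫ ω, Xpart Z y t lam k ω ∂P) (Set.Iic t) := by
  intro y1 hy1 y2 hy2 h12
  apply integral_mono (Xpart_integrable hZ hy1 k) (Xpart_integrable hZ hy2 k)
  intro ω
  exact Xpart_mono_c k ω h12

end Fluct
end Dev8

section Dev9
open MeasureTheory ProbabilityTheory Filter Set
open scoped ENNReal

namespace Fluct

lemma main_half
    {Ω : Type*} [MeasurableSpace Ω] (P : Measure Ω) [IsProbabilityMeasure P]
    (G Gc : ℝ → ℝ) (ν νc : Measure ℝ)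
    [IsProbabilityMeasure ν] [IsProbabilityMeasure νc]
    (hGmono : MonotoneOn G (Set.Ici 0)) (hGcmono : MonotoneOn Gc (Set.Ici 0))
    (hG0 : G 0 = 0) (hGc0 : Gc 0 = 0)
    (hGcpos : ∀ y : ℝ, 0 < y → 0 < Gc y)
    (hν : ∀ x : ℝ, 0 ≤ x → ν (Set.Iic x) = ENNReal.ofReal (G x))
    (hνc : ∀ x : ℝ, 0 ≤ x → νc (Set.Iic x) = ENNReal.ofReal (Gc x))
    (Z : ℕ → Ω → ℝ) (hZ : ∀ n, Measurable (Z n)) (hinit : P.map (Z 1) = ν)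
    (hmk : ∀ (n : ℕ) (s : Set (Fin (n + 1) → ℝ)) (A : Set ℝ),
      MeasurableSet s → MeasurableSet A →
      P ({ω | (fun i : Fin (n + 1) => Z (i.1 + 1) ω) ∈ s} ∩ {ω | Z (n + 2) ω ∈ A})
        = ∫⁻ ω in {ω | (fun i : Fin (n + 1) => Z (i.1 + 1) ω) ∈ s},
            fluctKernel ν νc G Gc (Z (n + 1) ω) A ∂P)
    (F : Ω → ℝ)
    (hF : ∀ᵐ ω ∂P,
      Tendsto (fun N => ∑ n ∈ Finset.Icc 1 N, Z n ω) atTop (nhds (F ω)) ∧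
      F ω ∈ Set.Icc 0 (Z 1 ω))
    (Zc : ℕ → Ω → ℝ) (hZc : ∀ n, Measurable (Zc n)) (hinitc : P.map (Zc 1) = νc)
    (hmkc : ∀ (n : ℕ) (s : Set (Fin (n + 1) → ℝ)) (A : Set ℝ),
      MeasurableSet s → MeasurableSet A →
      P ({ω | (fun i : Fin (n + 1) => Zc (i.1 + 1) ω) ∈ s} ∩ {ω | Zc (n + 2) ω ∈ A})
        = ∫⁻ ω in {ω | (fun i : Fin (n + 1) => Zc (i.1 + 1) ω) ∈ s},
            fluctKernel νc ν Gc G (Zc (n + 1) ω) A ∂P)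
    (Fc : Ω → ℝ)
    (hFc : ∀ᵐ ω ∂P,
      Tendsto (fun N => ∑ n ∈ Finset.Icc 1 N, Zc n ω) atTop (nhds (Fc ω)) ∧
      Fc ω ∈ Set.Icc 0 (Zc 1 ω))
    (lam x : ℝ) (hx : 0 < x) :
    phiFn P (Z 1) F x lam
      = ∫ y in Set.Ioc 0 x, Real.exp (-(lam * y)) * (phiFn P (Zc 1) Fc y (-lam) / Gc y) ∂ν := by
  have hgood := good_set hZ hmk hinit hG0 hν
  have hgoodc := good_set hZc hmkc hinitc hGc0 hνc
  -- one-step truncated functions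
  set freal : ℝ → ℝ := fun w => if |w| ≤ x then Real.exp (-(lam * w)) else 0 with hfreal_def
  have hfrealm : Measurable freal := by
    apply Measurable.ite (measurableSet_le continuous_abs.measurable measurable_const)
    · exact (Real.continuous_exp.measurable).comp (measurable_const.mul measurable_id).neg
    · exact measurable_const
  set fE : ℝ → ℝ≥0∞ := fun w => ENNReal.ofReal (freal w) with hfE_def
  have hfEm : Measurable fE := ENNReal.measurable_ofReal.comp hfrealm
  set fED : ℝ → ℝ≥0∞ := fun w => fE (-w) with hfED_def
  have hfEDm : Measurable fED := hfEm.comp measurable_neg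
  have hfED_eq : ∀ w : ℝ,
      fED w = ENNReal.ofReal (if |w| ≤ x then Real.exp (-(-lam * w)) else 0) := by
    intro w
    show ENNReal.ofReal (if |(-w)| ≤ x then Real.exp (-(lam * -w)) else 0) = _
    rw [abs_neg]
    congr 1
    by_cases h : |w| ≤ x
    · rw [if_pos h, if_pos h]
      ring_nf
    · rw [if_neg h, if_neg h]
  set Psi : ℕ → ℝ → ℝ := fun k y => ∫ ω, Xpart Zc y x (-lam) k ω ∂P with hPsi_def
  have hPsinn : ∀ k y, 0 ≤ Psi k y :=
    fun k y => integral_nonneg (fun ω => Xpart_nonneg _ _ _ _ _ _)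
  -- the initial weight function
  set g1 : ℝ → ℝ≥0∞ := fun yv => ENNReal.ofReal
    (Set.indicator (Set.Ioc 0 x) (fun _ => (1:ℝ)) yv * Real.exp (-(lam * yv))) with hg1_def
  have hg1m : Measurable g1 := ENNReal.measurable_ofReal.comp
    ((measurable_one.indicator measurableSet_Ioc).mul
      ((Real.continuous_exp.measurable).comp (measurable_const.mul measurable_id).neg))
  have hXof : ∀ (k : ℕ) (ω : Ω), ENNReal.ofReal (Xpart Z x x lam k ω)
      = g1 (Z 1 ω) * ∏ j ∈ Finset.range k, fE (Z (2+j) ω) := by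
    intro k ω
    rw [Xpart, ENNReal.ofReal_mul (mul_nonneg
      (Set.indicator_nonneg (fun _ _ => by norm_num) _) (Real.exp_pos _).le)]
    congr 1
    exact ENNReal.ofReal_prod_of_nonneg
      (fun j _ => by split_ifs; exacts [(Real.exp_pos _).le, le_rfl])
  have hT := fun k => measurable_Tfun (ν := ν) (νc := νc) hGmono hGcmono hfEm k
  have hTD := fun k => measurable_Tfun (ν := νc) (νc := ν) hGcmono hGmono hfEDm k
  have hmap1 : ∀ {φ : ℝ → ℝ≥0∞}, Measurable φ →
      ∫⁻ ω, φ (Z 1 ω) ∂P = ∫⁻ yv, φ yv ∂ν := by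
    intro φ hφ
    rw [← hinit]
    exact (lintegral_map hφ (hZ 1)).symm
  have hmap1c : ∀ {φ : ℝ → ℝ≥0∞}, Measurable φ →
      ∫⁻ ω, φ (Zc 1 ω) ∂P = ∫⁻ yv, φ yv ∂νc := by
    intro φ hφ
    rw [← hinitc]
    exact (lintegral_map hφ (hZc 1)).symm
  have hL : ∀ k : ℕ, ∫⁻ ω, ENNReal.ofReal (Xpart Z x x lam k ω) ∂P
      = ∫⁻ y in Set.Ioc 0 x,
          ENNReal.ofReal (Real.exp (-(lam * y))) * Tfun ν νc G Gc fE k y ∂ν := by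
    intro k
    have key := chain_formula hGmono hGcmono hZ hmk hfEm k 0
      (fun v : Fin (0+1) → ℝ => g1 (v 0)) (hg1m.comp (measurable_pi_apply _))
    have key' : ∫⁻ ω, g1 (Z 1 ω) * ∏ j ∈ Finset.range k, fE (Z (2+j) ω) ∂P
        = ∫⁻ ω, g1 (Z 1 ω) * Tfun ν νc G Gc fE k (Z 1 ω) ∂P := key
    calc ∫⁻ ω, ENNReal.ofReal (Xpart Z x x lam k ω) ∂P
        = ∫⁻ ω, g1 (Z 1 ω) * ∏ j ∈ Finset.range k, fE (Z (2+j) ω) ∂P :=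
          lintegral_congr (fun ω => hXof k ω)
      _ = ∫⁻ ω, g1 (Z 1 ω) * Tfun ν νc G Gc fE k (Z 1 ω) ∂P := key'
      _ = ∫⁻ y, g1 y * Tfun ν νc G Gc fE k y ∂ν := hmap1 (hg1m.mul (hT k))
      _ = ∫⁻ y, Set.indicator (Set.Ioc 0 x)
            (fun y => ENNReal.ofReal (Real.exp (-(lam * y))) * Tfun ν νc G Gc fE k y) y ∂ν := by
          apply lintegral_congr
          intro y
          by_cases hy : y ∈ Set.Ioc 0 x
          · rw [Set.indicator_of_mem hy]
            simp only [hg1_def]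
            rw [Set.indicator_of_mem hy, one_mul]
          · rw [Set.indicator_of_notMem hy]
            simp only [hg1_def]
            rw [Set.indicator_of_notMem hy, zero_mul, ENNReal.ofReal_zero, zero_mul]
      _ = ∫⁻ y in Set.Ioc 0 x,
            ENNReal.ofReal (Real.exp (-(lam * y))) * Tfun ν νc G Gc fE k y ∂ν :=
          lintegral_indicator measurableSet_Ioc _
  have hdual : ∀ (k : ℕ) (y : ℝ), y ∈ Set.Ioc 0 x →
      Tfun ν νc G Gc fE (k+1) y
        = (ENNReal.ofReal (Gc y))⁻¹ * ENNReal.ofReal (Psi k y) := by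
    intro k y hy
    set g2 : ℝ → ℝ≥0∞ := fun u => Set.indicator (Set.Ioc 0 y) fED u with hg2_def
    have hg2m : Measurable g2 := hfEDm.indicator measurableSet_Ioc
    have e0 : Tfun ν νc G Gc fE (k+1) y
        = (ENNReal.ofReal (Gc y))⁻¹
          * ∫⁻ u in Set.Ioc 0 y, fE (-u) * Tfun ν νc G Gc fE k (-u) ∂νc := by
      have h0 : Tfun ν νc G Gc fE (k+1) y
          = ∫⁻ w, fE w * Tfun ν νc G Gc fE k w ∂(fluctKernel ν νc G Gc y) := rfl
      rw [h0, lintegral_kernel_pos (h := fun w => fE w * Tfun ν νc G Gc fE k w) hy.1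
          (hfEm.mul (hT k))]
    have e1 : ∀ u : ℝ, Tfun ν νc G Gc fE k (-u) = Tfun νc ν Gc G fED k u := by
      intro u
      have h := Tfun_dual (ν := ν) (νc := νc) hGmono hGcmono hfEm k (-u)
      rwa [neg_neg] at h
    have e2 : ∫⁻ u in Set.Ioc 0 y, fED u * Tfun νc ν Gc G fED k u ∂νc
        = ∫⁻ u, g2 u * Tfun νc ν Gc G fED k u ∂νc := by
      rw [← lintegral_indicator measurableSet_Ioc]
      apply lintegral_congr
      intro u
      by_cases hu : u ∈ Set.Ioc 0 y
      · rw [Set.indicator_of_mem hu]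
        simp only [hg2_def]
        rw [Set.indicator_of_mem hu]
      · rw [Set.indicator_of_notMem hu]
        simp only [hg2_def]
        rw [Set.indicator_of_notMem hu, zero_mul]
    have e3 : ∫⁻ u, g2 u * Tfun νc ν Gc G fED k u ∂νc
        = ∫⁻ ω, g2 (Zc 1 ω) * Tfun νc ν Gc G fED k (Zc 1 ω) ∂P :=
      (hmap1c (hg2m.mul (hTD k))).symm
    have key := chain_formula hGcmono hGmono hZc hmkc hfEDm k 0
      (fun v : Fin (0+1) → ℝ => g2 (v 0)) (hg2m.comp (measurable_pi_apply _))
    have key' : ∫⁻ ω, g2 (Zc 1 ω) * ∏ j ∈ Finset.range k, fED (Zc (2+j) ω) ∂P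
        = ∫⁻ ω, g2 (Zc 1 ω) * Tfun νc ν Gc G fED k (Zc 1 ω) ∂P := key
    have e5 : ∀ ω, g2 (Zc 1 ω) * ∏ j ∈ Finset.range k, fED (Zc (2+j) ω)
        = ENNReal.ofReal (Xpart Zc y x (-lam) k ω) := by
      intro ω
      rw [Xpart]
      by_cases hZc1 : Zc 1 ω ∈ Set.Ioc 0 y
      · have habs : |Zc 1 ω| ≤ x := by
          rw [abs_of_pos hZc1.1]
          exact le_trans hZc1.2 hy.2
        rw [Set.indicator_of_mem hZc1, one_mul,
          ENNReal.ofReal_mul (Real.exp_pos _).le,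
          ENNReal.ofReal_prod_of_nonneg
            (fun j _ => by split_ifs; exacts [(Real.exp_pos _).le, le_rfl])]
        congr 1
        · simp only [hg2_def]
          rw [Set.indicator_of_mem hZc1, hfED_eq, if_pos habs]
        · apply Finset.prod_congr rfl
          intro j _
          rw [hfED_eq]
      · rw [Set.indicator_of_notMem hZc1, zero_mul, zero_mul, ENNReal.ofReal_zero]
        simp only [hg2_def]
        rw [Set.indicator_of_notMem hZc1, zero_mul]
    have e6 : ∫⁻ ω, ENNReal.ofReal (Xpart Zc y x (-lam) k ω) ∂P
        = ENNReal.ofReal (Psi k y) := by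
      simp only [hPsi_def]
      exact (ofReal_integral_eq_lintegral_ofReal (Xpart_integrable hZc hy.2 k)
        (Filter.Eventually.of_forall (fun ω => Xpart_nonneg _ _ _ _ _ _))).symm
    rw [e0]
    congr 1
    calc ∫⁻ u in Set.Ioc 0 y, fE (-u) * Tfun ν νc G Gc fE k (-u) ∂νc
        = ∫⁻ u in Set.Ioc 0 y, fED u * Tfun νc ν Gc G fED k u ∂νc := by
          apply lintegral_congr
          intro u
          rw [e1 u]
      _ = ∫⁻ u, g2 u * Tfun νc ν Gc G fED k u ∂νc := e2
      _ = ∫⁻ ω, g2 (Zc 1 ω) * Tfun νc ν Gc G fED k (Zc 1 ω) ∂P := e3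
      _ = ∫⁻ ω, g2 (Zc 1 ω) * ∏ j ∈ Finset.range k, fED (Zc (2+j) ω) ∂P := key'.symm
      _ = ∫⁻ ω, ENNReal.ofReal (Xpart Zc y x (-lam) k ω) ∂P :=
          lintegral_congr (fun ω => e5 ω)
      _ = ENNReal.ofReal (Psi k y) := e6
  -- measurability of the integrand sequence on the restricted measure
  have hAESM : ∀ k : ℕ, AEStronglyMeasurable
      (fun y => Real.exp (-(lam * y)) * (Psi k y / Gc y)) (ν.restrict (Set.Ioc 0 x)) := by
    intro k
    have hPsim : Measurable (fun y => Psi k (min y x)) := by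
      apply Monotone.measurable
      intro y1 y2 h12
      simp only [hPsi_def]
      exact Psi_mono hZc k (min_le_right y1 x) (min_le_right y2 x)
        (min_le_min h12 le_rfl)
    have hGcm : Measurable (fun y => Gc (max y 0)) := by
      apply Monotone.measurable
      intro a b hab
      exact hGcmono (le_max_right a 0) (le_max_right b 0) (max_le_max hab le_rfl)
    have hfm : Measurable (fun y => Real.exp (-(lam * y)) * (Psi k (min y x) / Gc (max y 0))) := by
      apply Measurable.mul
      · exact (Real.continuous_exp.measurable).comp (measurable_const.mul measurable_id).neg
      · exact hPsim.div hGcm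
    apply hfm.aestronglyMeasurable.congr
    filter_upwards [ae_restrict_mem measurableSet_Ioc] with y hy
    rw [min_eq_left hy.2, max_eq_left hy.1.le]
  -- per-N real identity
  have perN : ∀ k : ℕ, ∫ ω, Xpart Z x x lam (k+1) ω ∂P
      = ∫ y in Set.Ioc 0 x, Real.exp (-(lam * y)) * (Psi k y / Gc y) ∂ν := by
    intro k
    have l1 : ∫ ω, Xpart Z x x lam (k+1) ω ∂P
        = (∫⁻ ω, ENNReal.ofReal (Xpart Z x x lam (k+1) ω) ∂P).toReal :=
      integral_eq_lintegral_of_nonneg_ae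
        (Filter.Eventually.of_forall (fun ω => Xpart_nonneg _ _ _ _ _ _))
        (Xpart_measurable hZ _ _ _ _).aestronglyMeasurable
    have l2 : ∫ y in Set.Ioc 0 x, Real.exp (-(lam * y)) * (Psi k y / Gc y) ∂ν
        = (∫⁻ y in Set.Ioc 0 x,
            ENNReal.ofReal (Real.exp (-(lam * y)) * (Psi k y / Gc y)) ∂ν).toReal := by
      apply integral_eq_lintegral_of_nonneg_ae
      · filter_upwards [ae_restrict_mem measurableSet_Ioc] with y hy
        exact mul_nonneg (Real.exp_pos _).le
          (div_nonneg (hPsinn k y) (hGcpos y hy.1).le)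
      · exact hAESM k
    have l3 : ∫⁻ ω, ENNReal.ofReal (Xpart Z x x lam (k+1) ω) ∂P
        = ∫⁻ y in Set.Ioc 0 x,
            ENNReal.ofReal (Real.exp (-(lam * y)) * (Psi k y / Gc y)) ∂ν := by
      rw [hL (k+1)]
      apply lintegral_congr_ae
      filter_upwards [ae_restrict_mem measurableSet_Ioc] with y hy
      rw [hdual k y hy, ENNReal.ofReal_mul (Real.exp_pos _).le,
        ENNReal.ofReal_div_of_pos (hGcpos y hy.1), div_eq_mul_inv]
      ring
    rw [l1, l2, l3]
  -- limits
  have hLHS : Tendsto (fun k => ∫ ω, Xpart Z x x lam (k+1) ω ∂P) atTop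
      (nhds (phiFn P (Z 1) F x lam)) :=
    (partial_tendsto hZ hgood hF hx le_rfl).comp (tendsto_add_atTop_nat 1)
  have hPsile : ∀ (k : ℕ) (y : ℝ), y ∈ Set.Ioc 0 x →
      Psi k y ≤ Real.exp (|lam| * x) * Gc y := by
    intro k y hy
    have hb := Xpart_ae_bound (P := P) (Z := Zc) (lam := -lam) hgoodc hy.2 hx.le k
    have hindint : Integrable (fun ω =>
        Set.indicator (Zc 1 ⁻¹' Set.Ioc 0 y) (fun _ => Real.exp (|(-lam)| * x)) ω) P :=
      (integrable_const _).indicator (measurableSet_Ioc.preimage (hZc 1))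
    have hcomp : (fun ω => Set.indicator (Set.Ioc 0 y)
        (fun _ => Real.exp (|(-lam)| * x)) (Zc 1 ω))
        = fun ω => Set.indicator (Zc 1 ⁻¹' Set.Ioc 0 y)
            (fun _ => Real.exp (|(-lam)| * x)) ω := by
      funext ω
      by_cases h : Zc 1 ω ∈ Set.Ioc 0 y
      · rw [Set.indicator_of_mem h,
          Set.indicator_of_mem (show ω ∈ Zc 1 ⁻¹' Set.Ioc 0 y from h)]
      · rw [Set.indicator_of_notMem h,
          Set.indicator_of_notMem (show ω ∉ Zc 1 ⁻¹' Set.Ioc 0 y from h)]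
    have hmono : Psi k y ≤ ∫ ω, Set.indicator (Zc 1 ⁻¹' Set.Ioc 0 y)
        (fun _ => Real.exp (|(-lam)| * x)) ω ∂P := by
      simp only [hPsi_def]
      apply integral_mono_ae (Xpart_integrable hZc hy.2 k) hindint
      rw [← hcomp]
      exact hb
    have hval : ∫ ω, Set.indicator (Zc 1 ⁻¹' Set.Ioc 0 y)
        (fun _ => Real.exp (|(-lam)| * x)) ω ∂P
        = (P (Zc 1 ⁻¹' Set.Ioc 0 y)).toReal * Real.exp (|(-lam)| * x) := by
      rw [integral_indicator_const _ (measurableSet_Ioc.preimage (hZc 1))]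
      rw [smul_eq_mul, measureReal_def]
    have hmass : (P (Zc 1 ⁻¹' Set.Ioc 0 y)).toReal = Gc y := by
      rw [← Measure.map_apply (hZc 1) measurableSet_Ioc, hinitc,
        restrict_mass hνc hGc0 hy.1, ENNReal.toReal_ofReal (hGcpos y hy.1).le]
    calc Psi k y ≤ ∫ ω, Set.indicator (Zc 1 ⁻¹' Set.Ioc 0 y)
          (fun _ => Real.exp (|(-lam)| * x)) ω ∂P := hmono
      _ = Gc y * Real.exp (|lam| * x) := by rw [hval, hmass, abs_neg]
      _ = Real.exp (|lam| * x) * Gc y := mul_comm _ _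
  have hRHS : Tendsto (fun k => ∫ y in Set.Ioc 0 x,
      Real.exp (-(lam * y)) * (Psi k y / Gc y) ∂ν) atTop
      (nhds (∫ y in Set.Ioc 0 x,
        Real.exp (-(lam * y)) * (phiFn P (Zc 1) Fc y (-lam) / Gc y) ∂ν)) := by
    apply tendsto_integral_of_dominated_convergence
      (fun _ => Real.exp (|lam| * x) * Real.exp (|lam| * x))
    · exact hAESM
    · exact integrable_const _
    · intro k
      filter_upwards [ae_restrict_mem measurableSet_Ioc] with y hy
      have h1 : Real.exp (-(lam * y)) ≤ Real.exp (|lam| * x) := by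
        apply Real.exp_le_exp.2
        calc -(lam * y) ≤ |lam * y| := neg_le_abs _
          _ = |lam| * |y| := abs_mul _ _
          _ ≤ |lam| * x := by
              apply mul_le_mul_of_nonneg_left _ (abs_nonneg _)
              rw [abs_of_pos hy.1]
              exact hy.2
      have h2 : Psi k y / Gc y ≤ Real.exp (|lam| * x) :=
        (div_le_iff₀ (hGcpos y hy.1)).2 (hPsile k y hy)
      rw [Real.norm_eq_abs, abs_of_nonneg (mul_nonneg (Real.exp_pos _).le
        (div_nonneg (hPsinn k y) (hGcpos y hy.1).le))]
      exact mul_le_mul h1 h2 (div_nonneg (hPsinn k y) (hGcpos y hy.1).le)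
        (Real.exp_pos _).le
    · filter_upwards [ae_restrict_mem measurableSet_Ioc] with y hy
      have h := partial_tendsto (lam := -lam) hZc hgoodc hFc hy.1 hy.2
      exact ((h.div_const (Gc y)).const_mul _)
  have hLHS' : Tendsto (fun k => ∫ y in Set.Ioc 0 x,
      Real.exp (-(lam * y)) * (Psi k y / Gc y) ∂ν) atTop
      (nhds (phiFn P (Z 1) F x lam)) := by
    have heq : (fun k => ∫ ω, Xpart Z x x lam (k+1) ω ∂P)
        = fun k => ∫ y in Set.Ioc 0 x, Real.exp (-(lam * y)) * (Psi k y / Gc y) ∂ν :=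
      funext perN
    rwa [heq] at hLHS
  exact tendsto_nhds_unique hLHS' hRHS

end Fluct
end Dev9


/-- With `(Z_n)` the Markov chain of initial law `μ` (c.d.f. `H`) and kernel
`fluctKernel μ μ̌ H Ȟ`, `F = Σ_{n≥1} Z_n`, `φ(x,λ) = E[1_{Z₁ ≤ x} e^{-λF}]`, and
`(Ž_n), F̌, φ̌` the corresponding objects with `H` and `Ȟ` exchanged, one has for all
real `λ` and all `x > 0`:
`φ(x,λ) = ∫_{(0,x]} e^{-λy} (φ̌(y,-λ)/Ȟ(y)) μ(dy)` and
`φ̌(x,λ) = ∫_{(0,x]} e^{-λy} (φ(y,-λ)/H(y)) μ̌(dy)`. -/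
theorem statement1
    {Ω : Type*} [MeasurableSpace Ω] (P : Measure Ω) [IsProbabilityMeasure P]
    (H Hc : ℝ → ℝ) (μ μc : Measure ℝ)
    [IsProbabilityMeasure μ] [IsProbabilityMeasure μc]
    (hHcont : ContinuousOn H (Set.Ici 0)) (hHccont : ContinuousOn Hc (Set.Ici 0))
    (hHmono : MonotoneOn H (Set.Ici 0)) (hHcmono : MonotoneOn Hc (Set.Ici 0))
    (hH0 : H 0 = 0) (hHc0 : Hc 0 = 0)
    (hHpos : ∀ x : ℝ, 0 < x → 0 < H x) (hHcpos : ∀ x : ℝ, 0 < x → 0 < Hc x)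
    (hHle : ∀ x : ℝ, 0 ≤ x → H x ≤ 1) (hHcle : ∀ x : ℝ, 0 ≤ x → Hc x ≤ 1)
    (hHlim : Tendsto H atTop (nhds 1)) (hHclim : Tendsto Hc atTop (nhds 1))
    (hμ : ∀ x : ℝ, 0 ≤ x → μ (Set.Iic x) = ENNReal.ofReal (H x))
    (hμc : ∀ x : ℝ, 0 ≤ x → μc (Set.Iic x) = ENNReal.ofReal (Hc x))
    -- the chain `Z` and its a.s. sum `F`
    (Z : ℕ → Ω → ℝ) (hZmeas : ∀ n, Measurable (Z n))
    (hinit : P.map (Z 1) = μ)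
    (hmarkov : ∀ (n : ℕ) (s : Set (Fin (n + 1) → ℝ)) (A : Set ℝ),
      MeasurableSet s → MeasurableSet A →
      P ({ω | (fun i : Fin (n + 1) => Z (i.1 + 1) ω) ∈ s} ∩ {ω | Z (n + 2) ω ∈ A})
        = ∫⁻ ω in {ω | (fun i : Fin (n + 1) => Z (i.1 + 1) ω) ∈ s},
            fluctKernel μ μc H Hc (Z (n + 1) ω) A ∂P)
    (F : Ω → ℝ) (hFmeas : Measurable F)
    (hF : ∀ᵐ ω ∂P,
      Tendsto (fun N => ∑ n ∈ Finset.Icc 1 N, Z n ω) atTop (nhds (F ω)) ∧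
      F ω ∈ Set.Icc 0 (Z 1 ω))
    -- the dual chain `Ž` (roles of `H` and `Ȟ` exchanged) and its a.s. sum `F̌`
    (Zc : ℕ → Ω → ℝ) (hZcmeas : ∀ n, Measurable (Zc n))
    (hinitc : P.map (Zc 1) = μc)
    (hmarkovc : ∀ (n : ℕ) (s : Set (Fin (n + 1) → ℝ)) (A : Set ℝ),
      MeasurableSet s → MeasurableSet A →
      P ({ω | (fun i : Fin (n + 1) => Zc (i.1 + 1) ω) ∈ s} ∩ {ω | Zc (n + 2) ω ∈ A})
        = ∫⁻ ω in {ω | (fun i : Fin (n + 1) => Zc (i.1 + 1) ω) ∈ s},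
            fluctKernel μc μ Hc H (Zc (n + 1) ω) A ∂P)
    (Fc : Ω → ℝ) (hFcmeas : Measurable Fc)
    (hFc : ∀ᵐ ω ∂P,
      Tendsto (fun N => ∑ n ∈ Finset.Icc 1 N, Zc n ω) atTop (nhds (Fc ω)) ∧
      Fc ω ∈ Set.Icc 0 (Zc 1 ω)) :
    ∀ (lam x : ℝ), 0 < x →
      phiFn P (Z 1) F x lam
        = (∫ y in Set.Ioc (0:ℝ) x,
            Real.exp (-(lam * y)) * (phiFn P (Zc 1) Fc y (-lam) / Hc y) ∂μ) ∧
      phiFn P (Zc 1) Fc x lam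
        = (∫ y in Set.Ioc (0:ℝ) x,
            Real.exp (-(lam * y)) * (phiFn P (Z 1) F y (-lam) / H y) ∂μc) := by
  intro lam x hx
  constructor
  · exact Fluct.main_half P H Hc μ μc hHmono hHcmono hH0 hHc0 hHcpos hμ hμc
      Z hZmeas hinit hmarkov F hF Zc hZcmeas hinitc hmarkovc Fc hFc lam x hx
  · exact Fluct.main_half P Hc H μc μ hHcmono hHmono hHc0 hH0 hHpos hμc hμ
      Zc hZcmeas hinitc hmarkovc Fc hFc Z hZmeas hinit hmarkov F hF lam x hx
end

section
/- For all γ, δ > 0 and all u ∈ ℝ: γ β̂_{γ,δ+1}(u) + u β̂_{γ,δ+1}′(u) = γ e^{−u} β̂_{δ,γ+1}(−u), and δ β̂_{δ,γ+1}(u) + u β̂_{δ,γ+1}′(u) = δ e^{−u} β̂_{γ,δ+1}(−u), where ′ denotes the derivative with respect to u. -/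
open Filter Set

/-- The Beta(a,b) density on `[0,1]`: `β_{a,b}(t) = Γ(a+b)/(Γ(a)Γ(b)) t^(a-1) (1-t)^(b-1)`. -/
noncomputable def betaDens (a b t : ℝ) : ℝ :=
  (Real.Gamma (a + b) / (Real.Gamma a * Real.Gamma b)) * t ^ (a - 1) * (1 - t) ^ (b - 1)

/-- `β̂_{a,b}(λ) = ∫_0^1 e^{-λ t} β_{a,b}(t) dt`. -/
noncomputable def betaHat (a b lam : ℝ) : ℝ :=
  ∫ t in (0:ℝ)..1, Real.exp (-lam * t) * betaDens a b t

open MeasureTheory intervalIntegral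

/-- kernel integrability -/
lemma betaKer_int (a b : ℝ) (ha : 0 < a) (hb : 0 < b) :
    IntervalIntegrable (fun t : ℝ => t ^ (a - 1) * (1 - t) ^ (b - 1)) volume 0 1 := by
  have hc := Complex.betaIntegral_convergent (u := (a:ℂ)) (v := (b:ℂ)) (by simpa using ha)
    (by simpa using hb)
  rw [intervalIntegrable_iff_integrableOn_Ioc_of_le zero_le_one] at hc ⊢
  have heq : ∀ t ∈ Ioc (0:ℝ) 1,
      ((fun x : ℝ => (x:ℂ) ^ ((a:ℂ) - 1) * (1 - (x:ℂ)) ^ ((b:ℂ) - 1)) t).re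
        = t ^ (a - 1) * (1 - t) ^ (b - 1) := by
    intro t ht
    have h1 : ((t:ℂ)) ^ ((a:ℂ) - 1) = ((t ^ (a-1) : ℝ) : ℂ) := by
      rw [Complex.ofReal_cpow ht.1.le]; push_cast; ring_nf
    have h2 : ((1 - (t:ℂ))) ^ ((b:ℂ) - 1) = (((1 - t) ^ (b-1) : ℝ) : ℂ) := by
      rw [show (1 - (t:ℂ)) = (((1 - t : ℝ)) : ℂ) by push_cast; ring,
        Complex.ofReal_cpow (by linarith [ht.2])]
      push_cast; ring_nf
    simp [h1, h2, ← Complex.ofReal_mul]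
  have : IntegrableOn (fun x : ℝ => ((x:ℂ) ^ ((a:ℂ) - 1) * (1 - (x:ℂ)) ^ ((b:ℂ) - 1)).re)
      (Ioc (0:ℝ) 1) volume := hc.re
  exact IntegrableOn.congr_fun this heq measurableSet_Ioc

lemma mul_ker_int (a b : ℝ) (ha : 0 < a) (hb : 0 < b) {φ : ℝ → ℝ} (hφ : Continuous φ) :
    IntervalIntegrable (fun t : ℝ => φ t * (t ^ (a - 1) * (1 - t) ^ (b - 1))) volume 0 1 :=
  (betaKer_int a b ha hb).continuousOn_mul hφ.continuousOn
set_option maxHeartbeats 1000000 in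
lemma hasDerivAt_K (a b : ℝ) (ha : 0 < a) (hb : 0 < b) (u : ℝ) :
    HasDerivAt (fun lam => ∫ t in (0:ℝ)..1,
        Real.exp (-lam * t) * (t ^ (a - 1) * (1 - t) ^ (b - 1)))
      (∫ t in (0:ℝ)..1,
        (-t * Real.exp (-u * t)) * (t ^ (a - 1) * (1 - t) ^ (b - 1))) u := by
  have hcx : ∀ x : ℝ, Continuous fun t : ℝ => Real.exp (-x * t) :=
    fun x => Real.continuous_exp.comp (continuous_const.mul continuous_id)
  refine (intervalIntegral.hasDerivAt_integral_of_dominated_loc_of_deriv_le (s := Metric.ball u 1)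
    (μ := volume) (a := 0) (b := 1) (x₀ := u)
    (F := fun lam t => Real.exp (-lam * t) * (t ^ (a - 1) * (1 - t) ^ (b - 1)))
    (F' := fun lam t => (-t * Real.exp (-lam * t)) * (t ^ (a - 1) * (1 - t) ^ (b - 1)))
    (bound := fun t => Real.exp (|u| + 1) * |t ^ (a - 1) * (1 - t) ^ (b - 1)|)
    (Metric.ball_mem_nhds u one_pos)
    (Eventually.of_forall fun x => by
      rw [uIoc_of_le (zero_le_one (α := ℝ))]
      exact (mul_ker_int a b ha hb (hcx x)).1.aestronglyMeasurable)
    (mul_ker_int a b ha hb (hcx u))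
    (by
      rw [uIoc_of_le (zero_le_one (α := ℝ))]
      exact (mul_ker_int a b ha hb (continuous_id.neg.mul (hcx u))).1.aestronglyMeasurable)
    ?_ ?_ ?_).2
  · refine ae_of_all _ fun t ht x hx => ?_
    rw [uIoc_of_le zero_le_one] at ht
    have hx' : |x - u| < 1 := by simpa [Real.dist_eq] using hx
    have h1 : |x| ≤ |u| + 1 := by
      have := abs_sub_abs_le_abs_sub x u; linarith
    have ht0 : 0 < t := ht.1
    have ht1 : t ≤ 1 := ht.2
    have hexp : Real.exp (-x * t) ≤ Real.exp (|u| + 1) := by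
      apply Real.exp_le_exp.2
      have h2 : -x * t ≤ |x| * t := by
        have : -x ≤ |x| := neg_le_abs x
        nlinarith
      nlinarith [abs_nonneg x]
    have hre : ‖(-t * Real.exp (-x * t)) * (t ^ (a - 1) * (1 - t) ^ (b - 1))‖
        = (t * Real.exp (-x * t)) * |t ^ (a - 1) * (1 - t) ^ (b - 1)| := by
      rw [Real.norm_eq_abs, abs_mul, abs_mul, abs_neg, abs_of_pos ht0,
        abs_of_pos (Real.exp_pos _)]
    have hnn : (0:ℝ) ≤ |t ^ (a - 1) * (1 - t) ^ (b - 1)| := abs_nonneg _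
    have hle : t * Real.exp (-x * t) ≤ Real.exp (|u| + 1) := by
      nlinarith [Real.exp_pos (-x * t)]
    calc ‖(-t * Real.exp (-x * t)) * (t ^ (a - 1) * (1 - t) ^ (b - 1))‖
        = t * Real.exp (-x * t) * |t ^ (a - 1) * (1 - t) ^ (b - 1)| := hre
      _ ≤ Real.exp (|u| + 1) * |t ^ (a - 1) * (1 - t) ^ (b - 1)| :=
        mul_le_mul_of_nonneg_right hle hnn
  · exact ((betaKer_int a b ha hb).norm).const_mul _
  · refine ae_of_all _ fun t _ x _ => ?_
    have h1 : HasDerivAt (fun x : ℝ => -x * t) (-t) x := by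
      simpa using ((hasDerivAt_id x).neg.mul_const t)
    have h2 : HasDerivAt (fun x : ℝ => Real.exp (-x * t)) (Real.exp (-x * t) * (-t)) x :=
      h1.exp
    have := h2.mul_const (t ^ (a - 1) * (1 - t) ^ (b - 1))
    exact this.congr_deriv (by ring)

lemma ftc_key (a b : ℝ) (ha : 0 < a) (hb : 0 < b) (u : ℝ) :
    (∫ t in (0:ℝ)..1, (Real.exp (-u * t) * (a - u * t)) * (t ^ (a - 1) * (1 - t) ^ b))
      = b * ∫ t in (0:ℝ)..1, Real.exp (-u * t) * (t ^ a * (1 - t) ^ (b - 1)) := by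
  have hcx : Continuous fun t : ℝ => Real.exp (-u * t) :=
    Real.continuous_exp.comp (continuous_const.mul continuous_id)
  set f : ℝ → ℝ := fun t => Real.exp (-u * t) * (t ^ a * (1 - t) ^ b) with hfdef
  set g1 : ℝ → ℝ := fun t => (Real.exp (-u * t) * (a - u * t)) * (t ^ (a - 1) * (1 - t) ^ b)
    with hg1def
  set g2 : ℝ → ℝ := fun t => Real.exp (-u * t) * (t ^ a * (1 - t) ^ (b - 1)) with hg2def
  have hint1 : IntervalIntegrable g1 volume 0 1 := by
    have := mul_ker_int a (b + 1) ha (by linarith)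
      (φ := fun t => Real.exp (-u * t) * (a - u * t))
      (hcx.mul (continuous_const.sub (continuous_const.mul continuous_id)))
    simpa [hg1def, show b + 1 - 1 = b by ring] using this
  have hint2 : IntervalIntegrable g2 volume 0 1 := by
    have := mul_ker_int (a + 1) b (by linarith) hb (φ := fun t => Real.exp (-u * t)) hcx
    simpa [hg2def, show a + 1 - 1 = a by ring] using this
  have hcont : ContinuousOn f (Icc 0 1) :=
    (hcx.mul ((Real.continuous_rpow_const ha.le).mul
      ((Real.continuous_rpow_const hb.le).comp (continuous_const.sub continuous_id)))).continuousOn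
  have hderiv : ∀ t ∈ Ioo (0:ℝ) 1, HasDerivAt f (g1 t - b * g2 t) t := by
    intro t ht
    have ht0 : t ≠ 0 := ht.1.ne'
    have ht1 : (1:ℝ) - t ≠ 0 := by have := ht.2; intro h; linarith [sub_eq_zero.1 h]
    have hpe : HasDerivAt (fun t : ℝ => Real.exp (-u * t)) (Real.exp (-u * t) * (-u)) t := by
      have h1 : HasDerivAt (fun t : ℝ => -u * t) (-u) t := by
        simpa using (hasDerivAt_id t).const_mul (-u)
      exact h1.exp
    have hp : HasDerivAt (fun t : ℝ => t ^ a) (a * t ^ (a - 1)) t :=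
      Real.hasDerivAt_rpow_const (Or.inl ht0)
    have hq : HasDerivAt (fun t : ℝ => (1 - t) ^ b) (b * (1 - t) ^ (b - 1) * (-1)) t := by
      have hsub : HasDerivAt (fun t : ℝ => 1 - t) (-1) t := by
        exact (hasDerivAt_id' t).const_sub 1
      exact (Real.hasDerivAt_rpow_const (p := b) (Or.inl ht1)).comp t hsub
    have htot := hpe.mul (hp.mul hq)
    have ta : t ^ a = t ^ (a - 1) * t := by
      nth_rewrite 1 [show a = a - 1 + 1 by ring]
      exact Real.rpow_add_one ht0 _
    have tb : (1 - t) ^ b = (1 - t) ^ (b - 1) * (1 - t) := by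
      nth_rewrite 1 [show b = b - 1 + 1 by ring]
      exact Real.rpow_add_one ht1 _
    refine htot.congr_deriv ?_
    simp only [hg1def, hg2def, Pi.mul_apply]
    rw [ta, tb]
    ring
  have h0 : ∫ t in (0:ℝ)..1, (g1 t - b * g2 t) = f 1 - f 0 :=
    integral_eq_sub_of_hasDerivAt_of_le zero_le_one hcont hderiv
      (hint1.sub (hint2.const_mul b))
  have hf1 : f 1 = 0 := by simp [hfdef, Real.zero_rpow hb.ne']
  have hf0 : f 0 = 0 := by simp [hfdef, Real.zero_rpow ha.ne']
  rw [integral_sub hint1 (hint2.const_mul b), intervalIntegral.integral_const_mul, hf1, hf0, sub_zero] at h0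
  have := sub_eq_zero.1 h0
  simpa [hg1def, hg2def] using this

lemma mainlem (a b : ℝ) (ha : 0 < a) (hb : 0 < b) (u : ℝ) :
    a * betaHat a (b + 1) u + u * deriv (betaHat a (b + 1)) u
      = a * Real.exp (-u) * betaHat b (a + 1) (-u) := by
  have hb1 : (0:ℝ) < b + 1 := by linarith
  have ha1 : (0:ℝ) < a + 1 := by linarith
  have hcx : ∀ x : ℝ, Continuous fun t : ℝ => Real.exp (-x * t) :=
    fun x => Real.continuous_exp.comp (continuous_const.mul continuous_id)
  set C1 : ℝ := Real.Gamma (a + (b + 1)) / (Real.Gamma a * Real.Gamma (b + 1)) with hC1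
  set C2 : ℝ := Real.Gamma (b + (a + 1)) / (Real.Gamma b * Real.Gamma (a + 1)) with hC2
  -- rewrite betaHat in kernel form
  have hrew1 : betaHat a (b + 1)
      = fun lam => C1 * ∫ t in (0:ℝ)..1, Real.exp (-lam * t) * (t ^ (a - 1) * (1 - t) ^ b) := by
    funext lam
    rw [betaHat, ← intervalIntegral.integral_const_mul]
    congr 1
    funext t
    simp only [betaDens, show a + (b + 1) - 1 = a + b by ring, show b + 1 - 1 = b by ring]
    ring
  have hrew2 : betaHat b (a + 1)
      = fun lam => C2 * ∫ t in (0:ℝ)..1, Real.exp (-lam * t) * (t ^ (b - 1) * (1 - t) ^ a) := by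
    funext lam
    rw [betaHat, ← intervalIntegral.integral_const_mul]
    congr 1
    funext t
    simp only [betaDens, show a + 1 - 1 = a by ring]
    ring
  set K : ℝ := ∫ t in (0:ℝ)..1, Real.exp (-u * t) * (t ^ (a - 1) * (1 - t) ^ b) with hK
  set D : ℝ := ∫ t in (0:ℝ)..1, (-t * Real.exp (-u * t)) * (t ^ (a - 1) * (1 - t) ^ b) with hD
  set I : ℝ := ∫ t in (0:ℝ)..1, Real.exp (-u * t) * (t ^ a * (1 - t) ^ (b - 1)) with hI
  -- derivative
  have hder : deriv (betaHat a (b + 1)) u = C1 * D := by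
    have h := hasDerivAt_K a (b + 1) ha hb1 u
    simp only [add_sub_cancel_right] at h
    have h2 : HasDerivAt (betaHat a (b + 1)) (C1 * D) u := by
      rw [hrew1, hD]
      exact h.const_mul C1
    exact h2.deriv
  -- combine a*K + u*D into single integral and apply FTC
  have hint1 : IntervalIntegrable
      (fun t : ℝ => Real.exp (-u * t) * (t ^ (a - 1) * (1 - t) ^ b)) volume 0 1 := by
    simpa [show b + 1 - 1 = b by ring] using mul_ker_int a (b + 1) ha hb1 (hcx u)
  have hint2 : IntervalIntegrable
      (fun t : ℝ => (-t * Real.exp (-u * t)) * (t ^ (a - 1) * (1 - t) ^ b)) volume 0 1 := by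
    simpa [show b + 1 - 1 = b by ring] using
      mul_ker_int a (b + 1) ha hb1 (continuous_id.neg.mul (hcx u))
  have hsum : a * K + u * D = b * I := by
    rw [hK, hD, ← intervalIntegral.integral_const_mul, ← intervalIntegral.integral_const_mul,
      ← intervalIntegral.integral_add (hint1.const_mul a) (hint2.const_mul u)]
    rw [show (b * I) = ∫ t in (0:ℝ)..1,
        (Real.exp (-u * t) * (a - u * t)) * (t ^ (a - 1) * (1 - t) ^ b) from
      (ftc_key a b ha hb u).symm]
    congr 1
    funext t
    ring
  -- reflection for the RHS
  have hrefl : (∫ t in (0:ℝ)..1, Real.exp (-(-u) * t) * (t ^ (b - 1) * (1 - t) ^ a))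
      = Real.exp u * I := by
    have h := intervalIntegral.integral_comp_sub_left
      (a := (0:ℝ)) (b := 1) (fun s => Real.exp (-(-u) * s) * (s ^ (b - 1) * (1 - s) ^ a)) 1
    norm_num at h
    simp only [neg_neg]
    rw [← h, hI, ← intervalIntegral.integral_const_mul]
    congr 1
    funext t
    rw [show u * (1 - t) = u + -u * t by ring, Real.exp_add]
    ring
  -- final assembly
  rw [hder, hrew1, hrew2]
  simp only [← hK]
  rw [hrefl]
  have hexp : Real.exp (-u) * Real.exp u = 1 := by
    rw [← Real.exp_add]; simp
  have hCC : C1 * b = a * C2 := by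
    have hg1 : Real.Gamma (b + (a + 1)) = Real.Gamma (a + (b + 1)) := by ring_nf
    have hg2 : Real.Gamma (b + 1) = b * Real.Gamma b := Real.Gamma_add_one hb.ne'
    have hg3 : Real.Gamma (a + 1) = a * Real.Gamma a := Real.Gamma_add_one ha.ne'
    rw [hC1, hC2, hg1, hg2, hg3]
    have hga : Real.Gamma a ≠ 0 := (Real.Gamma_pos_of_pos ha).ne'
    have hgb : Real.Gamma b ≠ 0 := (Real.Gamma_pos_of_pos hb).ne'
    field_simp
  calc a * (C1 * K) + u * (C1 * D) = C1 * (a * K + u * D) := by ring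
    _ = C1 * b * I := by rw [hsum]; ring
    _ = a * C2 * I := by rw [hCC]
    _ = a * Real.exp (-u) * (C2 * (Real.exp u * I)) := by
        rw [show a * Real.exp (-u) * (C2 * (Real.exp u * I))
          = a * C2 * I * (Real.exp (-u) * Real.exp u) by ring, hexp, mul_one]

/-- For all `γ, δ > 0` and all real `u`:
`γ β̂_{γ,δ+1}(u) + u β̂_{γ,δ+1}'(u) = γ e^{-u} β̂_{δ,γ+1}(-u)`, and
`δ β̂_{δ,γ+1}(u) + u β̂_{δ,γ+1}'(u) = δ e^{-u} β̂_{γ,δ+1}(-u)`. -/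
theorem statement5 (γ δ : ℝ) (hγ : 0 < γ) (hδ : 0 < δ) (u : ℝ) :
    γ * betaHat γ (δ + 1) u + u * deriv (betaHat γ (δ + 1)) u
      = γ * Real.exp (-u) * betaHat δ (γ + 1) (-u) ∧
    δ * betaHat δ (γ + 1) u + u * deriv (betaHat δ (γ + 1)) u
      = δ * Real.exp (-u) * betaHat γ (δ + 1) (-u) := by
  exact ⟨mainlem γ δ hγ hδ u, mainlem δ γ hδ hγ u⟩
end

section
/- Let γ, δ > 0 and define Φ(x,λ) := x^γ β̂_{γ,δ+1}(λx) and Ψ(x,λ) := x^δ β̂_{δ,γ+1}(λx) for x > 0, λ ∈ ℝ. Then for all x > 0 and λ ∈ ℝ: ∂Φ/∂x (x,λ) = e^{−λx} Ψ(x,−λ) · γ x^{γ−1} / x^δ, and ∂Ψ/∂x (x,λ) = e^{−λx} Φ(x,−λ) · δ x^{δ−1} / x^γ. (That is, the pair (Φ, Ψ) solves the coupled differential system φ(dx,λ) = e^{−λx} φ̌(x,−λ) H(dx)/Ȟ(x), φ̌(dx,λ) = e^{−λx} φ(x,−λ) Ȟ(dx)/H(x) for H(x) = x^γ, Ȟ(x)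 = x^δ.) -/
open Filter Set

section Aux
open MeasureTheory intervalIntegral

lemma contOneSub {p : ℝ} (hp : 0 ≤ p) : Continuous fun t : ℝ => (1 - t) ^ p :=
  (Real.continuous_rpow_const hp).comp (continuous_const.sub continuous_id)

lemma contPow {p : ℝ} (hp : 0 ≤ p) : Continuous fun t : ℝ => t ^ p :=
  Real.continuous_rpow_const hp

lemma intPow {p : ℝ} (hp : -1 < p) {g : ℝ → ℝ} (hg : Continuous g) :
    IntervalIntegrable (fun t => t ^ p * g t) MeasureTheory.volume 0 1 :=
  (intervalIntegrable_rpow' hp).mul_continuousOn hg.continuousOn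

lemma intOneSubPow {p : ℝ} (hp : -1 < p) {g : ℝ → ℝ} (hg : Continuous g) :
    IntervalIntegrable (fun t => (1 - t) ^ p * g t) MeasureTheory.volume 0 1 := by
  have h := (intervalIntegrable_rpow' hp (a := 0) (b := 1)).comp_sub_left 1
  simp only [sub_zero, sub_self] at h
  exact h.symm.mul_continuousOn hg.continuousOn

/-- FTC: integral of derivative of `exp(-(A t)) t^γ (1-t)^δ` over `[0,1]` vanishes. -/
lemma ftc_zero (γ δ A : ℝ) (hγ : 0 < γ) (hδ : 0 < δ) :
    ∫ t in (0:ℝ)..1, Real.exp (-(A * t)) *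
      (γ * (t ^ (γ - 1) * (1 - t) ^ δ) - A * (t ^ γ * (1 - t) ^ δ)
        - δ * (t ^ γ * (1 - t) ^ (δ - 1))) = 0 := by
  set g : ℝ → ℝ := fun t => Real.exp (-(A * t)) * (t ^ γ * (1 - t) ^ δ) with hgdef
  set g' : ℝ → ℝ := fun t => Real.exp (-(A * t)) *
      (γ * (t ^ (γ - 1) * (1 - t) ^ δ) - A * (t ^ γ * (1 - t) ^ δ)
        - δ * (t ^ γ * (1 - t) ^ (δ - 1))) with hg'def
  have hexp : Continuous fun t : ℝ => Real.exp (-(A * t)) :=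
    Real.continuous_exp.comp (continuous_const.mul continuous_id).neg
  have hcont : ContinuousOn g (Icc 0 1) :=
    (hexp.mul ((contPow hγ.le).mul (contOneSub hδ.le))).continuousOn
  have hderiv : ∀ t ∈ Ioo (0:ℝ) 1, HasDerivWithinAt g (g' t) (Ioi t) t := by
    intro t ht
    have h1 : HasDerivAt (fun t : ℝ => Real.exp (-(A * t))) (-A * Real.exp (-(A * t))) t := by
      have : HasDerivAt (fun t : ℝ => -(A * t)) (-A) t := by
        simpa using ((hasDerivAt_id t).const_mul (-A))
      simpa [mul_comm] using this.exp
    have h2 : HasDerivAt (fun t : ℝ => t ^ γ) (γ * t ^ (γ - 1)) t :=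
      Real.hasDerivAt_rpow_const (Or.inl ht.1.ne')
    have h3 : HasDerivAt (fun t : ℝ => (1 - t) ^ δ) (δ * (1 - t) ^ (δ - 1) * (-1)) t := by
      have hbase : HasDerivAt (fun t : ℝ => 1 - t) (-1) t := by
        simpa using (hasDerivAt_id t).const_sub 1
      exact (Real.hasDerivAt_rpow_const (p := δ)
        (Or.inl (by have := ht.2; intro h; linarith [sub_eq_zero.mp h] : (1:ℝ) - t ≠ 0))).comp t hbase
    have := h1.mul (h2.mul h3)
    refine HasDerivAt.hasDerivWithinAt ?_
    refine this.congr_deriv ?_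
    rw [hg'def]
    simp only [Pi.mul_apply]
    ring
  have hint : IntervalIntegrable g' volume 0 1 := by
    have heq : g' = fun t => t ^ (γ - 1) * (Real.exp (-(A * t)) * (γ * (1 - t) ^ δ))
        - Real.exp (-(A * t)) * (A * (t ^ γ * (1 - t) ^ δ))
        - (1 - t) ^ (δ - 1) * (Real.exp (-(A * t)) * (δ * t ^ γ)) := by
      funext t; simp only [hg'def]; ring
    rw [heq]
    exact ((intPow (by linarith) (hexp.mul (continuous_const.mul (contOneSub hδ.le)))).sub
      ((hexp.mul (continuous_const.mul ((contPow hγ.le).mul (contOneSub hδ.le)))).intervalIntegrable 0 1)).sub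
      (intOneSubPow (by linarith) (hexp.mul (continuous_const.mul (contPow hγ.le))))
  have := intervalIntegral.integral_eq_sub_of_hasDeriv_right_of_le zero_le_one hcont hderiv hint
  rw [this]
  simp [hgdef, Real.zero_rpow hγ.ne', Real.zero_rpow hδ.ne']

end Aux

set_option maxHeartbeats 1000000 in
open MeasureTheory intervalIntegral Metric in
open scoped Interval in
/-- One half of the coupled system. -/
lemma statement7_half (γ δ x lam : ℝ) (hγ : 0 < γ) (hδ : 0 < δ) (hx : 0 < x) :
    HasDerivAt (fun y : ℝ => y ^ γ * betaHat γ (δ + 1) (lam * y))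
      (γ * x ^ (γ - 1) * (Real.exp (-(lam * x)) * betaHat δ (γ + 1) (-lam * x))) x := by
  set C : ℝ := Real.Gamma (γ + (δ + 1)) / (Real.Gamma γ * Real.Gamma (δ + 1)) with hC
  set C' : ℝ := Real.Gamma (δ + (γ + 1)) / (Real.Gamma δ * Real.Gamma (γ + 1)) with hC'
  have hβ : ∀ t : ℝ, betaDens γ (δ + 1) t = C * t ^ (γ - 1) * (1 - t) ^ δ := by
    intro t; simp [betaDens, hC]
  have hβ' : ∀ t : ℝ, betaDens δ (γ + 1) t = C' * t ^ (δ - 1) * (1 - t) ^ γ := by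
    intro t; simp [betaDens, hC']
  -- Gamma recurrence: C * δ = C' * γ
  have hCC : C * δ = C' * γ := by
    rw [hC, hC', Real.Gamma_add_one hδ.ne', Real.Gamma_add_one hγ.ne',
      show γ + (δ + 1) = δ + (γ + 1) by ring]
    field_simp
  set F : ℝ → ℝ → ℝ := fun y t => y ^ γ * (Real.exp (-(lam * y) * t) * betaDens γ (δ + 1) t)
    with hF
  set F' : ℝ → ℝ → ℝ := fun y t =>
    (γ * y ^ (γ - 1) - lam * t * y ^ γ) * (Real.exp (-(lam * y) * t) * betaDens γ (δ + 1) t)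
    with hF'
  have hfun : (fun y : ℝ => y ^ γ * betaHat γ (δ + 1) (lam * y))
      = fun y : ℝ => ∫ t in (0:ℝ)..1, F y t := by
    funext y
    rw [betaHat, ← intervalIntegral.integral_const_mul]
  -- continuity facts
  have hβcontOn : ContinuousOn (betaDens γ (δ + 1)) (Ioc 0 1) := by
    intro t ht
    have h1 : ContinuousAt (fun t : ℝ => t ^ (γ - 1)) t :=
      Real.continuousAt_rpow_const t _ (Or.inl ht.1.ne')
    have h2 : ContinuousAt (betaDens γ (δ + 1)) t := by
      unfold betaDens
      exact (continuousAt_const.mul h1).mul ((contOneSub (by linarith : (0:ℝ) ≤ δ + 1 - 1)).continuousAt)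
    exact h2.continuousWithinAt
  have hβmeas : AEStronglyMeasurable (betaDens γ (δ + 1)) (volume.restrict (Ι (0:ℝ) 1)) := by
    rw [uIoc_of_le (by norm_num : (0:ℝ) ≤ 1)]
    exact hβcontOn.aestronglyMeasurable measurableSet_Ioc
  have hexpcont : ∀ y : ℝ, Continuous fun t : ℝ => Real.exp (-(lam * y) * t) := fun y =>
    Real.continuous_exp.comp (continuous_const.mul continuous_id)
  -- integrability of betaDens-type products
  have hβint : ∀ g : ℝ → ℝ, Continuous g →
      IntervalIntegrable (fun t => betaDens γ (δ + 1) t * g t) volume 0 1 := by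
    intro g hg
    have : (fun t => betaDens γ (δ + 1) t * g t)
        = fun t => t ^ (γ - 1) * (C * ((1 - t) ^ δ * g t)) := by
      funext t; rw [hβ t]; ring
    rw [this]
    exact intPow (by linarith) (continuous_const.mul ((contOneSub hδ.le).mul hg))
  have hF_meas : ∀ᶠ y in nhds x, AEStronglyMeasurable (F y) (volume.restrict (Ι (0:ℝ) 1)) := by
    filter_upwards with y
    exact (aestronglyMeasurable_const.mul
      (((hexpcont y).aestronglyMeasurable).restrict.mul hβmeas))
  have hF_int : IntervalIntegrable (F x) volume 0 1 := by
    have : F x = fun t => betaDens γ (δ + 1) t * (x ^ γ * Real.exp (-(lam * x) * t)) := by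
      funext t; simp only [hF]; ring
    rw [this]
    exact hβint _ (continuous_const.mul (hexpcont x))
  have hF'_meas : AEStronglyMeasurable (F' x) (volume.restrict (Ι (0:ℝ) 1)) := by
    have hc : Continuous fun t : ℝ => γ * x ^ (γ - 1) - lam * t * x ^ γ := by continuity
    exact (hc.aestronglyMeasurable.restrict.mul
      (((hexpcont x).aestronglyMeasurable).restrict.mul hβmeas))
  set B : ℝ := (γ * ((x + x) ^ γ / (x / 2)) + |lam| * (x + x) ^ γ) * Real.exp (|lam| * (x + x))
    with hB
  have h_bound : ∀ᵐ t ∂(volume : Measure ℝ), t ∈ Ι (0:ℝ) 1 →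
      ∀ y ∈ ball x (x / 2), ‖F' y t‖ ≤ B * |betaDens γ (δ + 1) t| := by
    filter_upwards with t ht y hy
    rw [uIoc_of_le (by norm_num : (0:ℝ) ≤ 1)] at ht
    have hylb : x / 2 < y := by
      have := abs_lt.mp (mem_ball_iff_norm.mp hy); linarith [this.1]
    have hyub : y ≤ x + x := by
      have := abs_lt.mp (mem_ball_iff_norm.mp hy); linarith [this.2]
    have hy0 : 0 < y := lt_trans (by linarith) hylb
    have ht0 : 0 < t := ht.1
    have ht1 : t ≤ 1 := ht.2
    have hxx : (0:ℝ) < x + x := by linarith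
    have hyγ : y ^ γ ≤ (x + x) ^ γ := Real.rpow_le_rpow hy0.le hyub hγ.le
    have hyγ1 : y ^ (γ - 1) ≤ (x + x) ^ γ / (x / 2) := by
      rw [Real.rpow_sub_one hy0.ne']
      exact div_le_div₀ (Real.rpow_nonneg hxx.le _) hyγ (by linarith) hylb.le
    have hexp_le : Real.exp (-(lam * y) * t) ≤ Real.exp (|lam| * (x + x)) := by
      apply Real.exp_le_exp.mpr
      have h1 : -(lam * y) * t ≤ |lam * y * t| := by
        rw [show -(lam * y) * t = -(lam * y * t) by ring]
        exact neg_le_abs _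
      refine h1.trans ?_
      rw [abs_mul, abs_mul, abs_of_pos hy0, abs_of_pos ht0]
      calc |lam| * y * t ≤ |lam| * y * 1 := by
            exact mul_le_mul_of_nonneg_left ht1 (by positivity)
        _ ≤ |lam| * (x + x) := by
            rw [mul_one]; exact mul_le_mul_of_nonneg_left hyub (abs_nonneg _)
    have hmain : |γ * y ^ (γ - 1) - lam * t * y ^ γ|
        ≤ γ * ((x + x) ^ γ / (x / 2)) + |lam| * (x + x) ^ γ := by
      refine (abs_sub _ _).trans ?_
      gcongr
      · rw [abs_of_nonneg (by positivity)]
        exact mul_le_mul_of_nonneg_left hyγ1 hγ.le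
      · rw [abs_mul, abs_mul, abs_of_pos ht0,
          abs_of_nonneg (Real.rpow_nonneg hy0.le _)]
        calc |lam| * t * y ^ γ ≤ |lam| * 1 * (x + x) ^ γ := by
              gcongr
          _ = |lam| * (x + x) ^ γ := by ring
    simp only [hF', Real.norm_eq_abs, abs_mul, Real.abs_exp]
    rw [hB]
    calc |γ * y ^ (γ - 1) - lam * t * y ^ γ| * (Real.exp (-(lam * y) * t) * |betaDens γ (δ + 1) t|)
        ≤ (γ * ((x + x) ^ γ / (x / 2)) + |lam| * (x + x) ^ γ)
          * (Real.exp (|lam| * (x + x)) * |betaDens γ (δ + 1) t|) := by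
          have hexp0 : (0:ℝ) ≤ Real.exp (-(lam * y) * t) := (Real.exp_pos _).le
          gcongr
      _ = (γ * ((x + x) ^ γ / (x / 2)) + |lam| * (x + x) ^ γ) * Real.exp (|lam| * (x + x))
          * |betaDens γ (δ + 1) t| := by ring
  have hbound_int : IntervalIntegrable (fun t => B * |betaDens γ (δ + 1) t|) volume 0 1 := by
    have h1 : IntervalIntegrable (fun t => betaDens γ (δ + 1) t * 1) volume 0 1 :=
      hβint 1 continuous_const
    simp only [mul_one] at h1
    exact (h1.abs).const_mul B
  have h_diff : ∀ᵐ t ∂(volume : Measure ℝ), t ∈ Ι (0:ℝ) 1 →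
      ∀ y ∈ ball x (x / 2), HasDerivAt (fun y => F y t) (F' y t) y := by
    filter_upwards with t ht y hy
    have hylb : x / 2 < y := by
      have := abs_lt.mp (mem_ball_iff_norm.mp hy); linarith [this.1]
    have hy0 : 0 < y := lt_trans (by linarith) hylb
    have h2 : HasDerivAt (fun y : ℝ => y ^ γ) (γ * y ^ (γ - 1)) y :=
      Real.hasDerivAt_rpow_const (Or.inl hy0.ne')
    have hexp : HasDerivAt (fun y : ℝ => Real.exp (-(lam * y) * t))
        (-(lam * t) * Real.exp (-(lam * y) * t)) y := by
      have hfun2 : (fun y : ℝ => -(lam * y) * t) = fun y : ℝ => -(lam * t) * y := by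
        funext y; ring
      have : HasDerivAt (fun y : ℝ => -(lam * y) * t) (-(lam * t)) y := by
        rw [hfun2]; simpa using (hasDerivAt_id y).const_mul (-(lam * t))
      simpa [mul_comm] using this.exp
    have := (h2.mul hexp).mul_const (betaDens γ (δ + 1) t)
    have hfe : (fun y : ℝ => F y t)
        = fun y : ℝ => y ^ γ * Real.exp (-(lam * y) * t) * betaDens γ (δ + 1) t := by
      funext y; simp only [hF]; ring
    rw [hfe]
    refine this.congr_deriv ?_
    rw [hF']
    ring
  obtain ⟨hF'x_int, hderiv⟩ := intervalIntegral.hasDerivAt_integral_of_dominated_loc_of_deriv_le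
    (F := F) (F' := F') (μ := volume) (a := 0) (b := 1) (bound := fun t => B * |betaDens γ (δ + 1) t|)
    (ball_mem_nhds x (half_pos hx)) hF_meas hF_int hF'_meas h_bound hbound_int h_diff
  rw [hfun]
  -- identify the derivative value
  have key : (∫ t in (0:ℝ)..1, F' x t)
      = γ * x ^ (γ - 1) * (Real.exp (-(lam * x)) * betaHat δ (γ + 1) (-lam * x)) := by
    set f : ℝ → ℝ := fun s => Real.exp (- -(lam * x) * s) * betaDens δ (γ + 1) s with hf
    have hrefl : betaHat δ (γ + 1) (-lam * x) = ∫ t in (0:ℝ)..1, f (1 - t) := by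
      rw [betaHat]
      rw [intervalIntegral.integral_comp_sub_left f 1]
      norm_num [hf]
    set G : ℝ → ℝ := fun t => γ * x ^ (γ - 1) * (Real.exp (-(lam * x)) * f (1 - t)) with hG
    have hDG : γ * x ^ (γ - 1) * (Real.exp (-(lam * x)) * betaHat δ (γ + 1) (-lam * x))
        = ∫ t in (0:ℝ)..1, G t := by
      rw [hrefl, ← intervalIntegral.integral_const_mul, ← intervalIntegral.integral_const_mul]
    rw [hDG]
    rw [← sub_eq_zero]
    have hG_int : IntervalIntegrable G volume 0 1 := by
      have hGeq : G = fun t => (1 - t) ^ (δ - 1) * ((γ * x ^ (γ - 1) * Real.exp (-(lam * x)) * C')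
          * (Real.exp (- -(lam * x) * (1 - t)) * t ^ γ)) := by
        funext t
        simp only [hG, hf, hβ' (1 - t), sub_sub_cancel]
        ring
      rw [hGeq]
      exact intOneSubPow (by linarith)
        (continuous_const.mul ((Real.continuous_exp.comp (by continuity)).mul (contPow hγ.le)))
    rw [← intervalIntegral.integral_sub hF'x_int hG_int]
    have heq : ∀ t ∈ Set.uIcc (0:ℝ) 1, F' x t - G t
        = (C * x ^ (γ - 1)) * (Real.exp (-(lam * x * t)) *
          (γ * (t ^ (γ - 1) * (1 - t) ^ δ) - (lam * x) * (t ^ γ * (1 - t) ^ δ)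
            - δ * (t ^ γ * (1 - t) ^ (δ - 1)))) := by
      intro t ht
      rw [Set.uIcc_of_le (by norm_num : (0:ℝ) ≤ 1)] at ht
      have htγ : t * t ^ (γ - 1) = t ^ γ := by
        rcases eq_or_lt_of_le ht.1 with h | h
        · rw [← h, Real.zero_rpow hγ.ne', zero_mul]
        · rw [Real.rpow_sub_one h.ne']; field_simp
      have hxγ : x * x ^ (γ - 1) = x ^ γ := by
        rw [Real.rpow_sub_one hx.ne']; field_simp
      have hE : Real.exp (-(lam * x)) * Real.exp (- -(lam * x) * (1 - t))
          = Real.exp (-(lam * x * t)) := by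
        rw [← Real.exp_add]; congr 1; ring
      have hC'2 : C' = C * δ / γ := by
        rw [eq_div_iff hγ.ne']; linarith [hCC]
      simp only [hF', hG, hf, hβ t, hβ' (1 - t), sub_sub_cancel]
      rw [show -(lam * x) * t = -(lam * x * t) by ring, ← htγ, ← hxγ, ← hE, hC'2]
      field_simp
    rw [intervalIntegral.integral_congr heq, intervalIntegral.integral_const_mul,
      ftc_zero γ δ (lam * x) hγ hδ, mul_zero]
  rw [← key]
  exact hderiv

/-- With `Φ(x,λ) = x^γ β̂_{γ,δ+1}(λx)` and `Ψ(x,λ) = x^δ β̂_{δ,γ+1}(λx)`, for all `x > 0`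
and real `λ`:
`∂Φ/∂x (x,λ) = e^{-λx} Ψ(x,-λ) · γ x^{γ-1} / x^δ` and
`∂Ψ/∂x (x,λ) = e^{-λx} Φ(x,-λ) · δ x^{δ-1} / x^γ`;
i.e. the pair `(Φ,Ψ)` solves the coupled fluctuation system for `H(x) = x^γ`, `Ȟ(x) = x^δ`. -/
theorem statement7 (γ δ : ℝ) (hγ : 0 < γ) (hδ : 0 < δ) (x lam : ℝ) (hx : 0 < x) :
    HasDerivAt (fun y : ℝ => y ^ γ * betaHat γ (δ + 1) (lam * y))
      (Real.exp (-(lam * x)) * (x ^ δ * betaHat δ (γ + 1) (-lam * x))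
        * (γ * x ^ (γ - 1) / x ^ δ)) x ∧
    HasDerivAt (fun y : ℝ => y ^ δ * betaHat δ (γ + 1) (lam * y))
      (Real.exp (-(lam * x)) * (x ^ γ * betaHat γ (δ + 1) (-lam * x))
        * (δ * x ^ (δ - 1) / x ^ γ)) x := by
  have hδ0 : (x:ℝ) ^ δ ≠ 0 := (Real.rpow_pos_of_pos hx δ).ne'
  have hγ0 : (x:ℝ) ^ γ ≠ 0 := (Real.rpow_pos_of_pos hx γ).ne'
  constructor
  · have h := statement7_half γ δ x lam hγ hδ hx
    convert h using 1
    field_simp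
  · have h := statement7_half δ γ x lam hδ hγ hx
    convert h using 1
    field_simp
end

section
/- For all γ, δ > 0 and every λ > 0, lim_{x→∞} x^γ β̂_{γ,δ+1}(λx) = (Γ(γ+δ+1)/Γ(δ+1)) · λ^{−γ}. -/
open Filter Set MeasureTheory

/-- The rescaled integral appearing after the substitution `u = λ x t`. -/
noncomputable def Fint (γ δ lam x : ℝ) : ℝ :=
  ∫ u in (0:ℝ)..(lam * x), Real.exp (-u) * u ^ (γ - 1) * (1 - u / (lam * x)) ^ δ

lemma key_identity (γ δ : ℝ) (hγ : 0 < γ) (lam : ℝ) (hlam : 0 < lam)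
    {x : ℝ} (hx : 0 < x) :
    x ^ γ * betaHat γ (δ + 1) (lam * x)
      = (Real.Gamma (γ + (δ + 1)) / (Real.Gamma γ * Real.Gamma (δ + 1))) * lam ^ (-γ)
          * Fint γ δ lam x := by
  set C := Real.Gamma (γ + (δ + 1)) / (Real.Gamma γ * Real.Gamma (δ + 1)) with hC
  set c := lam * x with hc
  set h : ℝ → ℝ := fun u => Real.exp (-u) * (C * (u / c) ^ (γ - 1) * (1 - u / c) ^ δ) with hh
  have hc0 : 0 < c := mul_pos hlam hx
  have h1 : betaHat γ (δ + 1) c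
      = ∫ t in (0:ℝ)..1, h (c * t) := by
    unfold betaHat betaDens
    refine intervalIntegral.integral_congr fun t _ => ?_
    simp only [hh, mul_div_cancel_left₀ _ hc0.ne', add_sub_cancel_right]
    rw [hC]
    ring
  rw [h1, intervalIntegral.integral_comp_mul_left _ hc0.ne']
  rw [mul_zero, mul_one]
  have h2 : (∫ u in (0:ℝ)..c, h u)
      = (C / c ^ (γ - 1)) * ∫ u in (0:ℝ)..c,
          Real.exp (-u) * u ^ (γ - 1) * (1 - u / c) ^ δ := by
    rw [← intervalIntegral.integral_const_mul]
    refine intervalIntegral.integral_congr fun u hu => ?_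
    rw [uIcc_of_le hc0.le] at hu
    rw [hh]
    simp only [Real.div_rpow hu.1 hc0.le]
    ring
  rw [h2]
  have hFint : Fint γ δ lam x
      = ∫ u in (0:ℝ)..c, Real.exp (-u) * u ^ (γ - 1) * (1 - u / c) ^ δ := rfl
  rw [smul_eq_mul, ← hFint]
  have hscal : x ^ γ * (c⁻¹ * (C / c ^ (γ - 1))) = C * lam ^ (-γ) := by
    have hcg : c * c ^ (γ - 1) = c ^ γ := by
      nth_rewrite 1 [← Real.rpow_one c]
      rw [← Real.rpow_add hc0]
      norm_num
    have hcg2 : c ^ γ = lam ^ γ * x ^ γ := Real.mul_rpow hlam.le hx.le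
    have hxne : x ^ γ ≠ 0 := (Real.rpow_pos_of_pos hx γ).ne'
    have hcne : c ^ (γ - 1) ≠ 0 := (Real.rpow_pos_of_pos hc0 _).ne'
    have hlne : lam ^ γ ≠ 0 := (Real.rpow_pos_of_pos hlam γ).ne'
    rw [Real.rpow_neg hlam.le]
    field_simp
    linear_combination (-C) * hcg + (-C) * hcg2
  calc x ^ γ * (c⁻¹ * ((C / c ^ (γ - 1)) * Fint γ δ lam x))
      = x ^ γ * (c⁻¹ * (C / c ^ (γ - 1))) * Fint γ δ lam x := by ring
    _ = C * lam ^ (-γ) * Fint γ δ lam x := by rw [hscal]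

lemma Fint_tendsto (γ δ : ℝ) (hγ : 0 < γ) (hδ : 0 < δ) (lam : ℝ) (hlam : 0 < lam) :
    Tendsto (fun x : ℝ => Fint γ δ lam x) atTop (nhds (Real.Gamma γ)) := by
  set g : ℝ → ℝ → ℝ := fun x u => Real.exp (-u) * u ^ (γ - 1) * (1 - u / (lam * x)) ^ δ
    with hg
  set F : ℝ → ℝ → ℝ := fun x => (Ioc (0:ℝ) (lam * x)).indicator (g x) with hF
  have key : Tendsto (fun x : ℝ => ∫ u in Ioi (0:ℝ), F x u) atTop
      (nhds (∫ u in Ioi (0:ℝ), Real.exp (-u) * u ^ (γ - 1))) := by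
    refine tendsto_integral_filter_of_dominated_convergence
      (fun u => Real.exp (-u) * u ^ (γ - 1)) ?_ ?_ ?_ ?_
    · filter_upwards with x
      refine (Measurable.indicator ?_ measurableSet_Ioc).aestronglyMeasurable
      fun_prop
    · filter_upwards [eventually_ge_atTop (1:ℝ)] with x hx1
      filter_upwards [ae_restrict_mem measurableSet_Ioi] with u hu
      rcases em (u ∈ Ioc (0:ℝ) (lam * x)) with h | h
      · rw [hF]
        simp only [indicator_of_mem h]
        have h1 : (0:ℝ) ≤ 1 - u / (lam * x) := by
          have hcx : 0 < lam * x := mul_pos hlam (lt_of_lt_of_le one_pos hx1)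
          rw [sub_nonneg, div_le_one hcx]
          exact h.2
        have h2 : (1 - u / (lam * x)) ^ δ ≤ 1 := by
          apply Real.rpow_le_one h1 _ hδ.le
          have : 0 < u / (lam * x) :=
            div_pos h.1 (mul_pos hlam (lt_of_lt_of_le one_pos hx1))
          linarith
        have hnn : 0 ≤ Real.exp (-u) * u ^ (γ - 1) :=
          mul_nonneg (Real.exp_pos _).le (Real.rpow_nonneg h.1.le _)
        rw [hg, Real.norm_eq_abs, abs_of_nonneg
          (mul_nonneg hnn (Real.rpow_nonneg h1 _))]
        calc Real.exp (-u) * u ^ (γ - 1) * (1 - u / (lam * x)) ^ δ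
            ≤ Real.exp (-u) * u ^ (γ - 1) * 1 := by
              exact mul_le_mul_of_nonneg_left h2 hnn
          _ = Real.exp (-u) * u ^ (γ - 1) := mul_one _
      · rw [hF]
        simp only [indicator_of_notMem h, norm_zero]
        exact mul_nonneg (Real.exp_pos _).le (Real.rpow_nonneg (le_of_lt hu) _)
    · exact Real.GammaIntegral_convergent hγ
    · filter_upwards [ae_restrict_mem measurableSet_Ioi] with u hu
      have hu0 : (0:ℝ) < u := hu
      have hev : ∀ᶠ x : ℝ in atTop, F x u = g x u := by
        filter_upwards [eventually_ge_atTop (u / lam)] with x hx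
        have : u ≤ lam * x := by
          rw [← div_le_iff₀' hlam]; exact hx
        exact Set.indicator_of_mem (show u ∈ Ioc (0:ℝ) (lam * x) from ⟨hu0, this⟩) (g x)
      refine Tendsto.congr' (hev.mono fun x h => h.symm) ?_
      have h0 : Tendsto (fun x : ℝ => u / (lam * x)) atTop (nhds 0) := by
        have : (fun x : ℝ => u / (lam * x)) = fun x => (u / lam) * x⁻¹ := by
          funext x; rw [div_mul_eq_div_div]; ring
        rw [this]
        simpa using tendsto_inv_atTop_zero.const_mul (u / lam)
      have h1 : Tendsto (fun x : ℝ => (1 - u / (lam * x)) ^ δ) atTop (nhds 1) := by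
        have hsub : Tendsto (fun x : ℝ => 1 - u / (lam * x)) atTop (nhds 1) := by
          simpa using (tendsto_const_nhds (x := (1:ℝ))).sub h0
        have hc : ContinuousAt (fun y : ℝ => y ^ δ) 1 :=
          Real.continuousAt_rpow_const 1 δ (Or.inl one_ne_zero)
        have := hc.tendsto.comp hsub
        simpa [Real.one_rpow, Function.comp_def] using this
      have := (tendsto_const_nhds (x := Real.exp (-u) * u ^ (γ - 1))).mul h1
      simpa [hg] using this
  rw [Real.Gamma_eq_integral hγ]
  refine Tendsto.congr' ?_ key
  filter_upwards [eventually_gt_atTop (0:ℝ)] with x hx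
  have hc0 : 0 < lam * x := mul_pos hlam hx
  rw [hF, integral_indicator measurableSet_Ioc,
    Measure.restrict_restrict measurableSet_Ioc,
    inter_eq_left.mpr Ioc_subset_Ioi_self]
  rw [Fint, intervalIntegral.integral_of_le hc0.le]

/-- For all `γ, δ > 0` and every `λ > 0`,
`x^γ β̂_{γ,δ+1}(λx) → (Γ(γ+δ+1)/Γ(δ+1)) λ^{-γ}` as `x → ∞`. -/
theorem statement8 (γ δ : ℝ) (hγ : 0 < γ) (hδ : 0 < δ) (lam : ℝ) (hlam : 0 < lam) :
    Tendsto (fun x : ℝ => x ^ γ * betaHat γ (δ + 1) (lam * x)) atTop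
      (nhds (Real.Gamma (γ + δ + 1) / Real.Gamma (δ + 1) * lam ^ (-γ))) := by
  have hlim := (Fint_tendsto γ δ hγ hδ lam hlam).const_mul
    ((Real.Gamma (γ + (δ + 1)) / (Real.Gamma γ * Real.Gamma (δ + 1))) * lam ^ (-γ))
  have hval : (Real.Gamma (γ + (δ + 1)) / (Real.Gamma γ * Real.Gamma (δ + 1))) * lam ^ (-γ)
      * Real.Gamma γ = Real.Gamma (γ + δ + 1) / Real.Gamma (δ + 1) * lam ^ (-γ) := by
    have hγne : Real.Gamma γ ≠ 0 := (Real.Gamma_pos_of_pos hγ).ne'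
    have hδne : Real.Gamma (δ + 1) ≠ 0 := (Real.Gamma_pos_of_pos (by linarith)).ne'
    have : γ + (δ + 1) = γ + δ + 1 := by ring
    rw [this]; field_simp
  rw [← hval]
  refine Tendsto.congr' ?_ hlim
  filter_upwards [eventually_gt_atTop (0:ℝ)] with x hx
  exact (key_identity γ δ hγ lam hlam hx).symm
end

section
/- For all γ, δ > 0, all x ≥ 0 and all λ ∈ ℝ: ∫_0^x γ m^{γ−1} β̂_{γ+1,δ}(λm) dm = x^γ β̂_{γ,δ+1}(λx). -/
open Filter Set

open MeasureTheory intervalIntegral in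
lemma fInt (γ μ : ℝ) (hγ : 0 < γ) (a b : ℝ) :
    IntervalIntegrable (fun u => γ * u ^ (γ - 1) * Real.exp (-μ * u)) volume a b :=
  ((intervalIntegrable_rpow' (by linarith)).const_mul γ).mul_continuousOn
    (Continuous.continuousOn (by continuity))

open MeasureTheory intervalIntegral in
lemma oneSubInt (δ : ℝ) (hδ : 0 < δ) :
    IntervalIntegrable (fun t : ℝ => (1 - t) ^ (δ - 1)) volume 0 1 := by
  have h := (intervalIntegrable_rpow' (a := 0) (b := 1)
    (show (-1:ℝ) < δ - 1 by linarith)).comp_sub_left 1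
  simpa using h.symm

open MeasureTheory intervalIntegral in
lemma key (γ δ : ℝ) (hγ : 0 < γ) (hδ : 0 < δ) (μ : ℝ) :
    ∫ s in (0:ℝ)..1, γ * s ^ (γ - 1) * betaHat (γ + 1) δ (μ * s)
      = betaHat γ (δ + 1) μ := by
  set C : ℝ := Real.Gamma (γ + 1 + δ) / (Real.Gamma (γ + 1) * Real.Gamma δ) with hC
  set f : ℝ → ℝ := fun u => γ * u ^ (γ - 1) * Real.exp (-μ * u) with hfdef
  set Φ : ℝ → ℝ := fun t => ∫ u in (0:ℝ)..t, f u with hΦdef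
  have hfint : ∀ a b : ℝ, IntervalIntegrable f volume a b := fun a b => fInt γ μ hγ a b
  set F : ℝ → ℝ → ℝ := fun s t =>
    γ * s ^ (γ - 1) * (Real.exp (-(μ * s) * t) * betaDens (γ + 1) δ t) with hFdef
  -- Fubini integrability
  have hrm : ∀ p : ℝ, Measurable fun x : ℝ => x ^ p := fun p =>
    measurable_of_continuousOn_compl_singleton 0 fun x hx =>
      (Real.continuousAt_rpow_const x p (Or.inl hx)).continuousWithinAt
  have hKpos : 0 < Real.Gamma (γ + 1 + δ) / (Real.Gamma (γ + 1) * Real.Gamma δ) :=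
    div_pos (Real.Gamma_pos_of_pos (by linarith))
      (mul_pos (Real.Gamma_pos_of_pos (by linarith)) (Real.Gamma_pos_of_pos hδ))
  have fub : Integrable (Function.uncurry F)
      ((volume.restrict (Ioc (0:ℝ) 1)).prod (volume.restrict (Ioc (0:ℝ) 1))) := by
    have hFmeas : Measurable (Function.uncurry F) := by
      simp only [hFdef, betaDens, Function.uncurry]
      exact (measurable_const.mul ((hrm (γ - 1)).comp measurable_fst)).mul
        ((((measurable_fst.const_mul μ).neg.mul measurable_snd).exp).mul
          ((measurable_const.mul ((hrm (γ + 1 - 1)).comp measurable_snd)).mul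
            ((hrm (δ - 1)).comp (measurable_const.sub measurable_snd))))
    have hg : Integrable (fun s : ℝ => s ^ (γ - 1)) (volume.restrict (Ioc (0:ℝ) 1)) :=
      (intervalIntegrable_rpow' (by linarith : (-1:ℝ) < γ - 1)).1
    have hh : Integrable (fun t : ℝ => (1 - t) ^ (δ - 1)) (volume.restrict (Ioc (0:ℝ) 1)) :=
      (oneSubInt δ hδ).1
    have hG : Integrable (fun p : ℝ × ℝ =>
        (γ * Real.exp |μ| * (Real.Gamma (γ + 1 + δ) / (Real.Gamma (γ + 1) * Real.Gamma δ)))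
          * (p.1 ^ (γ - 1) * (1 - p.2) ^ (δ - 1)))
        ((volume.restrict (Ioc (0:ℝ) 1)).prod (volume.restrict (Ioc (0:ℝ) 1))) :=
      (hg.mul_prod hh).const_mul _
    refine hG.mono' hFmeas.aestronglyMeasurable ?_
    have hae : ∀ᵐ p ∂((volume.restrict (Ioc (0:ℝ) 1)).prod (volume.restrict (Ioc (0:ℝ) 1))),
        p ∈ Ioc (0:ℝ) 1 ×ˢ Ioc (0:ℝ) 1 := by
      rw [Measure.prod_restrict]
      exact ae_restrict_mem (measurableSet_Ioc.prod measurableSet_Ioc)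
    filter_upwards [hae] with p hp
    obtain ⟨hp1, hp2⟩ := hp
    have hs0 : 0 < p.1 := hp1.1
    have hs1 : p.1 ≤ 1 := hp1.2
    have ht0 : 0 < p.2 := hp2.1
    have ht1 : p.2 ≤ 1 := hp2.2
    have h1t : 0 ≤ 1 - p.2 := by linarith
    have hexp : Real.exp (-(μ * p.1) * p.2) ≤ Real.exp |μ| := by
      apply Real.exp_le_exp.2
      have h2 : |-(μ * p.1) * p.2| ≤ |μ| := by
        rw [abs_mul, abs_neg, abs_mul]
        calc |μ| * |p.1| * |p.2| ≤ |μ| * 1 * 1 := by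
              gcongr
              · rw [abs_of_pos hs0]; exact hs1
              · rw [abs_of_pos ht0]; exact ht1
          _ = |μ| := by ring
      linarith [le_abs_self (-(μ * p.1) * p.2)]
    have htpow : p.2 ^ (γ + 1 - 1) ≤ 1 := Real.rpow_le_one ht0.le ht1 (by linarith)
    have habs : ‖Function.uncurry F p‖
        = γ * p.1 ^ (γ - 1) * (Real.exp (-(μ * p.1) * p.2)
          * ((Real.Gamma (γ + 1 + δ) / (Real.Gamma (γ + 1) * Real.Gamma δ))
            * p.2 ^ (γ + 1 - 1) * (1 - p.2) ^ (δ - 1))) := by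
      simp only [hFdef, betaDens, Function.uncurry, Real.norm_eq_abs]
      apply abs_of_nonneg
      have := Real.rpow_nonneg hs0.le (γ - 1)
      have := Real.rpow_nonneg ht0.le (γ + 1 - 1)
      have := Real.rpow_nonneg h1t (δ - 1)
      have := Real.exp_pos (-(μ * p.1) * p.2)
      have := hKpos
      positivity
    rw [habs]
    have hrs := Real.rpow_nonneg hs0.le (γ - 1)
    have hrt := Real.rpow_nonneg ht0.le (γ + 1 - 1)
    have hr1t := Real.rpow_nonneg h1t (δ - 1)
    calc γ * p.1 ^ (γ - 1) * (Real.exp (-(μ * p.1) * p.2)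
          * ((Real.Gamma (γ + 1 + δ) / (Real.Gamma (γ + 1) * Real.Gamma δ))
            * p.2 ^ (γ + 1 - 1) * (1 - p.2) ^ (δ - 1)))
        ≤ γ * p.1 ^ (γ - 1) * (Real.exp |μ|
          * ((Real.Gamma (γ + 1 + δ) / (Real.Gamma (γ + 1) * Real.Gamma δ))
            * 1 * (1 - p.2) ^ (δ - 1))) := by gcongr
      _ = (γ * Real.exp |μ| * (Real.Gamma (γ + 1 + δ) / (Real.Gamma (γ + 1) * Real.Gamma δ)))
          * (p.1 ^ (γ - 1) * (1 - p.2) ^ (δ - 1)) := by ring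
  -- Step 1: rewrite LHS as iterated set integral
  have eq1 : (∫ s in (0:ℝ)..1, γ * s ^ (γ - 1) * betaHat (γ + 1) δ (μ * s))
      = ∫ s in Ioc (0:ℝ) 1, ∫ t in Ioc (0:ℝ) 1, F s t := by
    rw [intervalIntegral.integral_of_le zero_le_one]
    apply setIntegral_congr_fun measurableSet_Ioc
    intro s _
    simp only [betaHat, hFdef, intervalIntegral.integral_of_le zero_le_one,
      ← MeasureTheory.integral_const_mul]
  -- Step 2: Fubini
  have eq2 : (∫ s in Ioc (0:ℝ) 1, ∫ t in Ioc (0:ℝ) 1, F s t)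
      = ∫ t in Ioc (0:ℝ) 1, ∫ s in Ioc (0:ℝ) 1, F s t := integral_integral_swap fub
  -- Step 3: inner integral via substitution u = t * s
  have eq3 : (∫ t in Ioc (0:ℝ) 1, ∫ s in Ioc (0:ℝ) 1, F s t)
      = ∫ t in Ioc (0:ℝ) 1, (C * (1 - t) ^ (δ - 1)) * Φ t := by
    apply setIntegral_congr_fun measurableSet_Ioc
    intro t ht
    have ht0 : 0 < t := ht.1
    simp only
    rw [← intervalIntegral.integral_of_le zero_le_one]
    have hinner : ∀ s ∈ Set.uIcc (0:ℝ) 1,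
        F s t = (C * (1 - t) ^ (δ - 1)) * (t * f (t * s)) := by
      intro s hs
      rw [Set.uIcc_of_le (by norm_num)] at hs
      simp only [hFdef, betaDens, hfdef]
      rw [show γ + 1 + δ = γ + 1 + δ by ring]
      rw [show γ + 1 - 1 = γ by ring]
      have h1 : (t * s) ^ (γ - 1) = t ^ (γ - 1) * s ^ (γ - 1) := Real.mul_rpow ht0.le hs.1
      have h2 : t ^ γ = t * t ^ (γ - 1) := by
        have h3 := Real.rpow_add ht0 1 (γ - 1)
        rw [Real.rpow_one] at h3
        rw [show (1:ℝ) + (γ - 1) = γ by ring] at h3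
        exact h3
      rw [h1, h2, show -(μ * s) * t = -μ * (t * s) by ring]
      ring
    rw [intervalIntegral.integral_congr hinner, intervalIntegral.integral_const_mul]
    congr 1
    rw [intervalIntegral.integral_const_mul,
      intervalIntegral.integral_comp_mul_left f ht0.ne']
    simp only [mul_zero, mul_one, smul_eq_mul]
    rw [← mul_assoc, mul_inv_cancel₀ ht0.ne', one_mul]
  -- Step 4: pull constant, go back to interval integral
  have eq4 : (∫ t in Ioc (0:ℝ) 1, (C * (1 - t) ^ (δ - 1)) * Φ t)
      = C * ∫ t in (0:ℝ)..1, Φ t * (1 - t) ^ (δ - 1) := by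
    rw [intervalIntegral.integral_of_le zero_le_one, ← MeasureTheory.integral_const_mul]
    apply setIntegral_congr_fun measurableSet_Ioc
    intro t _
    ring
  -- Step 5: integration by parts
  have eq5 : (∫ t in (0:ℝ)..1, Φ t * (1 - t) ^ (δ - 1))
      = ∫ t in (0:ℝ)..1, f t * ((1 - t) ^ δ / δ) := by
    have hΦcont : ContinuousOn Φ (Set.uIcc (0:ℝ) 1) := by
      apply intervalIntegral.continuousOn_primitive_interval
      rw [Set.uIcc_of_le zero_le_one]
      exact (hfint 0 1).1.congr_set_ae Ioc_ae_eq_Icc.symm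
    have hvcont : ContinuousOn (fun t : ℝ => -((1 - t) ^ δ / δ)) (Set.uIcc (0:ℝ) 1) := by
      apply Continuous.continuousOn
      have : Continuous fun t : ℝ => (1 - t) ^ δ :=
        (Real.continuous_rpow_const hδ.le).comp (continuous_const.sub continuous_id)
      exact (this.div_const δ).neg
    have hΦderiv : ∀ t ∈ Set.Ioo (min (0:ℝ) 1) (max (0:ℝ) 1), HasDerivAt Φ (f t) t := by
      intro t ht
      rw [min_eq_left zero_le_one, max_eq_right zero_le_one] at ht
      have hcont : ContinuousAt f t := by
        have : ContinuousAt (fun u : ℝ => u ^ (γ - 1)) t :=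
          Real.continuousAt_rpow_const t (γ - 1) (Or.inl ht.1.ne')
        exact (continuousAt_const.mul this).mul (by fun_prop)
      exact intervalIntegral.integral_hasDerivAt_right (hfint 0 t)
        (((measurable_const.mul (hrm (γ - 1))).mul
          ((measurable_id.const_mul (-μ)).exp)).aestronglyMeasurable.stronglyMeasurableAtFilter)
        hcont
    have hvderiv : ∀ t ∈ Set.Ioo (min (0:ℝ) 1) (max (0:ℝ) 1),
        HasDerivAt (fun t : ℝ => -((1 - t) ^ δ / δ)) ((1 - t) ^ (δ - 1)) t := by
      intro t ht
      rw [min_eq_left zero_le_one, max_eq_right zero_le_one] at ht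
      have h1 : HasDerivAt (fun t : ℝ => (1 - t)) (-1) t := by
        simpa using (hasDerivAt_id t).const_sub 1
      have h2 : HasDerivAt (fun y : ℝ => y ^ δ) (δ * (1 - t) ^ (δ - 1)) (1 - t) :=
        Real.hasDerivAt_rpow_const (Or.inl (by nlinarith [ht.2] : (1:ℝ) - t ≠ 0))
      have h3 := h2.comp t h1
      have h4 := (h3.div_const δ).neg
      refine h4.congr_deriv ?_
      rw [neg_eq_iff_eq_neg, div_eq_iff hδ.ne']
      ring
    have hibp := intervalIntegral.integral_mul_deriv_eq_deriv_mul_of_hasDerivAt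
      hΦcont hvcont hΦderiv hvderiv (hfint 0 1) (oneSubInt δ hδ)
    rw [hibp]
    have hΦ0 : Φ 0 = 0 := intervalIntegral.integral_same
    rw [hΦ0]
    simp only [sub_self, Real.zero_rpow hδ.ne', zero_div, neg_zero, mul_zero, zero_mul,
      sub_zero, zero_sub, mul_neg, intervalIntegral.integral_neg, neg_neg]
  -- Step 6: identify constants
  have eq6 : C * ∫ t in (0:ℝ)..1, f t * ((1 - t) ^ δ / δ) = betaHat γ (δ + 1) μ := by
    rw [betaHat, ← intervalIntegral.integral_const_mul]
    apply intervalIntegral.integral_congr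
    intro t _
    simp only [betaDens, hfdef, hC]
    rw [show γ + (δ + 1) = γ + 1 + δ by ring, show δ + 1 - 1 = δ by ring,
      Real.Gamma_add_one hδ.ne', Real.Gamma_add_one hγ.ne']
    have hΓγ := (Real.Gamma_pos_of_pos hγ).ne'
    have hΓδ := (Real.Gamma_pos_of_pos hδ).ne'
    have hΓs := (Real.Gamma_pos_of_pos (by linarith : (0:ℝ) < γ + 1 + δ)).ne'
    field_simp
  rw [eq1, eq2, eq3, eq4, eq5, eq6]

/-- For all `γ, δ > 0`, all `x ≥ 0` and all real `λ`:
`∫_0^x γ m^{γ-1} β̂_{γ+1,δ}(λ m) dm = x^γ β̂_{γ,δ+1}(λ x)`. -/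
theorem statement9 (γ δ : ℝ) (hγ : 0 < γ) (hδ : 0 < δ) (x : ℝ) (hx : 0 ≤ x) (lam : ℝ) :
    ∫ m in (0:ℝ)..x, γ * m ^ (γ - 1) * betaHat (γ + 1) δ (lam * m)
      = x ^ γ * betaHat γ (δ + 1) (lam * x) := by
  rcases eq_or_lt_of_le hx with h0 | hx'
  · rw [← h0]
    simp [Real.zero_rpow hγ.ne']
  · have hxne : x ≠ 0 := hx'.ne'
    have hscale := intervalIntegral.integral_comp_mul_left
      (a := (0:ℝ)) (b := 1)
      (f := fun m => γ * m ^ (γ - 1) * betaHat (γ + 1) δ (lam * m)) hxne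
    rw [mul_zero, mul_one] at hscale
    have h1 : ∫ m in (0:ℝ)..x, γ * m ^ (γ - 1) * betaHat (γ + 1) δ (lam * m)
        = x * ∫ s in (0:ℝ)..1, γ * (x * s) ^ (γ - 1) * betaHat (γ + 1) δ (lam * (x * s)) := by
      rw [hscale, smul_eq_mul, ← mul_assoc, mul_inv_cancel₀ hxne, one_mul]
    rw [h1]
    have h2 : ∫ s in (0:ℝ)..1, γ * (x * s) ^ (γ - 1) * betaHat (γ + 1) δ (lam * (x * s))
        = x ^ (γ - 1) * ∫ s in (0:ℝ)..1, γ * s ^ (γ - 1) * betaHat (γ + 1) δ ((lam * x) * s) := by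
      rw [← intervalIntegral.integral_const_mul]
      apply intervalIntegral.integral_congr
      intro s hs
      rw [Set.uIcc_of_le (by norm_num)] at hs
      simp only
      rw [Real.mul_rpow hx hs.1, mul_assoc lam]
      ring
    rw [h2, key γ δ hγ hδ (lam * x), ← mul_assoc]
    congr 1
    have h3 := Real.rpow_add hx' 1 (γ - 1)
    rw [Real.rpow_one] at h3
    rw [show (1:ℝ) + (γ - 1) = γ by ring] at h3
    linarith
end

section
/- Then ∫_0^∞ A(t)^{−2} dt < ∞, and the function D(x) := A(x) ∫_x^∞ A(t)^{−2} dt satisfies: D″(x) = λ² ρ(x) D(x) for all x ≥ 0, D′(0) = −1, D is positive and nonincreasing on [0,∞), and D(x) → 0 as x → ∞. -/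
open MeasureTheory Filter Set

open Topology

noncomputable def gA (A : ℝ → ℝ) : ℝ → ℝ := fun t => ((A t) ^ 2)⁻¹
noncomputable def RA (A : ℝ → ℝ) : ℝ → ℝ := fun x => ∫ t in Set.Ici x, gA A t

lemma monoAux {s : Set ℝ} (hs : Convex ℝ s) {f f' : ℝ → ℝ}
    (hf : ∀ x ∈ s, HasDerivWithinAt f (f' x) s x) (h0 : ∀ x ∈ interior s, 0 ≤ f' x) :
    MonotoneOn f s := by
  have hd : ∀ x ∈ interior s, HasDerivAt f (f' x) x := fun x hx =>
    (hf x (interior_subset hx)).hasDerivAt (mem_interior_iff_mem_nhds.1 hx)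
  refine monotoneOn_of_deriv_nonneg hs (fun x hx => (hf x hx).continuousWithinAt)
    (fun x hx => (hd x hx).differentiableAt.differentiableWithinAt) (fun x hx => ?_)
  rw [(hd x hx).deriv]; exact h0 x hx

lemma ftcAux {f : ℝ → ℝ} (hf : ContinuousOn f (Ici 0)) {x : ℝ} (hx : 0 ≤ x) :
    HasDerivWithinAt (fun y => ∫ t in (0:ℝ)..y, f t) (f x) (Ici 0) x := by
  have hint : IntervalIntegrable f volume 0 x := by
    apply ContinuousOn.intervalIntegrable
    rw [uIcc_of_le hx]
    exact hf.mono (Icc_subset_Ici_self)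
  rcases eq_or_lt_of_le hx with rfl | hx'
  · have hmeas : StronglyMeasurableAtFilter f (𝓝[Ioi (0:ℝ)] 0) volume := by
      obtain ⟨s, hs, hmeas⟩ := hf.stronglyMeasurableAtFilter_nhdsWithin measurableSet_Ici 0
      exact ⟨s, nhdsWithin_mono 0 Ioi_subset_Ici_self hs, hmeas⟩
    exact intervalIntegral.integral_hasDerivWithinAt_right hint hmeas
      ((hf 0 self_mem_Ici).mono Ioi_subset_Ici_self)
  · have hmeas : StronglyMeasurableAtFilter f (𝓝 x) volume :=
      ⟨Ici 0, Ici_mem_nhds hx', hf.aestronglyMeasurable measurableSet_Ici⟩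
    exact (intervalIntegral.integral_hasDerivAt_right hint hmeas
      (hf.continuousAt (Ici_mem_nhds hx'))).hasDerivWithinAt

/-- Let `λ > 0` and `ρ : [0,∞) → (0,∞)` be continuous with `∫_0^∞ ρ = ∞`, and let `A` solve
`A'' = λ² ρ A` on `[0,∞)` with `A(0) = 1`, `A'(0) = 0` (the A-solution of Krein's string
equation for the string `m(x) = ∫_0^x ρ`).  Then `∫_0^∞ A(t)⁻² dt < ∞`, and
`D(x) := A(x) ∫_x^∞ A(t)⁻² dt` satisfies `D'' = λ² ρ D` on `[0,∞)`, `D'(0) = -1`,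
`D` is positive and nonincreasing on `[0,∞)`, and `D(x) → 0` as `x → ∞`. -/
theorem statement10 (lam : ℝ) (hlam : 0 < lam) (ρ A A' : ℝ → ℝ)
    (hρcont : ContinuousOn ρ (Set.Ici 0))
    (hρpos : ∀ x ∈ Set.Ici (0:ℝ), 0 < ρ x)
    (hρdiv : ∫⁻ t in Set.Ici (0:ℝ), ENNReal.ofReal (ρ t) = ⊤)
    (hA : ∀ x ∈ Set.Ici (0:ℝ), HasDerivWithinAt A (A' x) (Set.Ici 0) x)
    (hA' : ∀ x ∈ Set.Ici (0:ℝ),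
      HasDerivWithinAt A' (lam ^ 2 * ρ x * A x) (Set.Ici 0) x)
    (hA0 : A 0 = 1) (hA'0 : A' 0 = 0)
    (D : ℝ → ℝ) (hD : D = fun x => A x * ∫ t in Set.Ici x, ((A t) ^ 2)⁻¹) :
    IntegrableOn (fun t => ((A t) ^ 2)⁻¹) (Set.Ici 0) volume ∧
    ∃ D' : ℝ → ℝ,
      (∀ x ∈ Set.Ici (0:ℝ), HasDerivWithinAt D (D' x) (Set.Ici 0) x) ∧
      (∀ x ∈ Set.Ici (0:ℝ),
        HasDerivWithinAt D' (lam ^ 2 * ρ x * D x) (Set.Ici 0) x) ∧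
      D' 0 = -1 ∧
      (∀ x ∈ Set.Ici (0:ℝ), 0 < D x) ∧
      AntitoneOn D (Set.Ici 0) ∧
      Tendsto D atTop (nhds 0) := by
  have hAc : ContinuousOn A (Ici 0) := fun x hx => (hA x hx).continuousWithinAt
  have hA'c : ContinuousOn A' (Ici 0) := fun x hx => (hA' x hx).continuousWithinAt
  -- A is positive on [0,∞)
  have hApos : ∀ x ∈ Ici (0:ℝ), 0 < A x := by
    by_contra hcon
    push_neg at hcon
    obtain ⟨z, hz0, hzA⟩ := hcon
    set S : Set ℝ := Ici 0 ∩ A ⁻¹' Iic 0 with hS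
    have hSne : S.Nonempty := ⟨z, hz0, hzA⟩
    have hSbdd : BddBelow S := ⟨0, fun t ht => ht.1⟩
    have hScl : IsClosed S := hAc.preimage_isClosed_of_isClosed isClosed_Ici isClosed_Iic
    set x0 := sInf S with hx0
    have hx0S : x0 ∈ S := hScl.csInf_mem hSne hSbdd
    have hx0pos : 0 < x0 := by
      rcases lt_or_eq_of_le (mem_Ici.1 hx0S.1) with h | h
      · exact h
      · exfalso; have h2 := hx0S.2
        simp only [mem_preimage, mem_Iic, ← h, hA0] at h2
        linarith
    have hlt : ∀ t, 0 ≤ t → t < x0 → 0 < A t := by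
      intro t ht htx
      by_contra h
      push_neg at h
      exact absurd (csInf_le hSbdd (⟨ht, h⟩ : t ∈ S)) (not_le.2 htx)
    have hsub : Icc (0:ℝ) x0 ⊆ Ici 0 := Icc_subset_Ici_self
    -- A' is monotone on [0, x0]
    have hA'mono : MonotoneOn A' (Icc 0 x0) := by
      apply monoAux (convex_Icc _ _) (fun x hx => (hA' x (hsub hx)).mono hsub)
      intro x hx
      rw [interior_Icc] at hx
      have hAx := hlt x hx.1.le hx.2
      have hρx := hρpos x hx.1.le
      positivity
    have hA'nn : ∀ t ∈ Icc (0:ℝ) x0, 0 ≤ A' t := by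
      intro t ht
      have := hA'mono (left_mem_Icc.2 hx0pos.le) ht ht.1
      rwa [hA'0] at this
    have hAmono : MonotoneOn A (Icc 0 x0) := by
      apply monoAux (convex_Icc _ _) (fun x hx => (hA x (hsub hx)).mono hsub)
      intro x hx
      rw [interior_Icc] at hx
      exact hA'nn x ⟨hx.1.le, hx.2.le⟩
    have : (1:ℝ) ≤ A x0 := by
      have := hAmono (left_mem_Icc.2 hx0pos.le) (right_mem_Icc.2 hx0pos.le) hx0pos.le
      rwa [hA0] at this
    have := hx0S.2
    simp only [mem_preimage, mem_Iic] at this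
    linarith
  -- Monotonicity structure on [0, ∞)
  have hA'mono : MonotoneOn A' (Ici 0) := by
    apply monoAux (convex_Ici _) hA'
    intro x hx
    rw [interior_Ici] at hx
    have := hApos x (mem_Ici.2 (le_of_lt hx))
    have := hρpos x (mem_Ici.2 (le_of_lt hx))
    positivity
  have hA'nn : ∀ x ∈ Ici (0:ℝ), 0 ≤ A' x := by
    intro x hx
    have := hA'mono self_mem_Ici hx hx
    rwa [hA'0] at this
  have hAmono : MonotoneOn A (Ici 0) := by
    apply monoAux (convex_Ici _) hA
    intro x hx
    exact hA'nn x (interior_subset hx)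
  have hAge1 : ∀ x ∈ Ici (0:ℝ), 1 ≤ A x := by
    intro x hx
    have := hAmono self_mem_Ici hx hx
    rwa [hA0] at this
  -- cumulative mass
  set m : ℝ → ℝ := fun x => ∫ t in (0:ℝ)..x, ρ t with hm
  have hmderiv : ∀ x ∈ Ici (0:ℝ), HasDerivWithinAt m (ρ x) (Ici 0) x :=
    fun x hx => ftcAux hρcont hx
  have hA'ge : ∀ x ∈ Ici (0:ℝ), lam ^ 2 * m x ≤ A' x := by
    have hmono : MonotoneOn (fun x => A' x - lam ^ 2 * m x) (Ici 0) := by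
      apply monoAux (convex_Ici _) (f' := fun x => lam ^ 2 * ρ x * A x - lam ^ 2 * ρ x)
      · intro x hx
        exact (hA' x hx).sub ((hmderiv x hx).const_mul _)
      · intro x hx
        rw [interior_Ici] at hx
        have h1 := hAge1 x (mem_Ici.2 (le_of_lt hx))
        have h2 := hρpos x (mem_Ici.2 (le_of_lt hx))
        nlinarith [mul_nonneg (mul_nonneg (sq_nonneg lam) h2.le) (sub_nonneg.2 h1)]
    intro x hx
    have h : A' 0 - lam ^ 2 * m 0 ≤ A' x - lam ^ 2 * m x := hmono self_mem_Ici hx hx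
    have hm0 : m 0 = 0 := intervalIntegral.integral_same
    rw [hA'0, hm0] at h
    simp only [mul_zero, sub_zero, zero_sub] at h
    linarith
  have hmmono : MonotoneOn m (Ici 0) := monoAux (convex_Ici _) hmderiv
      (fun x hx => (hρpos x (interior_subset hx)).le)
  -- m diverges
  have hmunb : ∀ M : ℝ, ∃ n : ℕ, M ≤ m n := by
    by_contra hcon
    push_neg at hcon
    obtain ⟨M, hM⟩ := hcon
    set F : ℕ → ℝ → ENNReal := fun n => (Ioc (0:ℝ) (n:ℝ)).indicator (fun t => ENNReal.ofReal (ρ t)) with hF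
    have hFmeas : ∀ n, AEMeasurable (F n) volume := by
      intro n
      rw [hF]
      rw [aemeasurable_indicator_iff measurableSet_Ioc]
      exact ENNReal.measurable_ofReal.comp_aemeasurable
        ((hρcont.mono (fun t ht => ht.1.le)).aemeasurable measurableSet_Ioc)
    have hFmono : ∀ x, Monotone (fun n => F n x) := by
      intro x n1 n2 hn
      exact Set.indicator_le_indicator_of_subset
        (Ioc_subset_Ioc_right (by exact_mod_cast hn)) (fun a => zero_le) x
    have hFsup : ∀ x, (⨆ n, F n x) = (Ioi (0:ℝ)).indicator (fun t => ENNReal.ofReal (ρ t)) x := by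
      intro x
      rcases le_or_gt x 0 with h | h
      · have h1 : ∀ n : ℕ, F n x = 0 := fun n =>
          Set.indicator_of_notMem (fun hmem => absurd hmem.1 (not_lt.2 h)) _
        simp [h1, Set.indicator_of_notMem (fun hmem : x ∈ Ioi (0:ℝ) => absurd hmem (not_lt.2 h))]
      · rw [Set.indicator_of_mem (mem_Ioi.2 h)]
        apply le_antisymm
        · exact iSup_le fun n => Set.indicator_apply_le (fun _ => le_rfl)
        · have hx : x ∈ Ioc (0:ℝ) (⌈x⌉₊ : ℝ) := ⟨h, Nat.le_ceil x⟩
          rw [← Set.indicator_of_mem hx (fun t => ENNReal.ofReal (ρ t))]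
          exact le_iSup (fun n => F n x) ⌈x⌉₊
    have hkey : (⊤ : ENNReal) = ⨆ n : ℕ, ∫⁻ t in Ioc (0:ℝ) (n:ℝ), ENNReal.ofReal (ρ t) := by
      calc (⊤ : ENNReal) = ∫⁻ t in Ici (0:ℝ), ENNReal.ofReal (ρ t) := hρdiv.symm
        _ = ∫⁻ t in Ioi (0:ℝ), ENNReal.ofReal (ρ t) := by
            rw [← setLIntegral_congr (Ioi_ae_eq_Ici (μ := volume) (a := (0:ℝ)))]
        _ = ∫⁻ t, (Ioi (0:ℝ)).indicator (fun t => ENNReal.ofReal (ρ t)) t := by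
            rw [lintegral_indicator measurableSet_Ioi]
        _ = ∫⁻ t, ⨆ n, F n t := by simp_rw [hFsup]
        _ = ⨆ n, ∫⁻ t, F n t := lintegral_iSup' hFmeas (ae_of_all _ hFmono)
        _ = ⨆ n : ℕ, ∫⁻ t in Ioc (0:ℝ) (n:ℝ), ENNReal.ofReal (ρ t) := by
            simp_rw [hF, lintegral_indicator measurableSet_Ioc]
    have hbnd : ∀ n : ℕ, ∫⁻ t in Ioc (0:ℝ) (n:ℝ), ENNReal.ofReal (ρ t) ≤ ENNReal.ofReal M := by
      intro n
      have hint : IntegrableOn ρ (Ioc 0 (n:ℝ)) volume :=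
        ((hρcont.mono (fun t (ht : t ∈ Icc (0:ℝ) (n:ℝ)) => ht.1)).integrableOn_Icc).mono_set
          Ioc_subset_Icc_self
      have hnn : 0 ≤ᵐ[volume.restrict (Ioc (0:ℝ) (n:ℝ))] ρ :=
        (ae_restrict_iff' measurableSet_Ioc).2 (ae_of_all _ fun t ht => (hρpos t ht.1.le).le)
      rw [← ofReal_integral_eq_lintegral_ofReal hint hnn]
      apply ENNReal.ofReal_le_ofReal
      have : m (n:ℝ) = ∫ t in Ioc (0:ℝ) (n:ℝ), ρ t := by
        rw [hm]; exact intervalIntegral.integral_of_le (Nat.cast_nonneg n)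
      rw [← this]
      exact (hM n).le
    have : (⊤ : ENNReal) ≤ ENNReal.ofReal M := hkey.le.trans (iSup_le hbnd)
    exact absurd this (by simp)
  have hmtop : Tendsto m atTop atTop := by
    rw [tendsto_atTop_atTop]
    intro M
    obtain ⟨n, hn⟩ := hmunb M
    refine ⟨(n : ℝ), fun x hx => hn.trans ?_⟩
    exact hmmono (mem_Ici.2 (Nat.cast_nonneg n)) (mem_Ici.2 ((Nat.cast_nonneg n).trans hx)) hx
  have hA'top : Tendsto A' atTop atTop := by
    apply tendsto_atTop_mono' atTop ?_ (hmtop.const_mul_atTop (by positivity : (0:ℝ) < lam ^ 2))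
    filter_upwards [eventually_ge_atTop (0:ℝ)] with x hx
    exact hA'ge x hx
  -- the function g = 1/A²
  have hgc : ContinuousOn (gA A) (Ici 0) :=
    (hAc.pow 2).inv₀ (fun t ht => pow_ne_zero 2 (hApos t ht).ne')
  have hgnn : ∀ t, 0 ≤ gA A t := fun t => inv_nonneg.2 (sq_nonneg _)
  have hgpos : ∀ t ∈ Ici (0:ℝ), 0 < gA A t := fun t ht => inv_pos.2 (pow_pos (hApos t ht) 2)
  -- FTC for A'/A²
  have hAA : ∀ x y : ℝ, 0 ≤ x → x ≤ y →
      ∫ t in x..y, A' t * gA A t = (A x)⁻¹ - (A y)⁻¹ := by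
    intro x y hx hxy
    have hsub : Icc x y ⊆ Ici 0 := fun t ht => le_trans hx ht.1
    have hcont : ContinuousOn (fun t => -(A t)⁻¹) (Icc x y) :=
      ((hAc.mono hsub).inv₀ fun t ht => (hApos t (hsub ht)).ne').neg
    have hderiv : ∀ t ∈ Ioo x y,
        HasDerivWithinAt (fun t => -(A t)⁻¹) (A' t * gA A t) (Ioi t) t := by
      intro t ht
      have ht0 : 0 < t := lt_of_le_of_lt hx ht.1
      have hAt : HasDerivAt A (A' t) t := (hA t ht0.le).hasDerivAt (Ici_mem_nhds ht0)
      have h := (hAt.inv (hApos t ht0.le).ne').neg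
      have hval : -(-A' t / A t ^ 2) = A' t * gA A t := by
        rw [gA]; field_simp
      rw [hval] at h
      exact h.hasDerivWithinAt
    have hint : IntervalIntegrable (fun t => A' t * gA A t) volume x y := by
      apply ContinuousOn.intervalIntegrable
      rw [uIcc_of_le hxy]
      exact (hA'c.mono hsub).mul (hgc.mono hsub)
    rw [intervalIntegral.integral_eq_sub_of_hasDeriv_right_of_le hxy hcont hderiv hint]
    ring
  -- integrability of A'/A² on tails
  have hIntgA' : ∀ x : ℝ, 0 ≤ x → IntegrableOn (fun t => A' t * gA A t) (Ioi x) volume := by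
    intro x hx
    apply integrableOn_Ioi_of_intervalIntegral_norm_bounded (ι := ℕ) (l := atTop)
      (A x)⁻¹ x (b := fun n : ℕ => x + n) ?_ ?_ ?_
    · intro n
      have hsub : Icc x (x + n) ⊆ Ici 0 := fun t ht => le_trans hx ht.1
      exact (((hA'c.mono hsub).mul (hgc.mono hsub)).integrableOn_Icc).mono_set
        Ioc_subset_Icc_self
    · exact tendsto_atTop_add_const_left _ x tendsto_natCast_atTop_atTop
    · apply Eventually.of_forall
      intro n
      have hxn : x ≤ x + n := le_add_of_nonneg_right (Nat.cast_nonneg n)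
      have hnorm : ∫ t in x..(x + n), ‖A' t * gA A t‖ = ∫ t in x..(x + n), A' t * gA A t := by
        apply intervalIntegral.integral_congr
        intro t ht
        rw [uIcc_of_le hxn] at ht
        exact Real.norm_of_nonneg (mul_nonneg (hA'nn t (le_trans hx ht.1)) (hgnn t))
      rw [hnorm, hAA x (x + n) hx hxn]
      linarith [inv_nonneg.2 (hApos (x + n) (le_trans hx hxn)).le]
  -- A'(1) > 0
  have hm1pos : 0 < m 1 := by
    rw [hm]
    apply intervalIntegral.intervalIntegral_pos_of_pos_on
    · apply ContinuousOn.intervalIntegrable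
      rw [uIcc_of_le zero_le_one]
      exact hρcont.mono (fun t ht => ht.1)
    · exact fun t ht => hρpos t ht.1.le
    · exact one_pos
  have hc1 : 0 < A' 1 :=
    lt_of_lt_of_le (by positivity) (hA'ge 1 (by norm_num))
  -- integrability of g on [0,∞)
  have gIntIci : IntegrableOn (gA A) (Ici 0) volume := by
    have h1 : IntegrableOn (gA A) (Icc 0 1) volume :=
      (hgc.mono Icc_subset_Ici_self).integrableOn_Icc
    have h2 : IntegrableOn (gA A) (Ioi 1) volume := by
      apply integrableOn_Ioi_of_intervalIntegral_norm_bounded (ι := ℕ) (l := atTop)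
        ((A' 1)⁻¹ * (A 1)⁻¹) 1 (b := fun n : ℕ => 1 + n) ?_ ?_ ?_
      · intro n
        have hsub : Icc (1:ℝ) (1 + n) ⊆ Ici 0 := fun t ht => le_trans zero_le_one ht.1
        exact ((hgc.mono hsub).integrableOn_Icc).mono_set Ioc_subset_Icc_self
      · exact tendsto_atTop_add_const_left _ 1 tendsto_natCast_atTop_atTop
      · apply Eventually.of_forall
        intro n
        have hxn : (1:ℝ) ≤ 1 + n := le_add_of_nonneg_right (Nat.cast_nonneg n)
        have hsub : Icc (1:ℝ) (1 + n) ⊆ Ici 0 := fun t ht => le_trans zero_le_one ht.1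
        have hnorm : ∫ t in (1:ℝ)..(1 + n), ‖gA A t‖ = ∫ t in (1:ℝ)..(1 + n), gA A t := by
          apply intervalIntegral.integral_congr
          intro t ht
          exact Real.norm_of_nonneg (hgnn t)
        rw [hnorm]
        have hmono : ∫ t in (1:ℝ)..(1 + n), gA A t
            ≤ ∫ t in (1:ℝ)..(1 + n), (A' 1)⁻¹ * (A' t * gA A t) := by
          apply intervalIntegral.integral_mono_on hxn
          · exact ContinuousOn.intervalIntegrable (by rw [uIcc_of_le hxn]; exact hgc.mono hsub)
          · exact ContinuousOn.intervalIntegrable (by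
              rw [uIcc_of_le hxn]
              exact (((hA'c.mono hsub).mul (hgc.mono hsub)).const_smul ((A' 1)⁻¹ : ℝ)))
          · intro t ht
            have ht0 : (0:ℝ) ≤ t := le_trans zero_le_one ht.1
            have hmon := hA'mono (mem_Ici.2 zero_le_one) (mem_Ici.2 ht0) ht.1
            calc gA A t = (A' 1)⁻¹ * (A' 1 * gA A t) := by
                  field_simp
              _ ≤ (A' 1)⁻¹ * (A' t * gA A t) := by
                  apply mul_le_mul_of_nonneg_left _ (inv_nonneg.2 hc1.le)
                  exact mul_le_mul_of_nonneg_right hmon (hgnn t)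
        rw [intervalIntegral.integral_const_mul] at hmono
        rw [hAA 1 (1 + n) zero_le_one hxn] at hmono
        have hAn : 0 ≤ (A (1 + n))⁻¹ := inv_nonneg.2 (hApos (1 + n) (le_trans zero_le_one hxn)).le
        have : (A' 1)⁻¹ * ((A 1)⁻¹ - (A (1 + n))⁻¹) ≤ (A' 1)⁻¹ * (A 1)⁻¹ := by
          have h2 : (A 1)⁻¹ - (A (1 + n))⁻¹ ≤ (A 1)⁻¹ := by linarith
          exact mul_le_mul_of_nonneg_left h2 (inv_nonneg.2 hc1.le)
        linarith
    have hunion : Ici (0:ℝ) = Icc 0 1 ∪ Ioi 1 := (Icc_union_Ioi_eq_Ici zero_le_one).symm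
    rw [hunion]
    exact h1.union h2
  have hIntg : ∀ x : ℝ, 0 ≤ x → IntegrableOn (gA A) (Ici x) volume :=
    fun x hx => gIntIci.mono_set (Ici_subset_Ici.2 hx)
  -- D in terms of RA
  have hDx : ∀ x, D x = A x * RA A x := by
    intro x; rw [hD]; rfl
  -- positivity of R
  have hRpos : ∀ x ∈ Ici (0:ℝ), 0 < RA A x := by
    intro x hx
    have hnn : 0 ≤ᵐ[volume.restrict (Ici x)] gA A :=
      (ae_restrict_iff' measurableSet_Ici).2 (ae_of_all _ fun t _ => hgnn t)
    rw [RA, setIntegral_pos_iff_support_of_nonneg_ae hnn (hIntg x hx)]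
    have hsub : Ici x ⊆ Function.support (gA A) ∩ Ici x :=
      fun t ht => ⟨(hgpos t (mem_Ici.2 (le_trans (mem_Ici.1 hx) (mem_Ici.1 ht)))).ne', ht⟩
    refine lt_of_lt_of_le ?_ (measure_mono hsub)
    rw [Real.volume_Ici]
    exact ENNReal.zero_lt_top
  -- representation of R, and its derivative
  have hRrepr : ∀ x ∈ Ici (0:ℝ), RA A x = RA A 0 - ∫ t in (0:ℝ)..x, gA A t := by
    intro x hx
    have hdisj : Disjoint (Ico (0:ℝ) x) (Ici x) := by
      rw [Set.disjoint_left]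
      intro t ht1 ht2
      exact absurd ht2 (not_le.2 ht1.2)
    have hs := setIntegral_union (f := gA A) (μ := volume) hdisj measurableSet_Ici
      (gIntIci.mono_set (fun t ht => ht.1)) (hIntg x hx)
    rw [Ico_union_Ici_eq_Ici hx] at hs
    have hio : ∫ t in (0:ℝ)..x, gA A t = ∫ t in Ico (0:ℝ) x, gA A t := by
      rw [intervalIntegral.integral_of_le hx, integral_Ioc_eq_integral_Ioo,
        integral_Ico_eq_integral_Ioo]
    rw [hio]
    show (∫ t in Ici x, gA A t) = (∫ t in Ici (0:ℝ), gA A t) - ∫ t in Ico (0:ℝ) x, gA A t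
    linarith [hs]
  have hR' : ∀ x ∈ Ici (0:ℝ), HasDerivWithinAt (RA A) (-(gA A x)) (Ici 0) x := by
    intro x hx
    have h1 : HasDerivWithinAt (fun y => RA A 0 - ∫ t in (0:ℝ)..y, gA A t)
        (0 - gA A x) (Ici 0) x :=
      (hasDerivWithinAt_const x (Ici 0) (RA A 0)).sub (ftcAux hgc hx)
    rw [zero_sub] at h1
    exact h1.congr (fun y hy => hRrepr y hy) (hRrepr x hx)
  -- key inequality A' x * R x ≤ (A x)⁻¹
  have hRle : ∀ x ∈ Ici (0:ℝ), A' x * RA A x ≤ (A x)⁻¹ := by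
    intro x hx
    have hRoi : RA A x = ∫ t in Ioi x, gA A t := by
      rw [RA]; exact integral_Ici_eq_integral_Ioi
    have h1 : A' x * RA A x = ∫ t in Ioi x, A' x * gA A t := by
      rw [hRoi, MeasureTheory.integral_const_mul]
    have h2 : ∫ t in Ioi x, A' x * gA A t ≤ ∫ t in Ioi x, A' t * gA A t := by
      apply setIntegral_mono_on
      · exact (Integrable.const_mul ((hIntg x hx).mono_set Ioi_subset_Ici_self) (A' x))
      · exact hIntgA' x hx
      · exact measurableSet_Ioi
      · intro t ht
        have ht0 : t ∈ Ici (0:ℝ) := mem_Ici.2 (le_trans (mem_Ici.1 hx) (le_of_lt ht))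
        exact mul_le_mul_of_nonneg_right (hA'mono hx ht0 (le_of_lt ht)) (hgnn t)
    have h3 : ∫ t in Ioi x, A' t * gA A t ≤ (A x)⁻¹ := by
      apply le_of_tendsto (intervalIntegral_tendsto_integral_Ioi x (hIntgA' x hx)
        (tendsto_atTop_add_const_left _ x tendsto_natCast_atTop_atTop))
      apply Eventually.of_forall
      intro n
      have hxn : x ≤ x + n := le_add_of_nonneg_right (Nat.cast_nonneg n)
      rw [hAA x (x + n) hx hxn]
      linarith [inv_nonneg.2 (hApos (x + n) (le_trans hx hxn)).le]
    linarith
  -- derivative of D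
  have hDderiv : ∀ x ∈ Ici (0:ℝ),
      HasDerivWithinAt D (A' x * RA A x - (A x)⁻¹) (Ici 0) x := by
    intro x hx
    have h := (hA x hx).mul (hR' x hx)
    have hval : A' x * RA A x + A x * -(gA A x) = A' x * RA A x - (A x)⁻¹ := by
      rw [gA]
      have h0 := (hApos x hx).ne'
      field_simp
      ring
    rw [hval] at h
    exact h.congr (fun y _ => hDx y) (hDx x)
  -- derivative of D'
  have hD'deriv : ∀ x ∈ Ici (0:ℝ),
      HasDerivWithinAt (fun x => A' x * RA A x - (A x)⁻¹)
        (lam ^ 2 * ρ x * D x) (Ici 0) x := by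
    intro x hx
    have h1 := (hA' x hx).mul (hR' x hx)
    have h2 := (hA x hx).inv (hApos x hx).ne'
    have h := h1.sub h2
    have hval : lam ^ 2 * ρ x * A x * RA A x + A' x * -(gA A x) - -A' x / A x ^ 2
        = lam ^ 2 * ρ x * D x := by
      rw [hDx x, gA]
      have h0 := (hApos x hx).ne'
      field_simp
      ring
    rw [hval] at h
    exact h
  refine ⟨gIntIci, fun x => A' x * RA A x - (A x)⁻¹, hDderiv, hD'deriv, ?_, ?_, ?_, ?_⟩
  · -- D' 0 = -1
    show A' 0 * RA A 0 - (A 0)⁻¹ = -1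
    rw [hA'0, hA0]
    norm_num
  · -- positivity of D
    intro x hx
    rw [hDx x]
    exact mul_pos (hApos x hx) (hRpos x hx)
  · -- antitone
    have hmono : MonotoneOn (fun y => -D y) (Ici 0) := by
      apply monoAux (convex_Ici _) (f' := fun x => -(A' x * RA A x - (A x)⁻¹))
        (fun x hx => (hDderiv x hx).neg)
      intro x hx
      have := hRle x (interior_subset hx)
      linarith
    intro a ha b hb hab
    have h5 : -D a ≤ -D b := hmono ha hb hab
    linarith
  · -- tendsto 0
    apply tendsto_of_tendsto_of_tendsto_of_le_of_le' tendsto_const_nhds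
      hA'top.inv_tendsto_atTop
    · filter_upwards [eventually_ge_atTop (0:ℝ)] with x hx
      rw [hDx x]
      exact (mul_pos (hApos x hx) (hRpos x hx)).le
    · filter_upwards [eventually_ge_atTop (1:ℝ)] with x hx
      have hx0 : (0:ℝ) ≤ x := le_trans zero_le_one hx
      have hA'x : 0 < A' x := lt_of_lt_of_le hc1 (hA'mono (mem_Ici.2 zero_le_one) (mem_Ici.2 hx0) hx)
      have h := hRle x hx0
      have h2 : A x * (A' x * RA A x) ≤ A x * (A x)⁻¹ :=
        mul_le_mul_of_nonneg_left h (hApos x hx0).le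
      rw [mul_inv_cancel₀ (hApos x hx0).ne'] at h2
      have h3 : D x * A' x ≤ 1 := by
        rw [hDx x]
        nlinarith [h2]
      have h4 : D x ≤ 1 / A' x := (le_div_iff₀ hA'x).2 h3
      rw [one_div] at h4
      exact h4
end
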